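/- arXiv:1103.3584 — 2 statements merged into one kernel-verified Lean document; each statement's English description precedes it below -/
import Mathlib

section
/- For k ≥ 3, the automorphism group of FHS(2k,k) equals the automorphism group of HS(2k,k); in particular |Aut(FHS(2k,k))| = 2·(2k-1)!. -/
abbrev hsVert (n k : ℕ) : Type := {v : Finset ℕ // v ⊆ Finset.Icc 1 n ∧ v.card = k}

/-- The hyper-star graph `HS(n,k)` on the `k`-subsets of `X = {1,...,n}`:
`v, w` are adjacent iff `|v ∩ w| = k-1` and exactly one of `v, w` contains `1`. -/
def HS (n k : ℕ) : SimpleGraph (hsVert n k) :=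
  SimpleGraph.fromRel (fun v w =>
    (v.1 ∩ w.1).card = k - 1 ∧ 1 ∈ v.1 ∧ 1 ∉ w.1)

/-- The folded hyper-star graph `FHS(2k,k)`: edges of `HS(2k,k)` together with
the complement pairs `{v, X \\ v}`. -/
def FHS (k : ℕ) : SimpleGraph (hsVert (2*k) k) :=
  SimpleGraph.fromRel (fun v w =>
    ((v.1 ∩ w.1).card = k - 1 ∧ 1 ∈ v.1 ∧ 1 ∉ w.1) ∨ w.1 = Finset.Icc 1 (2*k) \ v.1)

/-- The automorphism group of a graph, as a subgroup of the permutations of the vertices. -/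
def graphAut {V : Type*} (Γ : SimpleGraph V) : Subgroup (Equiv.Perm V) where
  carrier := {e | ∀ a b, Γ.Adj (e a) (e b) ↔ Γ.Adj a b}
  one_mem' := by intro a b; simp
  mul_mem' := by
    intro e f he hf a b
    simp only [Equiv.Perm.mul_apply]
    rw [he, hf]
  inv_mem' := by
    intro e he a b
    have h := he (e⁻¹ a) (e⁻¹ b)
    simpa using h.symm

namespace S17
open Finset

abbrev XX (k : ℕ) : Finset ℕ := Finset.Icc 1 (2*k)
abbrev YY (k : ℕ) : Finset ℕ := Finset.Icc 2 (2*k)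
abbrev V (k : ℕ) := hsVert (2*k) k

variable {k : ℕ}

lemma XX_card : (XX k).card = 2*k := by simp [Nat.card_Icc]
lemma YY_card : (YY k).card = 2*k - 1 := by simp [Nat.card_Icc]
lemma one_not_mem_YY : 1 ∉ YY k := by simp [Finset.mem_Icc]
lemma YY_sub_XX : YY k ⊆ XX k := by
  intro x hx; simp only [Finset.mem_Icc] at *; omega
lemma XX_erase_one : (XX k).erase 1 = YY k := by
  ext x; simp only [Finset.mem_erase, Finset.mem_Icc]; omega

lemma vsub_YY {v : V k} (h1 : 1 ∉ v.1) : v.1 ⊆ YY k := by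
  intro x hx
  have := v.2.1 hx
  simp only [Finset.mem_Icc] at *
  rcases Nat.lt_or_ge x 2 with h | h
  · interval_cases x <;> simp_all
  · omega

lemma erase_card {v : V k} (h1 : 1  ∈ v.1) : (v.1.erase 1).card = k - 1 := by
  rw [Finset.card_erase_of_mem h1, v.2.2]

lemma erase_sub_YY {v : V k} : v.1.erase 1 ⊆ YY k := by
  rw [← XX_erase_one]; exact Finset.erase_subset_erase _ v.2.1

lemma vne {v w : V k} (h : v.1 ≠ w.1) : v ≠ w := fun he => h (by rw [he])

/-- Adjacency in `HS`. -/
lemma hs_adj {v w : V k} :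
    (HS (2*k) k).Adj v w ↔
      (1 ∈ v.1 ∧ 1 ∉ w.1 ∧ v.1.erase 1 ⊆ w.1) ∨
      (1 ∈ w.1 ∧ 1 ∉ v.1 ∧ w.1.erase 1 ⊆ v.1) := by
  have key : ∀ a b : V k, 1 ∈ a.1 → 1 ∉ b.1 →
      ((a.1 ∩ b.1).card = k - 1 ↔ a.1.erase 1 ⊆ b.1) := by
    intro a b ha hb
    constructor
    · intro hc
      have hsub : a.1 ∩ b.1 ⊆ a.1.erase 1 := by
        intro x hx
        rcases Finset.mem_inter.1 hx with ⟨h1, h2⟩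
        exact Finset.mem_erase.2 ⟨fun he => hb (he ▸ h2), h1⟩
      have : a.1 ∩ b.1 = a.1.erase 1 :=
        Finset.eq_of_subset_of_card_le hsub (by rw [hc, erase_card ha])
      rw [← this]; exact Finset.inter_subset_right
    · intro hsub
      have h2 : a.1 ∩ b.1 = a.1.erase 1 := by
        apply Finset.Subset.antisymm
        · intro x hx
          rcases Finset.mem_inter.1 hx with ⟨h1, h2⟩
          exact Finset.mem_erase.2 ⟨fun he => hb (he ▸ h2), h1⟩
        · exact Finset.subset_inter (Finset.erase_subset _ _) hsub
      rw [h2, erase_card ha]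
  rw [HS, SimpleGraph.fromRel_adj]
  constructor
  · rintro ⟨hne, h | h⟩
    · exact Or.inl ⟨h.2.1, h.2.2, (key v w h.2.1 h.2.2).1 h.1⟩
    · exact Or.inr ⟨h.2.1, h.2.2, (key w v h.2.1 h.2.2).1 h.1⟩
  · rintro (⟨h1, h2, h3⟩ | ⟨h1, h2, h3⟩)
    · exact ⟨vne (fun he => h2 (he ▸ h1)), Or.inl ⟨(key v w h1 h2).2 h3, h1, h2⟩⟩
    · refine ⟨fun he => h2 (by rw [he]; exact h1), Or.inr ⟨(key w v h1 h2).2 h3, h1, h2⟩⟩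

end S17


-- chunk 2 (appended to a.lean content for testing)
namespace S17
open Finset
variable {k : ℕ}

def cV (v : V k) : V k :=
  ⟨XX k \ v.1, Finset.sdiff_subset, by
    rw [Finset.card_sdiff_of_subset v.2.1, XX_card, v.2.2]; omega⟩

lemma cV_val (v : V k) : (cV v).1 = XX k \ v.1 := rfl

lemma cV_cV (v : V k) : cV (cV v) = v := by
  apply Subtype.ext
  rw [cV_val, cV_val]
  exact Finset.sdiff_sdiff_eq_self v.2.1

def cE : Equiv.Perm (V k) := Function.Involutive.toPerm cV cV_cV

lemma cE_apply (v : V k) : (cE v) = cV v := rfl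

lemma cV_ne (hk : 3 ≤ k) (v : V k) : cV v ≠ v := by
  intro h
  have hne : v.1.Nonempty := Finset.card_pos.1 (by rw [v.2.2]; omega)
  obtain ⟨x, hx⟩ := hne
  have := (congrArg Subtype.val h) ▸ hx
  exact (Finset.mem_sdiff.1 ((congrArg Subtype.val h).symm ▸ hx : x ∈ (cV v).1)).2 hx

lemma one_mem_or (hk : 3 ≤ k) (v : V k) : 1 ∈ (cV v).1 ↔ 1 ∉ v.1 := by
  rw [cV_val, Finset.mem_sdiff]
  have : 1 ∈ XX k := by simp [Finset.mem_Icc]; omega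
  tauto

/-- Adjacency in `FHS`. -/
lemma fhs_adj (hk : 3 ≤ k) {v w : V k} :
    (FHS k).Adj v w ↔
      (HS (2*k) k).Adj v w ∨ w.1 = XX k \ v.1 ∨ v.1 = XX k \ w.1 := by
  rw [FHS, SimpleGraph.fromRel_adj, HS, SimpleGraph.fromRel_adj]
  constructor
  · rintro ⟨hne, (h | h) | (h | h)⟩
    · exact Or.inl ⟨hne, Or.inl h⟩
    · exact Or.inr (Or.inl h)
    · exact Or.inl ⟨hne, Or.inr h⟩
    · exact Or.inr (Or.inr h)
  · rintro (⟨hne, h⟩ | h | h)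
    · exact ⟨hne, by tauto⟩
    · refine ⟨fun he => ?_, Or.inl (Or.inr h)⟩
      have h2 : w = cV v := Subtype.ext h
      exact cV_ne hk v (by rw [← h2, ← he])
    · refine ⟨fun he => ?_, Or.inr (Or.inr h)⟩
      have h2 : v = cV w := Subtype.ext h
      exact cV_ne hk w (by rw [← h2, he])

end S17


namespace S17
open Finset
variable {k : ℕ}

lemma fold_comm {v w : V k} : v.1 = XX k \ w.1 ↔ w.1 = XX k \ v.1 := by
  constructor
  · intro h
    have : v = cV w := Subtype.ext h
    rw [this, ← cV_val, cV_cV]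
  · intro h
    have : w = cV v := Subtype.ext h
    rw [this, ← cV_val, cV_cV]

lemma fhs_adj2 (hk : 3 ≤ k) {v w : V k} :
    (FHS k).Adj v w ↔ (HS (2*k) k).Adj v w ∨ w = cV v := by
  rw [fhs_adj hk]
  constructor
  · rintro (h | h | h)
    · exact Or.inl h
    · exact Or.inr (Subtype.ext h)
    · exact Or.inr (Subtype.ext (fold_comm.1 h))
  · rintro (h | h)
    · exact Or.inl h
    · exact Or.inr (Or.inl (congrArg Subtype.val h))

/-- The parameter group: permutations of `ℕ` supported on `{2,...,2k}`. -/
def PP (k : ℕ) := {σ : Equiv.Perm ℕ // ∀ x, x ∉ YY k → σ x = x}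

lemma pp_one (σ : PP k) : σ.1 1 = 1 := σ.2 1 one_not_mem_YY

lemma pp_mem (σ : PP k) {y : ℕ} (hy : y ∈ YY k) : σ.1 y ∈ YY k := by
  by_contra h
  have h2 := σ.2 _ h
  have := σ.1.injective h2
  rw [this] at h; exact h hy

lemma pp_inv (σ : PP k) : ∀ x, x ∉ YY k → σ.1⁻¹ x = x := by
  intro x hx
  have := σ.2 x hx
  conv_lhs => rw [← this]
  exact σ.1.symm_apply_apply x

def actV (σ : PP k) (v : V k) : V k :=
  ⟨v.1.image σ.1, by
    intro x hx
    obtain ⟨a, ha, rfl⟩ := Finset.mem_image.1 hx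
    have haX := v.2.1 ha
    rcases eq_or_ne a 1 with rfl | hne
    · rw [pp_one]; exact haX
    · have : a ∈ YY k := by
        simp only [Finset.mem_Icc] at haX ⊢; omega
      exact YY_sub_XX (pp_mem σ this),
   by rw [Finset.card_image_of_injective _ σ.1.injective, v.2.2]⟩

lemma actV_val (σ : PP k) (v : V k) : (actV σ v).1 = v.1.image σ.1 := rfl

def ppInv (σ : PP k) : PP k := ⟨σ.1⁻¹, pp_inv σ⟩

lemma actV_cancel (σ : PP k) (v : V k) : actV (ppInv σ) (actV σ v) = v := by
  apply Subtype.ext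
  rw [actV_val, actV_val, Finset.image_image]
  have : (⇑σ.1⁻¹ ∘ ⇑σ.1) = id := by
    funext x; exact σ.1.symm_apply_apply x
  rw [ppInv]; simp only [this, Finset.image_id]

lemma actV_cancel' (σ : PP k) (v : V k) : actV σ (actV (ppInv σ) v) = v := by
  apply Subtype.ext
  rw [actV_val, actV_val, Finset.image_image]
  have : (⇑σ.1 ∘ ⇑σ.1⁻¹) = id := by
    funext x; exact σ.1.apply_symm_apply x
  rw [ppInv]; simp only [this, Finset.image_id]

def actE (σ : PP k) : Equiv.Perm (V k) :=
  ⟨actV σ, actV (ppInv σ), actV_cancel σ, actV_cancel' σ⟩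

lemma actE_apply (σ : PP k) (v : V k) : actE σ v = actV σ v := rfl

lemma one_mem_actV (σ : PP k) (v : V k) : 1 ∈ (actV σ v).1 ↔ 1 ∈ v.1 := by
  rw [actV_val]
  constructor
  · intro h
    obtain ⟨a, ha, h2⟩ := Finset.mem_image.1 h
    have : a = 1 := σ.1.injective (by rw [h2, pp_one])
    rwa [this] at ha
  · intro h
    exact Finset.mem_image.2 ⟨1, h, pp_one σ⟩

lemma erase_actV (σ : PP k) (v : V k) :
    (actV σ v).1.erase 1 = (v.1.erase 1).image σ.1 := by
  rw [actV_val, Finset.image_erase σ.1.injective, pp_one σ]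

lemma actV_YY (σ : PP k) : (YY k).image σ.1 = YY k := by
  apply Finset.eq_of_subset_of_card_le
  · intro x hx
    obtain ⟨a, ha, rfl⟩ := Finset.mem_image.1 hx
    exact pp_mem σ ha
  · rw [Finset.card_image_of_injective _ σ.1.injective]

lemma actV_XX (hk : 3 ≤ k) (σ : PP k) : (XX k).image σ.1 = XX k := by
  have hins : XX k = insert 1 (YY k) := by
    ext x; simp only [Finset.mem_insert, Finset.mem_Icc]; omega
  rw [hins, Finset.image_insert, pp_one σ, actV_YY]

lemma actE_mem_hs (σ : PP k) : actE σ ∈ graphAut (HS (2*k) k) := by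
  intro a b
  have h1 : ∀ v : V k, (1 ∈ (actV σ v).1) ↔ 1 ∈ v.1 := one_mem_actV σ
  have h2 : ∀ v w : V k, ((actV σ v).1.erase 1 ⊆ (actV σ w).1) ↔ v.1.erase 1 ⊆ w.1 := by
    intro v w
    rw [erase_actV, actV_val, Finset.image_subset_image_iff σ.1.injective]
  simp only [actE_apply, hs_adj, h1, h2]

lemma actE_mem_fhs (hk : 3 ≤ k) (σ : PP k) : actE σ ∈ graphAut (FHS k) := by
  intro a b
  rw [fhs_adj2 hk, fhs_adj2 hk]
  have hfold : actE σ b = cV (actE σ a) ↔ b = cV a := by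
    constructor
    · intro h
      have h2 : (actV σ b).1 = XX k \ (actV σ a).1 := congrArg Subtype.val h
      rw [actV_val, actV_val, ← actV_XX hk σ,
        ← Finset.image_sdiff _ _ σ.1.injective] at h2
      exact Subtype.ext (Finset.image_injective σ.1.injective h2)
    · intro h
      apply Subtype.ext
      rw [actE_apply, actE_apply, cV_val, actV_val, actV_val, ← actV_XX hk σ,
        ← Finset.image_sdiff _ _ σ.1.injective, h, cV_val]
  rw [actE_mem_hs σ a b, hfold]

lemma hs_c_one {v w : V k} (hk : 3 ≤ k) (h1 : 1 ∈ v.1) (h2 : 1 ∉ w.1) :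
    v.1.erase 1 ⊆ w.1 ↔ (cV w).1.erase 1 ⊆ (cV v).1 := by
  simp only [cV_val]
  constructor
  · intro h x hx
    rcases Finset.mem_erase.1 hx with ⟨hne, hx2⟩
    rcases Finset.mem_sdiff.1 hx2 with ⟨hX, hw⟩
    refine Finset.mem_sdiff.2 ⟨hX, fun hv => ?_⟩
    exact hw (h (Finset.mem_erase.2 ⟨hne, hv⟩))
  · intro h x hx
    rcases Finset.mem_erase.1 hx with ⟨hne, hv⟩
    by_contra hw
    have : x ∈ (XX k \ w.1).erase 1 :=
      Finset.mem_erase.2 ⟨hne, Finset.mem_sdiff.2 ⟨v.2.1 hv, hw⟩⟩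
    exact (Finset.mem_sdiff.1 (h this)).2 hv

lemma hsP_cV (hk : 3 ≤ k) {u w : V k}
    (h : 1 ∈ u.1 ∧ 1 ∉ w.1 ∧ u.1.erase 1 ⊆ w.1) :
    1 ∈ (cV w).1 ∧ 1 ∉ (cV u).1 ∧ (cV w).1.erase 1 ⊆ (cV u).1 := by
  obtain ⟨h1, h2, h3⟩ := h
  exact ⟨(one_mem_or hk w).2 h2, fun hc => (one_mem_or hk u).1 hc h1,
    (hs_c_one hk h1 h2).1 h3⟩

lemma cE_mem_hs (hk : 3 ≤ k) : cE ∈ graphAut (HS (2*k) (k:ℕ)) := by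
  have fwd : ∀ a b : V k, (HS (2*k) k).Adj a b → (HS (2*k) k).Adj (cV a) (cV b) := by
    intro a b hab
    rw [hs_adj] at hab ⊢
    rcases hab with h | h
    · exact Or.inr (hsP_cV hk h)
    · exact Or.inl (hsP_cV hk h)
  intro a b
  constructor
  · intro h
    have := fwd _ _ h
    rwa [cE_apply, cE_apply, cV_cV, cV_cV] at this
  · exact fwd a b

lemma cE_mem_fhs (hk : 3 ≤ k) : cE ∈ graphAut (FHS k) := by
  intro a b
  rw [fhs_adj2 hk, fhs_adj2 hk, cE_mem_hs hk a b]
  have : cE b = cV (cE a) ↔ b = cV a := by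
    simp only [cE_apply]
    constructor
    · intro h
      have h2 := congrArg cV h
      rwa [cV_cV, cV_cV] at h2
    · intro h; rw [h]
  rw [this]
end S17


namespace S17
open Finset
variable {k : ℕ}

lemma hs_flip {v w : V k} (h : (HS (2*k) k).Adj v w) : (1 ∈ v.1 ↔ 1 ∉ w.1) := by
  rw [hs_adj] at h; tauto

lemma fhs_flip (hk : 3 ≤ k) {v w : V k} (h : (FHS k).Adj v w) : (1 ∈ v.1 ↔ 1 ∉ w.1) := by
  rw [fhs_adj2 hk] at h
  rcases h with h | h
  · exact hs_flip h
  · rw [h, one_mem_or hk]; tauto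

lemma walk_parity {G : SimpleGraph (V k)}
    (hG : ∀ {a b : V k}, G.Adj a b → (1 ∈ a.1 ↔ 1 ∉ b.1)) :
    ∀ {u v : V k} (p : G.Walk u v), ((1 ∈ u.1 ↔ 1 ∈ v.1) ↔ Even p.length) := by
  intro u v p
  induction p with
  | nil => simp
  | cons h q ih =>
    have hf := hG h
    rw [SimpleGraph.Walk.length_cons, Nat.even_add_one, ← ih]
    tauto

def mkA (hk : 3 ≤ k) (S : Finset ℕ) (hS : S ⊆ YY k) (hc : S.card = k - 1) : V k :=
  ⟨insert 1 S, by
    intro x hx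
    rcases Finset.mem_insert.1 hx with rfl | hx2
    · simp only [Finset.mem_Icc]; omega
    · exact YY_sub_XX (hS hx2), by
    rw [Finset.card_insert_of_notMem (fun hc2 => one_not_mem_YY (hS hc2)), hc]; omega⟩

def mkB (S : Finset ℕ) (hS : S ⊆ YY k) (hc : S.card = k) : V k :=
  ⟨S, hS.trans YY_sub_XX, hc⟩

lemma mkA_adj_mkB (hk : 3 ≤ k) {S w : Finset ℕ} {hS hw hc hc'}
    (h : S ⊆ w) : (HS (2*k) k).Adj (mkA hk S hS hc) (mkB w hw hc') := by
  rw [hs_adj]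
  refine Or.inl ⟨Finset.mem_insert_self 1 S, fun hc2 => one_not_mem_YY (hw hc2), ?_⟩
  rw [mkA]
  simp only
  rw [Finset.erase_insert (fun hc2 => one_not_mem_YY (hS hc2))]
  exact h

lemma reachA (hk : 3 ≤ k) : ∀ (n : ℕ) (S S' : Finset ℕ) (hS : S ⊆ YY k) (hS' : S' ⊆ YY k)
    (hc : S.card = k-1) (hc' : S'.card = k-1), (S' \ S).card = n →
    (HS (2*k) k).Reachable (mkA hk S hS hc) (mkA hk S' hS' hc') := by
  intro n
  induction n with
  | zero =>
    intro S S' hS hS' hc hc' hn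
    have hsub : S' ⊆ S := by
      rw [← Finset.sdiff_eq_empty_iff_subset]
      exact Finset.card_eq_zero.1 hn
    have : S' = S := Finset.eq_of_subset_of_card_le hsub (by omega)
    subst this
    exact SimpleGraph.Reachable.refl _
  | succ n ih =>
    intro S S' hS hS' hc hc' hn
    obtain ⟨b, hb⟩ : (S' \ S).Nonempty := Finset.card_pos.1 (by omega)
    rcases Finset.mem_sdiff.1 hb with ⟨hbS', hbS⟩
    have hcomm : (S \ S').card = n + 1 := by
      rw [Finset.card_sdiff_comm (by omega)]; exact hn
    obtain ⟨a, ha⟩ : (S \ S').Nonempty := Finset.card_pos.1 (by omega)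
    rcases Finset.mem_sdiff.1 ha with ⟨haS, haS'⟩
    set S₂ := insert b (S.erase a) with hS₂def
    have hS₂Y : S₂ ⊆ YY k := by
      intro x hx
      rcases Finset.mem_insert.1 hx with rfl | hx2
      · exact hS' hbS'
      · exact hS (Finset.erase_subset _ _ hx2)
    have hbea : b ∉ S.erase a := fun hc2 => hbS (Finset.erase_subset _ _ hc2)
    have hc₂ : S₂.card = k - 1 := by
      rw [hS₂def, Finset.card_insert_of_notMem hbea, Finset.card_erase_of_mem haS, hc]
      omega
    have hdec : (S' \ S₂).card = n := by
      have : S' \ S₂ = (S' \ S).erase b := by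
        ext x
        simp only [Finset.mem_sdiff, Finset.mem_erase, hS₂def, Finset.mem_insert, not_or]
        constructor
        · rintro ⟨hx1, hxb, hx2⟩
          exact ⟨hxb, hx1, fun hxS => hx2 ⟨fun he => haS' (he ▸ hx1), hxS⟩⟩
        · rintro ⟨hxb, hx1, hx2⟩
          exact ⟨hx1, hxb, fun hc2 => hx2 hc2.2⟩
      rw [this, Finset.card_erase_of_mem (Finset.mem_sdiff.2 ⟨hbS', hbS⟩), hn]
      omega
    -- the intermediate k-set w = insert b S
    have hbS2 : b ∉ S := hbS
    have hwY : insert b S ⊆ YY k := by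
      intro x hx
      rcases Finset.mem_insert.1 hx with rfl | hx2
      · exact hS' hbS'
      · exact hS hx2
    have hwc : (insert b S).card = k := by
      rw [Finset.card_insert_of_notMem hbS2, hc]; omega
    have step1 : (HS (2*k) k).Adj (mkA hk S hS hc) (mkB (insert b S) hwY hwc) :=
      mkA_adj_mkB hk (Finset.subset_insert _ _)
    have step2 : (HS (2*k) k).Adj (mkA hk S₂ hS₂Y hc₂) (mkB (insert b S) hwY hwc) :=
      mkA_adj_mkB hk (by
        rw [hS₂def]
        exact Finset.insert_subset_insert _ (Finset.erase_subset _ _))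
    exact (step1.reachable.trans step2.reachable.symm).trans
      (ih S₂ S' hS₂Y hS' hc₂ hc' hdec)

lemma toA (hk : 3 ≤ k) (v : V k) : ∃ (S : Finset ℕ) (hS : S ⊆ YY k) (hc : S.card = k - 1),
    (HS (2*k) k).Reachable v (mkA hk S hS hc) := by
  by_cases h1 : 1 ∈ v.1
  · refine ⟨v.1.erase 1, erase_sub_YY, erase_card h1, ?_⟩
    have : v = mkA hk (v.1.erase 1) erase_sub_YY (erase_card h1) := by
      apply Subtype.ext
      rw [mkA]
      simp only
      rw [Finset.insert_erase h1]
    rw [← this]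
  · obtain ⟨a, ha⟩ : v.1.Nonempty := Finset.card_pos.1 (by rw [v.2.2]; omega)
    have hvY : v.1 ⊆ YY k := vsub_YY h1
    refine ⟨v.1.erase a, (Finset.erase_subset _ _).trans hvY, by
      rw [Finset.card_erase_of_mem ha, v.2.2], ?_⟩
    exact ((mkA_adj_mkB hk (S := v.1.erase a) (w := v.1) (hw := hvY) (hc' := v.2.2)
      (Finset.erase_subset _ _)).reachable).symm

lemma hs_conn (hk : 3 ≤ k) (u v : V k) : (HS (2*k) k).Reachable u v := by
  obtain ⟨S, hS, hc, hr⟩ := toA hk u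
  obtain ⟨S', hS', hc', hr'⟩ := toA hk v
  exact (hr.trans (reachA hk _ S S' hS hS' hc hc' rfl)).trans hr'.symm

lemma fhs_conn (hk : 3 ≤ k) (u v : V k) : (FHS k).Reachable u v := by
  have hle : (HS (2*k) k) ≤ FHS k := by
    intro a b hab
    rw [fhs_adj2 hk]; exact Or.inl hab
  exact SimpleGraph.Reachable.mono hle (hs_conn hk u v)

/-- Any automorphism of a connected graph whose edges all flip membership of `1`
either preserves or swaps the two classes. -/
lemma class_dichotomy (hk : 3 ≤ k) {G : SimpleGraph (V k)}
    (hflip : ∀ {a b : V k}, G.Adj a b → (1 ∈ a.1 ↔ 1 ∉ b.1))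
    (hconn : ∀ u v : V k, G.Reachable u v)
    {f : Equiv.Perm (V k)} (hf : f ∈ graphAut G) :
    (∀ v : V k, 1 ∈ (f v).1 ↔ 1 ∈ v.1) ∨ (∀ v : V k, 1 ∈ (f v).1 ↔ 1 ∉ v.1) := by
  have key : ∀ u v : V k, ((1 ∈ u.1 ↔ 1 ∈ v.1) ↔ (1 ∈ (f u).1 ↔ 1 ∈ (f v).1)) := by
    intro u v
    obtain ⟨p⟩ := hconn u v
    have h1 := walk_parity hflip p
    let φ : G ≃g G := ⟨f, hf _ _⟩
    have h2 := walk_parity hflip (p.map φ.toHom)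
    rw [SimpleGraph.Walk.length_map] at h2
    rw [h1, ← h2]
    rfl
  have hS₀ : Finset.Icc 2 k ⊆ YY k := by
    intro x hx; simp only [Finset.mem_Icc] at *; omega
  have hc₀ : (Finset.Icc 2 k).card = k - 1 := by simp [Nat.card_Icc]
  set u₀ := mkA hk (Finset.Icc 2 k) hS₀ hc₀ with hu₀
  have h1u : 1 ∈ u₀.1 := Finset.mem_insert_self _ _
  by_cases hfu : 1 ∈ (f u₀).1
  · left
    intro v
    have := key u₀ v
    tauto
  · right
    intro v
    have := key u₀ v
    tauto

end S17


namespace S17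
open Finset
variable {k : ℕ}

attribute [local instance] Classical.propDecidable

def okS (k : ℕ) (S : Finset ℕ) : Prop := S ⊆ YY k ∧ S.card = k - 1
def okW (k : ℕ) (w : Finset ℕ) : Prop := w ⊆ YY k ∧ w.card = k

/-- Context for the rigidity argument: a class-preserving automorphism of `HS`. -/
structure Ctx (k : ℕ) where
  hk : 3 ≤ k
  f : Equiv.Perm (V k)
  hf : f ∈ graphAut (HS (2*k) k)
  hcl : ∀ v : V k, 1 ∈ (f v).1 ↔ 1 ∈ v.1

variable (c : Ctx k)

noncomputable def Ctx.gg (S : Finset ℕ) : Finset ℕ :=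
  if h : okS k S then ((c.f (mkA c.hk S h.1 h.2)).1).erase 1 else ∅

noncomputable def Ctx.hh (w : Finset ℕ) : Finset ℕ :=
  if h : okW k w then (c.f (mkB w h.1 h.2)).1 else ∅

lemma Ctx.gg_def {S : Finset ℕ} (h : okS k S) :
    c.gg S = ((c.f (mkA c.hk S h.1 h.2)).1).erase 1 := dif_pos h

lemma Ctx.hh_def {w : Finset ℕ} (h : okW k w) :
    c.hh w = (c.f (mkB w h.1 h.2)).1 := dif_pos h

lemma Ctx.one_mem_fA {S : Finset ℕ} (h : okS k S) :
    1 ∈ (c.f (mkA c.hk S h.1 h.2)).1 :=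
  (c.hcl _).2 (Finset.mem_insert_self 1 S)

lemma Ctx.fA_val {S : Finset ℕ} (h : okS k S) :
    (c.f (mkA c.hk S h.1 h.2)).1 = insert 1 (c.gg S) := by
  rw [c.gg_def h, Finset.insert_erase (c.one_mem_fA h)]

lemma Ctx.gg_ok {S : Finset ℕ} (h : okS k S) : okS k (c.gg S) := by
  rw [c.gg_def h]
  exact ⟨erase_sub_YY, erase_card (c.one_mem_fA h)⟩

lemma Ctx.one_not_mem_fB {w : Finset ℕ} (h : okW k w) :
    1 ∉ (c.f (mkB w h.1 h.2)).1 := by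
  rw [c.hcl]
  exact fun hc => one_not_mem_YY (h.1 hc)

lemma Ctx.hh_ok {w : Finset ℕ} (h : okW k w) : okW k (c.hh w) := by
  rw [c.hh_def h]
  exact ⟨vsub_YY (c.one_not_mem_fB h), (c.f _).2.2⟩

lemma Ctx.sub_iff {S w : Finset ℕ} (hS : okS k S) (hw : okW k w) :
    c.gg S ⊆ c.hh w ↔ S ⊆ w := by
  have h := c.hf (mkA c.hk S hS.1 hS.2) (mkB w hw.1 hw.2)
  rw [hs_adj, hs_adj] at h
  have h1A := c.one_mem_fA hS
  have h1B := c.one_not_mem_fB hw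
  have e1 : (c.f (mkA c.hk S hS.1 hS.2)).1.erase 1 = c.gg S := (c.gg_def hS).symm
  have e2 : (c.f (mkB w hw.1 hw.2)).1 = c.hh w := (c.hh_def hw).symm
  have e3 : ((mkA c.hk S hS.1 hS.2).1).erase 1 = S :=
    Finset.erase_insert (fun hc => one_not_mem_YY (hS.1 hc))
  constructor
  · intro hsub
    have : (1 ∈ (c.f (mkA c.hk S hS.1 hS.2)).1 ∧ 1 ∉ (c.f (mkB w hw.1 hw.2)).1 ∧
        (c.f (mkA c.hk S hS.1 hS.2)).1.erase 1 ⊆ (c.f (mkB w hw.1 hw.2)).1) := by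
      exact ⟨h1A, h1B, by rw [e1, e2]; exact hsub⟩
    have h2 := h.1 (Or.inl this)
    rcases h2 with ⟨_, _, h3⟩ | ⟨hmem, _, _⟩
    · rwa [e3] at h3
    · exact absurd hmem (fun hc => one_not_mem_YY (hw.1 hc))
  · intro hsub
    have hadj : (1 ∈ (mkA c.hk S hS.1 hS.2).1 ∧ 1 ∉ (mkB w hw.1 hw.2).1 ∧
        ((mkA c.hk S hS.1 hS.2).1).erase 1 ⊆ (mkB w hw.1 hw.2).1) := by
      rw [e3]
      exact ⟨Finset.mem_insert_self 1 S, fun hc => one_not_mem_YY (hw.1 hc), hsub⟩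
    have h2 := h.2 (Or.inl hadj)
    rcases h2 with ⟨_, _, h3⟩ | ⟨hmem, _, _⟩
    · rwa [e1, e2] at h3
    · exact absurd hmem h1B
end S17


namespace S17
open Finset
variable {k : ℕ} (c : Ctx k)

attribute [local instance] Classical.propDecidable

lemma Ctx.gg_inj {S S' : Finset ℕ} (hS : okS k S) (hS' : okS k S')
    (h : c.gg S = c.gg S') : S = S' := by
  have h2 : (c.f (mkA c.hk S hS.1 hS.2)).1 = (c.f (mkA c.hk S' hS'.1 hS'.2)).1 := by
    rw [c.fA_val hS, c.fA_val hS', h]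
  have h3 : mkA c.hk S hS.1 hS.2 = mkA c.hk S' hS'.1 hS'.2 :=
    c.f.injective (Subtype.ext h2)
  have h4 : insert 1 S = insert 1 S' := congrArg Subtype.val h3
  have e : ∀ (T : Finset ℕ), T ⊆ YY k → (insert 1 T).erase 1 = T := fun T hT =>
    Finset.erase_insert (fun hc => one_not_mem_YY (hT hc))
  rw [← e S hS.1, ← e S' hS'.1, h4]

lemma Ctx.hh_inj {w w' : Finset ℕ} (hw : okW k w) (hw' : okW k w')
    (h : c.hh w = c.hh w') : w = w' := by
  have h3 : mkB w hw.1 hw.2 = mkB w' hw'.1 hw'.2 := by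
    apply c.f.injective
    apply Subtype.ext
    rw [← c.hh_def hw, ← c.hh_def hw', h]
  exact congrArg Subtype.val h3

lemma Ctx.hh_surj {D : Finset ℕ} (hD : okW k D) : ∃ w, okW k w ∧ c.hh w = D := by
  set u := c.f.symm (mkB D hD.1 hD.2) with hu
  have h1 : 1 ∉ u.1 := by
    intro hc
    have := (c.hcl u).2 hc
    rw [hu, Equiv.apply_symm_apply] at this
    exact one_not_mem_YY (hD.1 this)
  have hok : okW k u.1 := ⟨vsub_YY h1, u.2.2⟩
  refine ⟨u.1, hok, ?_⟩
  rw [c.hh_def hok]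
  have h2 : mkB u.1 hok.1 hok.2 = u := Subtype.ext rfl
  rw [h2, hu, Equiv.apply_symm_apply]
  rfl

/-- Missing point lemma: distinct co-atoms of a finite set. -/
lemma missing_point {U U' D : Finset ℕ} (hU : U ⊆ D) (hU' : U' ⊆ D)
    (hcU : U.card + 1 = D.card) (hcU' : U'.card + 1 = D.card) (hne : U ≠ U') :
    U \ U' = D \ U' ∧ (D \ U').card = 1 := by
  have hc : (D \ U').card = 1 := by
    rw [Finset.card_sdiff_of_subset hU']; omega
  have hsub : U \ U' ⊆ D \ U' := Finset.sdiff_subset_sdiff hU (le_refl _)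
  have hne2 : (U \ U').Nonempty := by
    rw [Finset.sdiff_nonempty]
    intro hc2
    exact hne (Finset.eq_of_subset_of_card_le hc2 (by omega))
  have : 1 ≤ (U \ U').card := Finset.card_pos.2 hne2
  exact ⟨Finset.eq_of_subset_of_card_le hsub (by omega) |>.symm ▸
    (Finset.eq_of_subset_of_card_le hsub (by omega)).symm, hc⟩

/-- The element of a finset (used on singletons). -/
noncomputable def pel (s : Finset ℕ) : ℕ := if h : s.Nonempty then s.min' h else 0

lemma pel_mem {s : Finset ℕ} (h : s.Nonempty) : pel s ∈ s := by
  rw [pel, dif_pos h]; exact s.min'_mem h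

lemma pel_eq {s : Finset ℕ} (hc : s.card = 1) {x : ℕ} (hx : x ∈ s) : pel s = x := by
  obtain ⟨a, ha⟩ := Finset.card_eq_one.1 hc
  subst ha
  have h2 := pel_mem (⟨a, Finset.mem_singleton_self a⟩ : ({a} : Finset ℕ).Nonempty)
  rw [Finset.mem_singleton] at h2 hx
  rw [h2, hx]

lemma card_one_mem_eq {s : Finset ℕ} (hc : s.card = 1) {x y : ℕ}
    (hx : x ∈ s) (hy : y ∈ s) : x = y := by
  rw [← pel_eq hc hx, pel_eq hc hy]

noncomputable def Ctx.ppt (S : Finset ℕ) (y a : ℕ) : ℕ :=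
  pel (c.gg S \ c.gg (insert a (S.erase y)))

noncomputable def Ctx.qq (w : Finset ℕ) (y : ℕ) : ℕ :=
  pel (c.hh w \ c.gg (w.erase y))

lemma okS_T {S : Finset ℕ} (hS : okS k S) {y a : ℕ} (hy : y ∈ S)
    (ha : a ∈ YY k \ S) (hk : 3 ≤ k) : okS k (insert a (S.erase y)) := by
  rcases Finset.mem_sdiff.1 ha with ⟨haY, haS⟩
  constructor
  · intro x hx
    rcases Finset.mem_insert.1 hx with rfl | hx2
    · exact haY
    · exact hS.1 (Finset.erase_subset _ _ hx2)
  · rw [Finset.card_insert_of_notMem (fun hc => haS (Finset.erase_subset _ _ hc)),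
      Finset.card_erase_of_mem hy, hS.2]
    omega

lemma T_ne {S : Finset ℕ} {y a : ℕ} (hy : y ∈ S) (ha : a ∈ YY k \ S) :
    S ≠ insert a (S.erase y) := by
  intro h
  have : y ∈ insert a (S.erase y) := h ▸ hy
  rcases Finset.mem_insert.1 this with rfl | h2
  · exact (Finset.mem_sdiff.1 ha).2 hy
  · exact (Finset.mem_erase.1 h2).1 rfl

lemma union_T_ok {S : Finset ℕ} (hS : okS k S) {y a : ℕ} (hy : y ∈ S)
    (ha : a ∈ YY k \ S) (hk : 3 ≤ k) :
    okW k (insert a S) ∧ S ∪ insert a (S.erase y) ⊆ insert a S := by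
  rcases Finset.mem_sdiff.1 ha with ⟨haY, haS⟩
  refine ⟨⟨?_, ?_⟩, ?_⟩
  · intro x hx
    rcases Finset.mem_insert.1 hx with rfl | hx2
    · exact haY
    · exact hS.1 hx2
  · rw [Finset.card_insert_of_notMem haS, hS.2]; omega
  · intro x hx
    rcases Finset.mem_union.1 hx with hx2 | hx2
    · exact Finset.mem_insert_of_mem hx2
    · rcases Finset.mem_insert.1 hx2 with rfl | hx3
      · exact Finset.mem_insert_self _ _
      · exact Finset.mem_insert_of_mem (Finset.erase_subset _ _ hx3)

/-- In a common `hh`-superset, `gg S \ gg T` is a singleton. -/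
lemma Ctx.gg_sdiff_card {S T w : Finset ℕ} (hS : okS k S) (hT : okS k T)
    (hne : S ≠ T) (hw : okW k w) (hSw : S ⊆ w) (hTw : T ⊆ w) :
    c.gg S \ c.gg T = c.hh w \ c.gg T ∧ (c.gg S \ c.gg T).card = 1 := by
  have h1 : c.gg S ⊆ c.hh w := (c.sub_iff hS hw).2 hSw
  have h2 : c.gg T ⊆ c.hh w := (c.sub_iff hT hw).2 hTw
  have hgne : c.gg S ≠ c.gg T := fun h => hne (c.gg_inj hS hT h)
  have hcS : (c.gg S).card + 1 = (c.hh w).card := by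
    rw [(c.gg_ok hS).2, (c.hh_ok hw).2]; have := c.hk; omega
  have hcT : (c.gg T).card + 1 = (c.hh w).card := by
    rw [(c.gg_ok hT).2, (c.hh_ok hw).2]; have := c.hk; omega
  obtain ⟨he, hc⟩ := missing_point h1 h2 hcS hcT hgne
  exact ⟨he, by rw [he]; exact hc⟩
end S17


namespace S17
open Finset
variable {k : ℕ} (c : Ctx k)

attribute [local instance] Classical.propDecidable

lemma okW_insert {S : Finset ℕ} (hS : okS k S) {a : ℕ} (ha : a ∈ YY k \ S)
    (hk : 3 ≤ k) : okW k (insert a S) := by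
  rcases Finset.mem_sdiff.1 ha with ⟨haY, haS⟩
  constructor
  · intro x hx
    rcases Finset.mem_insert.1 hx with rfl | hx2
    · exact haY
    · exact hS.1 hx2
  · rw [Finset.card_insert_of_notMem haS, hS.2]; omega

/-- Independence of the replacement element (sunflower argument). -/
lemma Ctx.ppt_indep {S : Finset ℕ} (hS : okS k S) {y a b : ℕ} (hy : y ∈ S)
    (ha : a ∈ YY k \ S) (hb : b ∈ YY k \ S) : c.ppt S y a = c.ppt S y b := by
  rcases eq_or_ne a b with rfl | hab
  · rfl
  rcases Finset.mem_sdiff.1 ha with ⟨haY, haS⟩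
  rcases Finset.mem_sdiff.1 hb with ⟨hbY, hbS⟩
  set Ta := insert a (S.erase y) with hTa
  set Tb := insert b (S.erase y) with hTb
  have hTaok : okS k Ta := okS_T hS hy ha c.hk
  have hTbok : okS k Tb := okS_T hS hy hb c.hk
  have hSTa : S ≠ Ta := T_ne hy ha
  have hSTb : S ≠ Tb := T_ne hy hb
  have hTaTb : Ta ≠ Tb := by
    intro h
    have : a ∈ Tb := h ▸ Finset.mem_insert_self a _
    rcases Finset.mem_insert.1 this with rfl | h2
    · exact hab rfl
    · exact haS (Finset.erase_subset _ _ h2)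
  -- singleton cards
  obtain ⟨hwaok, hwasub⟩ := union_T_ok hS hy ha c.hk
  obtain ⟨hwbok, hwbsub⟩ := union_T_ok hS hy hb c.hk
  have hda := c.gg_sdiff_card hS hTaok hSTa hwaok
    (Finset.subset_insert _ _) (fun x hx => hwasub (Finset.mem_union_right _ hx))
  have hdb := c.gg_sdiff_card hS hTbok hSTb hwbok
    (Finset.subset_insert _ _) (fun x hx => hwbsub (Finset.mem_union_right _ hx))
  -- w' containing Ta and Tb
  have hyae : y ∉ S.erase y := Finset.notMem_erase _ _
  have hw' : okW k (insert b Ta) := by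
    apply okW_insert hTaok _ c.hk
    refine Finset.mem_sdiff.2 ⟨hbY, fun hc2 => ?_⟩
    rcases Finset.mem_insert.1 hc2 with rfl | h2
    · exact hab rfl
    · exact hbS (Finset.erase_subset _ _ h2)
  have hTaw' : Ta ⊆ insert b Ta := Finset.subset_insert _ _
  have hTbw' : Tb ⊆ insert b Ta := by
    rw [hTb, hTa]
    intro x hx
    rcases Finset.mem_insert.1 hx with rfl | h2
    · exact Finset.mem_insert_self _ _
    · exact Finset.mem_insert_of_mem (Finset.mem_insert_of_mem h2)
  have hdab := c.gg_sdiff_card hTaok hTbok hTaTb hw' hTaw' hTbw'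
  -- case split
  by_cases hcase : ∃ r, r ∈ c.gg S ∧ r ∉ c.gg Ta ∧ r ∉ c.gg Tb
  · obtain ⟨r, hr1, hr2, hr3⟩ := hcase
    rw [Ctx.ppt, Ctx.ppt, ← hTa, ← hTb]
    rw [pel_eq hda.2 (Finset.mem_sdiff.2 ⟨hr1, hr2⟩),
      pel_eq hdb.2 (Finset.mem_sdiff.2 ⟨hr1, hr3⟩)]
  · -- gg S ⊆ gg Ta ∪ gg Tb ; derive a contradiction
    exfalso
    push_neg at hcase
    have hsub : c.gg S ⊆ c.gg Ta ∪ c.gg Tb := by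
      intro x hx
      rcases Classical.em (x ∈ c.gg Ta) with h | h
      · exact Finset.mem_union_left _ h
      · exact Finset.mem_union_right _ (hcase x hx h)
    -- |gg Ta ∪ gg Tb| = k
    have hintc : (c.gg Ta ∩ c.gg Tb).card = k - 2 := by
      have h1 := Finset.card_inter_add_card_sdiff (c.gg Ta) (c.gg Tb)
      rw [hdab.2, (c.gg_ok hTaok).2] at h1
      omega
    have hunc : (c.gg Ta ∪ c.gg Tb).card = k := by
      have h1 := Finset.card_union_add_card_inter (c.gg Ta) (c.gg Tb)
      rw [hintc, (c.gg_ok hTaok).2, (c.gg_ok hTbok).2] at h1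
      have := c.hk
      omega
    have hunok : okW k (c.gg Ta ∪ c.gg Tb) := by
      refine ⟨?_, hunc⟩
      intro x hx
      rcases Finset.mem_union.1 hx with h | h
      · exact (c.gg_ok hTaok).1 h
      · exact (c.gg_ok hTbok).1 h
    obtain ⟨w₀, hw₀ok, hw₀⟩ := c.hh_surj hunok
    have hSw₀ : S ⊆ w₀ := (c.sub_iff hS hw₀ok).1 (by rw [hw₀]; exact hsub)
    have hTaw₀ : Ta ⊆ w₀ := (c.sub_iff hTaok hw₀ok).1
      (by rw [hw₀]; exact Finset.subset_union_left)
    have hTbw₀ : Tb ⊆ w₀ := (c.sub_iff hTbok hw₀ok).1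
      (by rw [hw₀]; exact Finset.subset_union_right)
    -- S ∪ {a,b} ⊆ w₀ has card k+1 > k
    have hbig : insert a (insert b S) ⊆ w₀ := by
      intro x hx
      rcases Finset.mem_insert.1 hx with rfl | hx2
      · exact hTaw₀ (Finset.mem_insert_self _ _)
      · rcases Finset.mem_insert.1 hx2 with rfl | hx3
        · exact hTbw₀ (Finset.mem_insert_self _ _)
        · exact hSw₀ hx3
    have hbigc : (insert a (insert b S)).card = k + 1 := by
      rw [Finset.card_insert_of_notMem (by
        intro hc2
        rcases Finset.mem_insert.1 hc2 with rfl | h2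
        · exact hab rfl
        · exact haS h2),
        Finset.card_insert_of_notMem hbS, hS.2]
      have := c.hk
      omega
    have := Finset.card_le_card hbig
    rw [hbigc, hw₀ok.2] at this
    omega

/-- Relating `qq` and `ppt`. -/
lemma Ctx.qq_ppt {w : Finset ℕ} (hw : okW k w) {y a : ℕ} (hy : y ∈ w)
    (ha : a ∈ w) (hay : a ≠ y) : c.qq w y = c.ppt (w.erase a) y a := by
  have hSok : okS k (w.erase a) := by
    refine ⟨(Finset.erase_subset _ _).trans hw.1, ?_⟩
    rw [Finset.card_erase_of_mem ha, hw.2]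
  have hyS : y ∈ w.erase a := Finset.mem_erase.2 ⟨fun h => hay h.symm, hy⟩
  have hT : insert a ((w.erase a).erase y) = w.erase y := by
    rw [Finset.erase_right_comm, Finset.insert_erase
      (Finset.mem_erase.2 ⟨hay, ha⟩)]
  have hTok : okS k (w.erase y) := by
    refine ⟨(Finset.erase_subset _ _).trans hw.1, ?_⟩
    rw [Finset.card_erase_of_mem hy, hw.2]
  have hne : w.erase a ≠ w.erase y := by
    intro h
    have : y ∈ w.erase y := h ▸ hyS
    exact (Finset.mem_erase.1 this).1 rfl
  have hd := c.gg_sdiff_card hSok hTok hne hw (Finset.erase_subset _ _)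
    (Finset.erase_subset _ _)
  rw [Ctx.ppt, hT, Ctx.qq, hd.1]

noncomputable def Ctx.pps (S : Finset ℕ) (y : ℕ) : ℕ :=
  c.ppt S y (pel (YY k \ S))

lemma YYS_nonempty {S : Finset ℕ} (hS : okS k S) (hk : 3 ≤ k) :
    (YY k \ S).Nonempty := by
  apply Finset.card_pos.1
  rw [Finset.card_sdiff_of_subset hS.1, YY_card, hS.2]
  omega

lemma Ctx.ppt_pps {S : Finset ℕ} (hS : okS k S) {y a : ℕ} (hy : y ∈ S)
    (ha : a ∈ YY k \ S) : c.ppt S y a = c.pps S y :=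
  c.ppt_indep hS hy ha (pel_mem (YYS_nonempty hS c.hk))

/-- Swap invariance. -/
lemma Ctx.pps_swap {S : Finset ℕ} (hS : okS k S) {y a b : ℕ} (hy : y ∈ S)
    (ha : a ∈ S) (hay : a ≠ y) (hb : b ∈ YY k \ S) :
    c.pps S y = c.pps (insert b (S.erase a)) y := by
  rcases Finset.mem_sdiff.1 hb with ⟨hbY, hbS⟩
  have hwok : okW k (insert b S) := okW_insert hS hb c.hk
  have hyw : y ∈ insert b S := Finset.mem_insert_of_mem hy
  have hbw : b ∈ insert b S := Finset.mem_insert_self _ _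
  have haw : a ∈ insert b S := Finset.mem_insert_of_mem ha
  have hby : b ≠ y := fun h => hbS (h ▸ hy)
  have hab : a ≠ b := fun h => hbS (h ▸ ha)
  have h1 : c.qq (insert b S) y = c.ppt S y b := by
    rw [c.qq_ppt hwok hyw hbw hby, Finset.erase_insert hbS]
  have h2 : c.qq (insert b S) y = c.ppt (insert b (S.erase a)) y a := by
    rw [c.qq_ppt hwok hyw haw hay, Finset.erase_insert_of_ne hab.symm]
  have hS'ok : okS k (insert b (S.erase a)) := okS_T hS ha hb c.hk
  have hyS' : y ∈ insert b (S.erase a) :=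
    Finset.mem_insert_of_mem (Finset.mem_erase.2 ⟨fun h => hay h.symm, hy⟩)
  have haS' : a ∈ YY k \ insert b (S.erase a) := by
    refine Finset.mem_sdiff.2 ⟨hS.1 ha, fun hc2 => ?_⟩
    rcases Finset.mem_insert.1 hc2 with rfl | h2
    · exact hab rfl
    · exact (Finset.mem_erase.1 h2).1 rfl
  rw [← c.ppt_pps hS hy hb, ← h1, h2, c.ppt_pps hS'ok hyS' haS']

lemma swap_sdiff {S S' : Finset ℕ} {a b : ℕ} (ha : a ∈ S) (ha' : a ∉ S')
    (hb : b ∈ S') (hb' : b ∉ S) :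
    S' \ (insert b (S.erase a)) = (S' \ S).erase b := by
  ext x
  simp only [Finset.mem_sdiff, Finset.mem_erase, Finset.mem_insert, not_or]
  constructor
  · rintro ⟨hx1, hxb, hx2⟩
    exact ⟨hxb, hx1, fun hxS => hx2 ⟨fun he => ha' (he ▸ hx1), hxS⟩⟩
  · rintro ⟨hxb, hx1, hx2⟩
    exact ⟨hx1, hxb, fun hc2 => hx2 hc2.2⟩

/-- Full invariance of `pps` in the first argument. -/
lemma Ctx.pps_indep : ∀ (n : ℕ) {S S' : Finset ℕ}, okS k S → okS k S' →
    ∀ {y : ℕ}, y ∈ S → y ∈ S' → (S' \ S).card = n → c.pps S y = c.pps S' y := by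
  intro n
  induction n with
  | zero =>
    intro S S' hS hS' y hy hy' hn
    have hsub : S' ⊆ S := by
      rw [← Finset.sdiff_eq_empty_iff_subset]
      exact Finset.card_eq_zero.1 hn
    rw [Finset.eq_of_subset_of_card_le hsub (by rw [hS.2, hS'.2])]
  | succ n ih =>
    intro S S' hS hS' y hy hy' hn
    obtain ⟨b, hb⟩ : (S' \ S).Nonempty := Finset.card_pos.1 (by omega)
    rcases Finset.mem_sdiff.1 hb with ⟨hbS', hbS⟩
    have hcomm : (S \ S').card = n + 1 := by
      rw [Finset.card_sdiff_comm (by rw [hS.2, hS'.2])]; exact hn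
    obtain ⟨a, ha⟩ : (S \ S').Nonempty := Finset.card_pos.1 (by omega)
    rcases Finset.mem_sdiff.1 ha with ⟨haS, haS'⟩
    have hay : a ≠ y := fun h => haS' (h ▸ hy')
    have hbY : b ∈ YY k \ S := Finset.mem_sdiff.2 ⟨hS'.1 hbS', hbS⟩
    have hstep := c.pps_swap hS hy haS hay hbY
    have hS''ok : okS k (insert b (S.erase a)) := okS_T hS haS hbY c.hk
    have hyS'' : y ∈ insert b (S.erase a) :=
      Finset.mem_insert_of_mem (Finset.mem_erase.2 ⟨fun h => hay h.symm, hy⟩)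
    have hd : (S' \ insert b (S.erase a)).card = n := by
      rw [swap_sdiff haS haS' hbS' hbS, Finset.card_erase_of_mem hb, hn]
      omega
    rw [hstep, ih hS''ok hS' hyS'' hy' hd]

end S17


namespace S17
open Finset
variable {k : ℕ} (c : Ctx k)

attribute [local instance] Classical.propDecidable

lemma exSY (hk : 3 ≤ k) {y : ℕ} (hy : y ∈ YY k) : ∃ S, okS k S ∧ y ∈ S := by
  obtain ⟨t, h1, h2, h3⟩ := Finset.exists_subsuperset_card_eq (n := k - 1)
    (Finset.singleton_subset_iff.2 hy) (by rw [Finset.card_singleton]; omega)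
    (by rw [YY_card]; omega)
  exact ⟨t, ⟨h2, h3⟩, h1 (Finset.mem_singleton_self y)⟩

lemma exWY (hk : 3 ≤ k) {s : Finset ℕ} (hs : s ⊆ YY k) (hc : s.card ≤ k) :
    ∃ w, okW k w ∧ s ⊆ w := by
  obtain ⟨t, h1, h2, h3⟩ := Finset.exists_subsuperset_card_eq hs hc
    (by rw [YY_card]; omega)
  exact ⟨t, ⟨h2, h3⟩, h1⟩

noncomputable def Ctx.sg (y : ℕ) : ℕ :=
  if h : y ∈ YY k then c.pps (Classical.choose (exSY c.hk h)) y else y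

lemma Ctx.sg_spec {S : Finset ℕ} (hS : okS k S) {y : ℕ} (hy : y ∈ S) :
    c.sg y = c.pps S y := by
  have hyY : y ∈ YY k := hS.1 hy
  rw [Ctx.sg, dif_pos hyY]
  obtain ⟨h1, h2⟩ := Classical.choose_spec (exSY c.hk hyY)
  exact c.pps_indep _ h1 hS h2 hy rfl

lemma Ctx.sg_id {y : ℕ} (hy : y ∉ YY k) : c.sg y = y := dif_neg hy

lemma erase_okS {w : Finset ℕ} (hw : okW k w) {a : ℕ} (ha : a ∈ w) :
    okS k (w.erase a) :=
  ⟨(Finset.erase_subset _ _).trans hw.1, by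
    rw [Finset.card_erase_of_mem ha, hw.2]⟩

lemma Ctx.sg_qq {w : Finset ℕ} (hw : okW k w) {y : ℕ} (hy : y ∈ w) :
    c.sg y = c.qq w y := by
  obtain ⟨a, haw⟩ : (w.erase y).Nonempty := by
    apply Finset.card_pos.1
    rw [Finset.card_erase_of_mem hy, hw.2]
    have := c.hk; omega
  rcases Finset.mem_erase.1 haw with ⟨hay, ha⟩
  have hSok : okS k (w.erase a) := erase_okS hw ha
  have hyS : y ∈ w.erase a := Finset.mem_erase.2 ⟨fun h => hay h.symm, hy⟩
  have haYS : a ∈ YY k \ w.erase a :=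
    Finset.mem_sdiff.2 ⟨hw.1 ha, Finset.notMem_erase _ _⟩
  rw [c.sg_spec hSok hyS, c.qq_ppt hw hy ha hay, c.ppt_pps hSok hyS haYS]

lemma Ctx.qq_card {w : Finset ℕ} (hw : okW k w) {y : ℕ} (hy : y ∈ w) :
    (c.hh w \ c.gg (w.erase y)).card = 1 := by
  have hsub : c.gg (w.erase y) ⊆ c.hh w :=
    (c.sub_iff (erase_okS hw hy) hw).2 (Finset.erase_subset _ _)
  rw [Finset.card_sdiff_of_subset hsub, (c.gg_ok (erase_okS hw hy)).2, (c.hh_ok hw).2]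
  have := c.hk; omega

lemma Ctx.qq_mem {w : Finset ℕ} (hw : okW k w) {y : ℕ} (hy : y ∈ w) :
    c.qq w y ∈ c.hh w ∧ c.qq w y ∉ c.gg (w.erase y) := by
  have := pel_mem (Finset.card_pos.1 (by rw [c.qq_card hw hy]; omega))
  exact Finset.mem_sdiff.1 this

lemma coatom_eq {U D : Finset ℕ} {x : ℕ} (hU : U ⊆ D) (hc : U.card + 1 = D.card)
    (hx : x ∈ D) (hxU : x ∉ U) : U = D.erase x := by
  apply Finset.eq_of_subset_of_card_le
  · intro z hz
    exact Finset.mem_erase.2 ⟨fun h => hxU (h ▸ hz), hU hz⟩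
  · rw [Finset.card_erase_of_mem hx]; omega

lemma Ctx.gg_coatom {w : Finset ℕ} (hw : okW k w) {y : ℕ} (hy : y ∈ w) :
    c.gg (w.erase y) = (c.hh w).erase (c.qq w y) := by
  obtain ⟨h1, h2⟩ := c.qq_mem hw hy
  exact coatom_eq ((c.sub_iff (erase_okS hw hy) hw).2 (Finset.erase_subset _ _))
    (by rw [(c.gg_ok (erase_okS hw hy)).2, (c.hh_ok hw).2]; have := c.hk; omega)
    h1 h2

lemma Ctx.sg_injOn {w : Finset ℕ} (hw : okW k w) {y y' : ℕ} (hy : y ∈ w)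
    (hy' : y' ∈ w) (h : c.sg y = c.sg y') : y = y' := by
  rw [c.sg_qq hw hy, c.sg_qq hw hy'] at h
  have he : c.gg (w.erase y) = c.gg (w.erase y') := by
    rw [c.gg_coatom hw hy, c.gg_coatom hw hy', h]
  have he2 := c.gg_inj (erase_okS hw hy) (erase_okS hw hy') he
  by_contra hne
  have h3 : y ∈ w.erase y' := Finset.mem_erase.2 ⟨hne, hy⟩
  rw [← he2] at h3
  exact (Finset.notMem_erase y w) h3

lemma Ctx.hh_image {w : Finset ℕ} (hw : okW k w) :
    c.hh w = w.image c.sg := by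
  have hsub : w.image c.sg ⊆ c.hh w := by
    intro x hx
    obtain ⟨y, hy, rfl⟩ := Finset.mem_image.1 hx
    rw [c.sg_qq hw hy]
    exact (c.qq_mem hw hy).1
  have hcard : (w.image c.sg).card = w.card :=
    Finset.card_image_of_injOn (fun y hy y' hy' h => c.sg_injOn hw hy hy' h)
  exact (Finset.eq_of_subset_of_card_le hsub (by rw [hcard, hw.2, (c.hh_ok hw).2])).symm

lemma Ctx.gg_image {S : Finset ℕ} (hS : okS k S) :
    c.gg S = S.image c.sg := by
  have hne := YYS_nonempty hS c.hk
  set a := pel (YY k \ S) with hadef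
  have haYS : a ∈ YY k \ S := pel_mem hne
  rcases Finset.mem_sdiff.1 haYS with ⟨haY, haS⟩
  have hwok : okW k (insert a S) := okW_insert hS haYS c.hk
  have haw : a ∈ insert a S := Finset.mem_insert_self _ _
  have hwe : (insert a S).erase a = S := Finset.erase_insert haS
  have h1 : c.gg S = (c.hh (insert a S)).erase (c.qq (insert a S) a) := by
    have h0 := c.gg_coatom hwok haw
    rwa [hwe] at h0
  rw [h1, c.hh_image hwok, Finset.image_insert, ← c.sg_qq hwok haw,
    Finset.erase_insert]
  intro hc2
  obtain ⟨y, hyS, hyeq⟩ := Finset.mem_image.1 hc2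
  have := c.sg_injOn hwok haw (Finset.mem_insert_of_mem hyS) hyeq.symm
  exact haS (this ▸ hyS)

lemma Ctx.sg_mem_YY {y : ℕ} (hy : y ∈ YY k) : c.sg y ∈ YY k := by
  obtain ⟨S, hS, hyS⟩ := exSY c.hk hy
  obtain ⟨w, hw, hSw⟩ := exWY c.hk hS.1 (by rw [hS.2]; omega)
  have hyw : y ∈ w := hSw hyS
  rw [c.sg_qq hw hyw]
  exact (c.hh_ok hw).1 ((c.qq_mem hw hyw).1)

lemma Ctx.sg_inj : Function.Injective c.sg := by
  intro y y' h
  by_cases hy : y ∈ YY k <;> by_cases hy' : y' ∈ YY k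
  · have hsub : ({y, y'} : Finset ℕ) ⊆ YY k := by
      intro x hx
      rcases Finset.mem_insert.1 hx with rfl | hx2
      · exact hy
      · rw [Finset.mem_singleton.1 hx2]; exact hy'
    have hc2 : ({y, y'} : Finset ℕ).card ≤ k := by
      have h2 := Finset.card_insert_le y ({y'} : Finset ℕ)
      have := c.hk
      simp only [Finset.card_singleton] at h2
      omega
    obtain ⟨w, hw, hsw⟩ := exWY c.hk hsub hc2
    exact c.sg_injOn hw (hsw (Finset.mem_insert_self _ _))
      (hsw (by simp)) h
  · exfalso
    rw [c.sg_id hy'] at h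
    exact hy' (h ▸ c.sg_mem_YY hy)
  · exfalso
    rw [c.sg_id hy] at h
    exact hy (h.symm ▸ c.sg_mem_YY hy')
  · rw [c.sg_id hy, c.sg_id hy'] at h
    exact h

lemma Ctx.sg_surj : Function.Surjective c.sg := by
  intro z
  by_cases hz : z ∈ YY k
  · have himg : (YY k).image c.sg = YY k := by
      apply Finset.eq_of_subset_of_card_le
      · intro x hx
        obtain ⟨y, hy, rfl⟩ := Finset.mem_image.1 hx
        exact c.sg_mem_YY hy
      · rw [Finset.card_image_of_injective _ c.sg_inj]
    obtain ⟨y, _, hy2⟩ := Finset.mem_image.1 (himg ▸ hz)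
    exact ⟨y, hy2⟩
  · exact ⟨z, c.sg_id hz⟩

noncomputable def Ctx.sigmaP : PP k :=
  ⟨Equiv.ofBijective c.sg ⟨c.sg_inj, c.sg_surj⟩, fun x hx => c.sg_id hx⟩

/-- Classification: a class-preserving automorphism of `HS` is induced by a permutation. -/
theorem Ctx.classify : c.f = actE c.sigmaP := by
  apply Equiv.ext
  intro v
  apply Subtype.ext
  rw [actE_apply, actV_val]
  have hcoe : ⇑(c.sigmaP).1 = c.sg := rfl
  rw [hcoe]
  by_cases h1 : 1 ∈ v.1
  · have hSok : okS k (v.1.erase 1) := ⟨erase_sub_YY, erase_card h1⟩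
    have hv : v = mkA c.hk (v.1.erase 1) hSok.1 hSok.2 :=
      Subtype.ext (Finset.insert_erase h1).symm
    rw [hv]
    rw [c.fA_val hSok, c.gg_image hSok]
    have : (mkA c.hk (v.1.erase 1) hSok.1 hSok.2).1 = insert 1 (v.1.erase 1) := rfl
    rw [this, Finset.image_insert]
    rw [c.sg_id one_not_mem_YY]
  · have hwok : okW k v.1 := ⟨vsub_YY h1, v.2.2⟩
    have hmk : mkB v.1 hwok.1 hwok.2 = v := Subtype.ext rfl
    have hv : (c.f v).1 = c.hh v.1 := by
      rw [c.hh_def hwok]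
      exact congrArg (fun u => (c.f u).1) hmk.symm
    rw [hv, c.hh_image hwok]

end S17


namespace S17
open Finset
variable {k : ℕ}

attribute [local instance] Classical.propDecidable

lemma union_coatoms {U U' D : Finset ℕ} (hU : U ⊆ D) (hU' : U' ⊆ D)
    (hcU : U.card + 1 = D.card) (hcU' : U'.card + 1 = D.card) (hne : U ≠ U') :
    U ∪ U' = D := by
  have hint : (U ∩ U').card + 1 ≤ U.card := by
    by_contra hc
    push_neg at hc
    have h1 : U.card ≤ (U ∩ U').card := by omega
    have h2 : U ∩ U' = U := Finset.eq_of_subset_of_card_le Finset.inter_subset_left h1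
    have h3 : U ⊆ U' := by rw [← h2]; exact Finset.inter_subset_right
    exact hne (Finset.eq_of_subset_of_card_le h3 (by omega))
  have hcu := Finset.card_union_add_card_inter U U'
  apply Finset.eq_of_subset_of_card_le (Finset.union_subset hU hU')
  omega

lemma disjoint_card_le {S T D : Finset ℕ} (hS : S ⊆ D) (hT : T ⊆ D)
    (hdisj : Disjoint S T) : S.card + T.card ≤ D.card := by
  rw [← Finset.card_union_of_disjoint hdisj]
  exact Finset.card_le_card (Finset.union_subset hS hT)

lemma cV_erase_one {v : V k} (h1 : 1 ∈ v.1) : (cV v).1 = YY k \ v.1.erase 1 := by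
  rw [cV_val]
  ext x
  simp only [Finset.mem_sdiff, Finset.mem_erase, Finset.mem_Icc, not_and]
  constructor
  · rintro ⟨⟨hx1, hx2⟩, hxv⟩
    have : x ≠ 1 := fun h => hxv (h ▸ h1)
    exact ⟨⟨by omega, hx2⟩, fun _ => fun hx => hxv hx⟩
  · rintro ⟨⟨hx1, hx2⟩, hxv⟩
    have hne : x ≠ 1 := by omega
    exact ⟨⟨by omega, hx2⟩, fun hx => hne (by
      by_contra _
      exact absurd hx (hxv hne))⟩

lemma cV_erase_one' {w : V k} (h1 : 1 ∉ w.1) : (cV w).1.erase 1 = YY k \ w.1 := by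
  rw [cV_val]
  ext x
  simp only [Finset.mem_erase, Finset.mem_sdiff, Finset.mem_Icc]
  constructor
  · rintro ⟨hx1, ⟨hx2, hx3⟩, hxw⟩
    have : 2 ≤ x := by omega
    exact ⟨⟨this, hx3⟩, hxw⟩
  · rintro ⟨⟨hx2, hx3⟩, hxw⟩
    exact ⟨by omega, ⟨by omega, hx3⟩, hxw⟩

def Cyc (a b z x : V k) : Prop :=
  (FHS k).Adj b z ∧ (FHS k).Adj z x ∧ (FHS k).Adj x a ∧ z ≠ a ∧ x ≠ b

def Q (a b : V k) : Prop :=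
  ∃ z x z' x', Cyc a b z x ∧ Cyc a b z' x' ∧ (z, x) ≠ (z', x')

lemma Cyc_symm {a b z x : V k} : Cyc a b z x ↔ Cyc b a x z := by
  unfold Cyc
  constructor
  · rintro ⟨h1, h2, h3, h4, h5⟩
    exact ⟨h3.symm, h2.symm, h1.symm, h5, h4⟩
  · rintro ⟨h1, h2, h3, h4, h5⟩
    exact ⟨h3.symm, h2.symm, h1.symm, h5, h4⟩

lemma Q_symm {a b : V k} : Q a b ↔ Q b a := by
  unfold Q
  constructor <;>
  · rintro ⟨z, x, z', x', h1, h2, h3⟩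
    refine ⟨x, z, x', z', Cyc_symm.1 h1, Cyc_symm.1 h2, fun hc => h3 ?_⟩
    rw [Prod.mk.injEq] at hc ⊢
    exact ⟨hc.2, hc.1⟩

lemma Q_inv {f : Equiv.Perm (V k)} (hf : f ∈ graphAut (FHS k)) {a b : V k} :
    Q a b ↔ Q (f a) (f b) := by
  have fwd : ∀ (g : Equiv.Perm (V k)), g ∈ graphAut (FHS k) → ∀ a b : V k,
      Q a b → Q (g a) (g b) := by
    rintro g hg a b ⟨z, x, z', x', ⟨c1, c2, c3, c4, c5⟩, ⟨d1, d2, d3, d4, d5⟩, hne⟩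
    refine ⟨g z, g x, g z', g x',
      ⟨(hg _ _).2 c1, (hg _ _).2 c2, (hg _ _).2 c3,
        fun h => c4 (g.injective h), fun h => c5 (g.injective h)⟩,
      ⟨(hg _ _).2 d1, (hg _ _).2 d2, (hg _ _).2 d3,
        fun h => d4 (g.injective h), fun h => d5 (g.injective h)⟩,
      fun hc => hne ?_⟩
    rw [Prod.mk.injEq] at hc ⊢
    exact ⟨g.injective hc.1, g.injective hc.2⟩
  constructor
  · exact fwd f hf a b
  · intro h
    have := fwd f⁻¹ ((graphAut (FHS k)).inv_mem hf) _ _ h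
    simpa using this
end S17


namespace S17
open Finset
variable {k : ℕ}

attribute [local instance] Classical.propDecidable

lemma insert_one_inj {S S' : Finset ℕ} (hS : S ⊆ YY k) (hS' : S' ⊆ YY k)
    (h : insert 1 S = insert 1 S') : S = S' := by
  have e : ∀ (T : Finset ℕ), T ⊆ YY k → (insert 1 T).erase 1 = T := fun T hT =>
    Finset.erase_insert (fun hc => one_not_mem_YY (hT hc))
  rw [← e S hS, ← e S' hS', h]

/-- Each folded edge lies on at least two 4-cycles. -/
lemma fold_Q1 (hk : 3 ≤ k) {v : V k} (h1 : 1 ∈ v.1) : Q v (cV v) := by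
  set S := v.1.erase 1 with hSdef
  have hSok : okS k S := ⟨erase_sub_YY, erase_card h1⟩
  have hw0 : (cV v).1 = YY k \ S := cV_erase_one h1
  have hw0c : ((cV v).1).card = k := (cV v).2.2
  have hw0Y : (cV v).1 ⊆ YY k := by rw [hw0]; exact Finset.sdiff_subset
  obtain ⟨t1, ht1, t2, ht2, htne⟩ := Finset.one_lt_card.1
    (by rw [hw0c]; omega : 1 < ((cV v).1).card)
  have key : ∀ t, t ∈ (cV v).1 → ∃ z x : V k,
      Cyc v (cV v) z x ∧ z.1 = insert 1 ((cV v).1.erase t) := by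
    intro t ht
    set S' := (cV v).1.erase t with hS'def
    have hS'Y : S' ⊆ YY k := (Finset.erase_subset _ _).trans hw0Y
    have hS'c : S'.card = k - 1 := by
      rw [hS'def, Finset.card_erase_of_mem ht, hw0c]
    set z := mkA hk S' hS'Y hS'c with hzdef
    have hzval : z.1 = insert 1 S' := rfl
    have h1z : 1 ∈ z.1 := Finset.mem_insert_self _ _
    have h1cv : 1 ∉ (cV v).1 := fun hc => one_not_mem_YY (hw0Y hc)
    have hzerase : z.1.erase 1 = S' :=
      Finset.erase_insert (fun hc => one_not_mem_YY (hS'Y hc))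
    have hSdisj : ∀ s ∈ S, s ∉ S' := by
      intro s hs hc
      have h2 : s ∈ (cV v).1 := Finset.erase_subset _ _ hc
      rw [hw0] at h2
      exact (Finset.mem_sdiff.1 h2).2 hs
    have hzne : z ≠ v := by
      intro h
      obtain ⟨s, hs⟩ : S'.Nonempty := Finset.card_pos.1 (by rw [hS'c]; omega)
      have hiv : insert 1 S' = v.1 := by rw [← hzval, h]
      have hS'S : S' = S := by
        apply insert_one_inj hS'Y hSok.1
        rw [hiv, hSdef, Finset.insert_erase h1]
      exact hSdisj s (hS'S ▸ hs) hs
    refine ⟨z, cV z, ⟨?_, ?_, ?_, hzne, fun hc => hzne (by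
      have h2 := congrArg cV hc
      rwa [cV_cV, cV_cV] at h2)⟩, hzval⟩
    · rw [fhs_adj2 hk]
      refine Or.inl ?_
      rw [hs_adj]
      exact Or.inr ⟨h1z, h1cv, by rw [hzerase]; exact Finset.erase_subset _ _⟩
    · rw [fhs_adj2 hk]
      exact Or.inr rfl
    · rw [fhs_adj2 hk]
      refine Or.inl ?_
      rw [hs_adj]
      refine Or.inr ⟨h1, fun hc => (one_mem_or hk z).1 hc h1z, ?_⟩
      rw [cV_erase_one h1z, hzerase]
      intro s hs
      exact Finset.mem_sdiff.2 ⟨hSok.1 hs, hSdisj s hs⟩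
  obtain ⟨z1, x1, hcyc1, hz1⟩ := key t1 ht1
  obtain ⟨z2, x2, hcyc2, hz2⟩ := key t2 ht2
  refine ⟨z1, x1, z2, x2, hcyc1, hcyc2, fun hc => ?_⟩
  rw [Prod.mk.injEq] at hc
  have hz := congrArg Subtype.val hc.1
  rw [hz1, hz2] at hz
  have he : (cV v).1.erase t1 = (cV v).1.erase t2 := insert_one_inj
    ((Finset.erase_subset _ _).trans hw0Y) ((Finset.erase_subset _ _).trans hw0Y) hz
  have h3 : t1 ∈ (cV v).1.erase t2 := Finset.mem_erase.2 ⟨htne, ht1⟩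
  rw [← he] at h3
  exact Finset.notMem_erase t1 _ h3

lemma fold_Q (hk : 3 ≤ k) (v : V k) : Q v (cV v) := by
  by_cases h1 : 1 ∈ v.1
  · exact fold_Q1 hk h1
  · have h2 : 1 ∈ (cV v).1 := (one_mem_or hk v).2 h1
    have := fold_Q1 hk h2
    rw [cV_cV] at this
    exact Q_symm.1 this
end S17


namespace S17
open Finset
variable {k : ℕ}

attribute [local instance] Classical.propDecidable

/-- Uniqueness of the 4-cycle completion on an `HS` edge. -/
lemma hs_unique (hk : 3 ≤ k) {u w : V k} (h1u : 1 ∈ u.1)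
    (hadj : (HS (2*k) k).Adj u w) {z x : V k} (hcyc : Cyc u w z x) :
    z = cV w ∧ x = cV u := by
  obtain ⟨hbz, hzx, hxu, hzu, hxw⟩ := hcyc
  rw [hs_adj] at hadj
  rcases hadj with ⟨_, h1w, hSw⟩ | ⟨_, hcon, _⟩
  swap
  · exact absurd h1u hcon
  set S := u.1.erase 1 with hSdef
  have hSok : okS k S := ⟨erase_sub_YY, erase_card h1u⟩
  have hwY : w.1 ⊆ YY k := vsub_YY h1w
  have h1z : 1 ∈ z.1 := by
    have := fhs_flip hk hbz
    by_contra hc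
    exact h1w (this.2 hc)
  have h1x : 1 ∉ x.1 := (fhs_flip hk hzx).1 h1z
  -- decompose Adj x u
  have hxu2 : S ⊆ x.1 ∨ x = cV u := by
    rcases (fhs_adj2 hk).1 hxu with h | h
    · rw [hs_adj] at h
      rcases h with ⟨hcon, _, _⟩ | ⟨_, _, hsub⟩
      · exact absurd hcon h1x
      · exact Or.inl hsub
    · right
      have h2 := congrArg cV h
      rw [cV_cV] at h2
      exact h2.symm
  rcases (fhs_adj2 hk).1 hbz with hhs | hfold
  · -- impossible case: z is HS-adjacent to w
    exfalso
    rw [hs_adj] at hhs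
    rcases hhs with ⟨hcon, _, _⟩ | ⟨_, _, hz'w⟩
    · exact absurd hcon h1w
    set z' := z.1.erase 1 with hz'def
    have hz'ok : okS k z' := ⟨erase_sub_YY, erase_card h1z⟩
    have hz'S : z' ≠ S := by
      intro h
      apply hzu
      apply Subtype.ext
      rw [← Finset.insert_erase h1z, ← Finset.insert_erase h1u, ← hz'def, ← hSdef, h]
    have hun : S ∪ z' = w.1 := union_coatoms hSw hz'w
      (by rw [hSok.2, w.2.2]; omega) (by rw [hz'ok.2, w.2.2]; omega) (Ne.symm hz'S)
    have hzx2 : z' ⊆ x.1 ∨ x = cV z := by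
      rcases (fhs_adj2 hk).1 hzx with h | h
      · rw [hs_adj] at h
        rcases h with ⟨_, _, hsub⟩ | ⟨hcon, _, _⟩
        · exact Or.inl hsub
        · exact absurd hcon h1x
      · exact Or.inr h
    rcases hxu2 with hc1 | hc1 <;> rcases hzx2 with hc2 | hc2
    · -- S ⊆ x and z' ⊆ x : x = w
      apply hxw
      apply Subtype.ext
      have hwx : w.1 ⊆ x.1 := by rw [← hun]; exact Finset.union_subset hc1 hc2
      exact (Finset.eq_of_subset_of_card_le hwx (by rw [x.2.2, w.2.2])).symm
    · -- S ⊆ x, x = cV z : S disjoint from z'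
      have hdisj : Disjoint S z' := by
        rw [Finset.disjoint_left]
        intro s hs hs'
        have hsx : s ∈ x.1 := hc1 hs
        rw [hc2, cV_val] at hsx
        exact (Finset.mem_sdiff.1 hsx).2 (Finset.erase_subset _ _ hs')
      have := disjoint_card_le hSw hz'w hdisj
      rw [hSok.2, hz'ok.2, w.2.2] at this
      omega
    · -- x = cV u, z' ⊆ x : same disjointness
      have hdisj : Disjoint S z' := by
        rw [Finset.disjoint_left]
        intro s hs hs'
        have hsx : s ∈ x.1 := hc2 hs'
        rw [hc1, cV_val] at hsx
        exact (Finset.mem_sdiff.1 hsx).2 (Finset.erase_subset _ _ hs)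
      have := disjoint_card_le hSw hz'w hdisj
      rw [hSok.2, hz'ok.2, w.2.2] at this
      omega
    · -- x = cV u and x = cV z : u = z
      apply hzu
      have := hc1 ▸ hc2
      have h2 := congrArg cV (hc2.symm.trans hc1)
      rwa [cV_cV, cV_cV] at h2
  · -- z = cV w
    have hz : z = cV w := by
      have h2 := congrArg cV hfold
      rwa [cV_cV] at h2
    refine ⟨hz, ?_⟩
    have hzc : z.1.erase 1 = YY k \ w.1 := by
      rw [hz]; exact cV_erase_one' h1w
    have hzcc : (z.1.erase 1).card = k - 1 := erase_card h1z
    -- decompose Adj z x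
    have hzx2 : z.1.erase 1 ⊆ x.1 ∨ x = cV z := by
      rcases (fhs_adj2 hk).1 hzx with h | h
      · rw [hs_adj] at h
        rcases h with ⟨_, _, hsub⟩ | ⟨hcon, _, _⟩
        · exact Or.inl hsub
        · exact absurd hcon h1x
      · exact Or.inr h
    rcases hzx2 with hc2 | hc2
    swap
    · exfalso
      apply hxw
      rw [hc2, hz, cV_cV]
    rcases hxu2 with hc1 | hc1
    · exfalso
      have hdisj : Disjoint S (z.1.erase 1) := by
        rw [Finset.disjoint_left]
        intro s hs hs'
        rw [hzc] at hs'
        exact (Finset.mem_sdiff.1 hs').2 (hSw hs)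
      have hxY : x.1 ⊆ YY k := vsub_YY h1x
      have := disjoint_card_le hc1 hc2 hdisj
      rw [hSok.2, hzcc, x.2.2] at this
      omega
    · exact hc1

lemma not_Q_hs (hk : 3 ≤ k) {u w : V k} (hadj : (HS (2*k) k).Adj u w) : ¬ Q u w := by
  have main : ∀ u w : V k, 1 ∈ u.1 → (HS (2*k) k).Adj u w → ¬ Q u w := by
    rintro u w h1u hadj ⟨z, x, z', x', c1, c2, hne⟩
    obtain ⟨e1, e2⟩ := hs_unique hk h1u hadj c1
    obtain ⟨e3, e4⟩ := hs_unique hk h1u hadj c2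
    exact hne (by rw [e1, e2, e3, e4])
  have h2 := hs_adj.1 hadj
  rcases h2 with ⟨h1u, _, _⟩ | ⟨h1w, _, _⟩
  · exact main u w h1u hadj
  · intro hq
    exact main w u h1w hadj.symm (Q_symm.1 hq)

/-- Every automorphism of `FHS` is an automorphism of `HS`. -/
lemma fhs_aut_sub_hs (hk : 3 ≤ k) {f : Equiv.Perm (V k)}
    (hf : f ∈ graphAut (FHS k)) : f ∈ graphAut (HS (2*k) k) := by
  have char : ∀ a b : V k, (HS (2*k) k).Adj a b ↔ ((FHS k).Adj a b ∧ ¬ Q a b) := by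
    intro a b
    constructor
    · intro h
      exact ⟨(fhs_adj2 hk).2 (Or.inl h), not_Q_hs hk h⟩
    · rintro ⟨hadj, hq⟩
      rcases (fhs_adj2 hk).1 hadj with h | h
      · exact h
      · exact absurd (h ▸ fold_Q hk a) hq
  intro a b
  rw [char, char, hf a b, ← Q_inv hf]
end S17


namespace S17
open Finset
variable {k : ℕ}

attribute [local instance] Classical.propDecidable

lemma cE_inv : (cE : Equiv.Perm (V k))⁻¹ = cE := by
  apply Equiv.ext
  intro v
  rfl

/-- Classification of all automorphisms of `HS`. -/
lemma hs_aut_classified (hk : 3 ≤ k) {f : Equiv.Perm (V k)}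
    (hf : f ∈ graphAut (HS (2*k) k)) :
    ∃ (σ : PP k) (b : Bool), f = actE σ * (cond b cE 1) := by
  rcases class_dichotomy hk (fun {a b} => hs_flip) (hs_conn hk) hf with h | h
  · let c : Ctx k := ⟨hk, f, hf, h⟩
    exact ⟨c.sigmaP, false, by rw [cond, mul_one]; exact c.classify⟩
  · have hmem : f * cE ∈ graphAut (HS (2*k) k) :=
      (graphAut (HS (2*k) k)).mul_mem hf (cE_mem_hs hk)
    have hpres : ∀ v : V k, 1 ∈ (((f * cE : Equiv.Perm (V k))) v).1 ↔ 1 ∈ v.1 := by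
      intro v
      rw [Equiv.Perm.mul_apply, cE_apply, h (cV v), one_mem_or hk]
      tauto
    let c : Ctx k := ⟨hk, f * cE, hmem, hpres⟩
    refine ⟨c.sigmaP, true, ?_⟩
    have h2 : f * cE = actE c.sigmaP := c.classify
    calc f = f * cE * cE⁻¹ := by group
    _ = actE c.sigmaP * cE := by rw [h2, cE_inv]
    _ = actE c.sigmaP * cond true cE 1 := rfl

lemma theta_mem_hs (hk : 3 ≤ k) (σ : PP k) (b : Bool) :
    actE σ * (cond b cE 1) ∈ graphAut (HS (2*k) k) := by
  apply (graphAut (HS (2*k) k)).mul_mem (actE_mem_hs σ)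
  cases b
  · exact (graphAut (HS (2*k) k)).one_mem
  · exact cE_mem_hs hk

lemma theta_mem_fhs (hk : 3 ≤ k) (σ : PP k) (b : Bool) :
    actE σ * (cond b cE 1) ∈ graphAut (FHS k) := by
  apply (graphAut (FHS k)).mul_mem (actE_mem_fhs hk σ)
  cases b
  · exact (graphAut (FHS k)).one_mem
  · exact cE_mem_fhs hk

/-- The two automorphism groups coincide. -/
lemma aut_eq (hk : 3 ≤ k) : graphAut (FHS k) = graphAut (HS (2*k) k) := by
  ext f
  constructor
  · exact fhs_aut_sub_hs hk
  · intro hf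
    obtain ⟨σ, b, rfl⟩ := hs_aut_classified hk hf
    exact theta_mem_fhs hk σ b

lemma actE_inj (hk : 3 ≤ k) {σ σ' : PP k} (h : actE σ = actE σ') : σ = σ' := by
  apply Subtype.ext
  apply Equiv.ext
  intro y
  by_cases hy : y ∈ YY k
  swap
  · rw [σ.2 y hy, σ'.2 y hy]
  by_contra hne
  set z₀ := σ.1⁻¹ (σ'.1 y) with hz₀
  have hz₀Y : z₀ ∈ YY k := pp_mem (ppInv σ) (pp_mem σ' hy)
  have hz₀y : z₀ ≠ y := by
    intro hc
    have h2 : σ.1 ((σ.1)⁻¹ (σ'.1 y)) = σ.1 y := congrArg σ.1 hc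
    rw [← Equiv.Perm.mul_apply, mul_inv_cancel, Equiv.Perm.one_apply] at h2
    exact hne h2.symm
  obtain ⟨w, hw1, hw2, hw3⟩ := Finset.exists_subsuperset_card_eq (n := k)
    (Finset.singleton_subset_iff.2 (Finset.mem_erase.2 ⟨fun hc => hz₀y hc.symm, hy⟩))
    (by rw [Finset.card_singleton]; omega)
    (by rw [Finset.card_erase_of_mem hz₀Y, YY_card]; omega)
  have hwY : w ⊆ YY k := hw2.trans (Finset.erase_subset _ _)
  have hyw : y ∈ w := hw1 (Finset.mem_singleton_self y)
  have hz₀w : z₀ ∉ w := fun hc => Finset.notMem_erase z₀ _ (hw2 hc)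
  set v := mkB w hwY hw3 with hv
  have himg : w.image σ.1 = w.image σ'.1 := by
    have := congrArg (fun (g : Equiv.Perm (V k)) => (g v).1) h
    exact this
  have hmem : σ'.1 y ∈ w.image σ'.1 := Finset.mem_image_of_mem _ hyw
  rw [← himg] at hmem
  obtain ⟨t, htw, ht⟩ := Finset.mem_image.1 hmem
  have ht2 : t = z₀ := by
    rw [hz₀, ← ht, ← Equiv.Perm.mul_apply, inv_mul_cancel, Equiv.Perm.one_apply]
  exact hz₀w (ht2 ▸ htw)

noncomputable def thetaE (hk : 3 ≤ k) : (PP k × Bool) ≃ {x // x ∈ graphAut (FHS k)} := by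
  apply Equiv.ofBijective (fun p => ⟨actE p.1 * (cond p.2 cE 1), theta_mem_fhs hk p.1 p.2⟩)
  constructor
  · rintro ⟨σ, b⟩ ⟨σ', b'⟩ hp
    have heq : actE σ * (cond b cE 1) = actE σ' * (cond b' cE 1) :=
      congrArg Subtype.val hp
    -- first, b = b'
    have hS₀ : Finset.Icc 2 k ⊆ YY k := by
      intro x hx; simp only [Finset.mem_Icc] at *; omega
    have hc₀ : (Finset.Icc 2 k).card = k - 1 := by simp [Nat.card_Icc]
    set u₀ := mkA hk (Finset.Icc 2 k) hS₀ hc₀ with hu₀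
    have h1u₀ : 1 ∈ u₀.1 := Finset.mem_insert_self _ _
    have hbval : ∀ (c : Bool) (τ : PP k),
        (1 ∈ ((actE τ * (cond c cE 1) : Equiv.Perm (V k)) u₀).1 ↔ c = false) := by
      intro c τ
      cases c
      · simp only [cond, Equiv.Perm.mul_apply, Equiv.Perm.one_apply]
        rw [actE_apply, one_mem_actV]
        simp [h1u₀]
      · simp only [cond, Equiv.Perm.mul_apply]
        rw [actE_apply, cE_apply, one_mem_actV, one_mem_or hk]
        simp [h1u₀]
    have hbb : b = b' := by
      have h1 := hbval b σ
      have h2 := hbval b' σ'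
      rw [heq] at h1
      have h3 : (b = false) ↔ (b' = false) := by rw [← h1, h2]
      cases b <;> cases b' <;> simp_all
    subst hbb
    have hσ : actE σ = actE σ' := mul_right_cancel heq
    rw [actE_inj hk hσ]
  · rintro ⟨f, hf⟩
    obtain ⟨σ, b, rfl⟩ := hs_aut_classified hk (fhs_aut_sub_hs hk hf)
    exact ⟨(σ, b), rfl⟩

lemma card_PP (hk : 3 ≤ k) : Nat.card (PP k) = Nat.factorial (2*k - 1) := by
  have e : Equiv.Perm {x // x ∈ YY k} ≃ PP k :=
    Equiv.Perm.subtypeEquivSubtypePerm (fun x => x ∈ YY k)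
  rw [← Nat.card_congr e, Nat.card_eq_fintype_card, Fintype.card_perm,
    Fintype.card_coe, YY_card]

lemma card_aut_fhs (hk : 3 ≤ k) :
    Nat.card {x // x ∈ graphAut (FHS k)} = 2 * Nat.factorial (2*k - 1) := by
  rw [← Nat.card_congr (thetaE hk), Nat.card_prod, card_PP hk]
  simp [Nat.card_eq_fintype_card]
  ring
end S17


/-- For `k ≥ 3`, the automorphism group of `FHS(2k,k)` equals that of `HS(2k,k)` (as
permutation groups on the common vertex set); in particular `|Aut(FHS(2k,k))| = 2·(2k-1)!`. -/
theorem stmt17 (k : ℕ) (hk : 3 ≤ k) :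
    graphAut (FHS k) = graphAut (HS (2*k) k) ∧
    Nat.card ↥(graphAut (FHS k)) = 2 * Nat.factorial (2*k - 1) := by
  exact ⟨S17.aut_eq hk, S17.card_aut_fhs hk⟩
end

section
/- For k ≥ 3, HS(2k,k) is not a Cayley graph: Aut(HS(2k,k)) contains no subgroup acting regularly on the vertex set. -/
open Finset

namespace NX

instance (n k : ℕ) : Fintype (hsVert n k) :=
  Fintype.subtype ((Finset.Icc 1 n).powersetCard k) (by
    intro s; rw [Finset.mem_powersetCard])

abbrev Vx (k : ℕ) := hsVert (2*k) k

def Y (k : ℕ) : Finset ℕ := Finset.Icc 2 (2*k)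

variable {k : ℕ}

lemma Ysub : Y k ⊆ Finset.Icc 1 (2*k) := by
  intro x hx; simp only [Y, mem_Icc] at *; omega

lemma one_not_mem_Y : 1 ∉ Y k := by simp [Y]

lemma Ycard : (Y k).card = 2*k - 1 := by simp [Y]

lemma B_sub {w : Vx k} (hw : 1 ∉ w.1) : w.1 ⊆ Y k := by
  intro x hx
  have := w.2.1 hx
  simp only [mem_Icc] at this
  simp only [Y, mem_Icc]
  rcases this with ⟨h1, h2⟩
  refine ⟨?_, h2⟩
  rcases Nat.lt_or_ge x 2 with h | h
  · have : x = 1 := by omega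
    exact absurd (this ▸ hx) hw
  · exact h

lemma A_erase_sub {v : Vx k} : v.1.erase 1 ⊆ Y k := by
  intro x hx
  rcases mem_erase.mp hx with ⟨hx1, hxv⟩
  have := v.2.1 hxv
  simp only [mem_Icc] at this
  simp only [Y, mem_Icc]
  omega

lemma A_erase_card {v : Vx k} (hv : 1 ∈ v.1) : (v.1.erase 1).card = k - 1 := by
  rw [Finset.card_erase_of_mem hv, v.2.2]

/-- make a B-vertex from a `k`-subset of `Y`. -/
def Bv (s : Finset ℕ) (hs : s ⊆ Y k) (hc : s.card = k) : Vx k :=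
  ⟨s, fun x hx => Ysub (hs hx), hc⟩

lemma Bv_not1 {s : Finset ℕ} (hs : s ⊆ Y k) (hc : s.card = k) : 1 ∉ (Bv s hs hc).1 :=
  fun h => one_not_mem_Y (hs h)

@[simp] lemma Bv_val {s : Finset ℕ} (hs : s ⊆ Y k) (hc : s.card = k) : (Bv s hs hc).1 = s := rfl

/-- make an A-vertex from a `k-1`-subset of `Y`. -/
def Av (hk : 3 ≤ k) (s : Finset ℕ) (hs : s ⊆ Y k) (hc : s.card = k - 1) : Vx k :=
  ⟨insert 1 s, by
    intro x hx
    rcases mem_insert.mp hx with h | h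
    · subst h; simp only [mem_Icc]; omega
    · exact Ysub (hs h), by
    rw [Finset.card_insert_of_notMem (fun h => one_not_mem_Y (hs h)), hc]; omega⟩

@[simp] lemma Av_val (hk : 3 ≤ k) {s : Finset ℕ} (hs : s ⊆ Y k) (hc : s.card = k - 1) :
    (Av hk s hs hc).1 = insert 1 s := rfl

lemma Av_mem1 (hk : 3 ≤ k) {s : Finset ℕ} (hs : s ⊆ Y k) (hc : s.card = k - 1) :
    1 ∈ (Av hk s hs hc).1 := mem_insert_self 1 s

lemma Av_erase (hk : 3 ≤ k) {s : Finset ℕ} (hs : s ⊆ Y k) (hc : s.card = k - 1) :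
    (Av hk s hs hc).1.erase 1 = s := by
  simp only [Av]
  exact Finset.erase_insert (fun h => one_not_mem_Y (hs h))

lemma adj_flip {v w : Vx k} (h : (HS (2*k) k).Adj v w) : (1 ∈ v.1 ↔ 1 ∉ w.1) := by
  rcases (SimpleGraph.fromRel_adj _ v w).mp h with ⟨hne, h | h⟩
  · exact ⟨fun _ => h.2.2, fun _ => h.2.1⟩
  · constructor
    · intro h1; exact absurd h1 h.2.2
    · intro h1; exact absurd h.2.1 h1

/-- adjacency characterization between an A-vertex and a B-vertex -/
lemma adj_iff (hk : 3 ≤ k) {v w : Vx k} (hv : 1 ∈ v.1) (hw : 1 ∉ w.1) :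
    (HS (2*k) k).Adj v w ↔ v.1.erase 1 ⊆ w.1 := by
  have hvw : v ≠ w := fun h => hw (h ▸ hv)
  rw [HS, SimpleGraph.fromRel_adj]
  constructor
  · rintro ⟨-, h | h⟩
    · -- (v ∩ w).card = k - 1
      have hsub : v.1 ∩ w.1 ⊆ v.1.erase 1 := by
        intro x hx
        rcases mem_inter.mp hx with ⟨h1, h2⟩
        exact mem_erase.mpr ⟨fun he => hw (he ▸ h2), h1⟩
      have : v.1 ∩ w.1 = v.1.erase 1 := by
        apply Finset.eq_of_subset_of_card_le hsub
        rw [A_erase_card hv, h.1]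
      intro x hx
      rw [← this] at hx
      exact (mem_inter.mp hx).2
    · exact absurd h.2.1 hw
  · intro hsub
    refine ⟨hvw, Or.inl ⟨?_, hv, hw⟩⟩
    have : v.1 ∩ w.1 = v.1.erase 1 := by
      apply Finset.Subset.antisymm
      · intro x hx
        rcases mem_inter.mp hx with ⟨h1, h2⟩
        exact mem_erase.mpr ⟨fun he => hw (he ▸ h2), h1⟩
      · intro x hx
        exact mem_inter.mpr ⟨(mem_erase.mp hx).2, hsub hx⟩
    rw [this, A_erase_card hv]

lemma not_adj_AA {v w : Vx k} (hv : 1 ∈ v.1) (hw : 1 ∈ w.1) : ¬ (HS (2*k) k).Adj v w :=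
  fun h => ((adj_flip h).mp hv) hw

lemma not_adj_BB {v w : Vx k} (hv : 1 ∉ v.1) (hw : 1 ∉ w.1) : ¬ (HS (2*k) k).Adj v w :=
  fun h => hv ((adj_flip h).mpr hw)

end NX

namespace NX
variable {k : ℕ}

lemma exists_ksub (hk : 3 ≤ k) : ∃ s, s ⊆ Y k ∧ s.card = k := by
  obtain ⟨t, ht, hc⟩ := Finset.exists_subset_card_eq (s := Y k) (n := k)
    (by rw [Ycard]; omega)
  exact ⟨t, ht, hc⟩

lemma insert_erase_B (hk : 3 ≤ k) {w : Vx k} (hw : 1 ∉ w.1) {a b : ℕ}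
    (ha : a ∈ w.1) (hb : b ∈ Y k) (hbw : b ∉ w.1) :
    insert b (w.1.erase a) ⊆ Y k ∧ (insert b (w.1.erase a)).card = k := by
  constructor
  · intro x hx
    rcases mem_insert.mp hx with h | h
    · exact h ▸ hb
    · exact B_sub hw (mem_erase.mp h).2
  · rw [card_insert_of_notMem (fun h => hbw (mem_erase.mp h).2),
      card_erase_of_mem ha, w.2.2]
    omega

lemma reach_BB (hk : 3 ≤ k) (w' : Vx k) (hw' : 1 ∉ w'.1) :
    ∀ n (w : Vx k), 1 ∉ w.1 → (w'.1 \ w.1).card = n → (HS (2*k) k).Reachable w w' := by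
  intro n
  induction n using Nat.strong_induction_on with
  | _ n ih =>
    intro w hw hn
    rcases Nat.eq_zero_or_pos n with h0 | hpos
    · subst h0
      have hsub : w'.1 ⊆ w.1 := by
        rw [← Finset.sdiff_eq_empty_iff_subset]
        exact Finset.card_eq_zero.mp hn
      have : w'.1 = w.1 := Finset.eq_of_subset_of_card_le hsub (by rw [w.2.2, w'.2.2])
      have : w = w' := Subtype.ext this.symm
      exact this ▸ SimpleGraph.Reachable.refl w
    · -- pick b ∈ w' \ w, a ∈ w \ w'
      obtain ⟨b, hb⟩ := Finset.card_pos.mp (hn ▸ hpos)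
      rcases mem_sdiff.mp hb with ⟨hbw', hbw⟩
      have hcomm : (w.1 \ w'.1).card = n := by
        rw [Finset.card_sdiff_comm (by rw [w.2.2, w'.2.2]), hn]
      obtain ⟨a, ha⟩ := Finset.card_pos.mp (hcomm ▸ hpos)
      rcases mem_sdiff.mp ha with ⟨haw, haw'⟩
      -- the middle A-vertex and new B-vertex
      have hS : w.1.erase a ⊆ Y k := fun x hx => B_sub hw (mem_erase.mp hx).2
      have hScard : (w.1.erase a).card = k - 1 := by
        rw [card_erase_of_mem haw, w.2.2]
      obtain ⟨hw''sub, hw''card⟩ := insert_erase_B hk hw haw (B_sub hw' hbw') hbw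
      set v : Vx k := Av hk (w.1.erase a) hS hScard with hv
      set w'' : Vx k := Bv (insert b (w.1.erase a)) hw''sub hw''card with hw''
      have hadj1 : (HS (2*k) k).Adj v w := by
        rw [adj_iff hk (Av_mem1 hk hS hScard) hw, Av_erase]
        exact Finset.erase_subset _ _
      have hadj2 : (HS (2*k) k).Adj v w'' := by
        rw [adj_iff hk (Av_mem1 hk hS hScard) (Bv_not1 hw''sub hw''card), Av_erase]
        exact Finset.subset_insert _ _
      have hr1 : (HS (2*k) k).Reachable w w'' :=
        (hadj1.reachable.symm).trans hadj2.reachable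
      have hlt : (w'.1 \ w''.1).card < n := by
        have hsub2 : w'.1 \ w''.1 ⊆ (w'.1 \ w.1).erase b := by
          intro x hx
          rcases mem_sdiff.mp hx with ⟨hx1, hx2⟩
          rw [hw''] at hx2
          have hx2' : ¬(x = b ∨ (x ≠ a ∧ x ∈ w.1)) := by
            simpa [Bv, mem_insert, mem_erase] using hx2
          push_neg at hx2'
          have hxa : x ≠ a := fun h => haw' (h ▸ hx1)
          exact mem_erase.mpr ⟨hx2'.1, mem_sdiff.mpr ⟨hx1, fun hxw => (hx2'.2 hxa hxw).elim⟩⟩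
        calc (w'.1 \ w''.1).card ≤ ((w'.1 \ w.1).erase b).card := Finset.card_le_card hsub2
          _ = n - 1 := by rw [card_erase_of_mem hb, hn]
          _ < n := by omega
      exact hr1.trans (ih _ hlt w'' (Bv_not1 hw''sub hw''card) rfl)

lemma exists_B_nbr (hk : 3 ≤ k) (v : Vx k) (hv : 1 ∈ v.1) :
    ∃ w : Vx k, 1 ∉ w.1 ∧ (HS (2*k) k).Adj v w := by
  have hS : v.1.erase 1 ⊆ Y k := A_erase_sub
  have hScard : (v.1.erase 1).card = k - 1 := A_erase_card hv
  have hne : (Y k \ v.1.erase 1).Nonempty := by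
    rw [← Finset.card_pos, Finset.card_sdiff_of_subset hS, Ycard, hScard]
    omega
  obtain ⟨z, hz⟩ := hne
  rcases mem_sdiff.mp hz with ⟨hzY, hzS⟩
  have hsub : insert z (v.1.erase 1) ⊆ Y k := by
    intro x hx; rcases mem_insert.mp hx with h | h
    · exact h ▸ hzY
    · exact hS h
  have hcard : (insert z (v.1.erase 1)).card = k := by
    rw [card_insert_of_notMem hzS, hScard]; omega
  refine ⟨Bv _ hsub hcard, Bv_not1 hsub hcard, ?_⟩
  rw [adj_iff hk hv (Bv_not1 hsub hcard)]
  exact Finset.subset_insert _ _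

lemma reach_any (hk : 3 ≤ k) (u v : Vx k) : (HS (2*k) k).Reachable u v := by
  have key : ∀ x : Vx k, ∃ w : Vx k, 1 ∉ w.1 ∧ (HS (2*k) k).Reachable x w := by
    intro x
    by_cases hx : 1 ∈ x.1
    · obtain ⟨w, hw, hadj⟩ := exists_B_nbr hk x hx
      exact ⟨w, hw, hadj.reachable⟩
    · exact ⟨x, hx, SimpleGraph.Reachable.refl x⟩
  obtain ⟨w1, hw1, hr1⟩ := key u
  obtain ⟨w2, hw2, hr2⟩ := key v
  exact hr1.trans ((reach_BB hk w2 hw2 _ w1 hw1 rfl).trans hr2.symm)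

lemma walk_parity {u v : Vx k} (p : (HS (2*k) k).Walk u v) :
    ((1 ∈ u.1) ↔ (1 ∈ v.1)) ↔ Even p.length := by
  induction p with
  | nil => exact iff_of_true Iff.rfl (by simp)
  | cons h q ih =>
    rw [SimpleGraph.Walk.length_cons, Nat.even_add_one, ← ih]
    have := adj_flip h
    tauto

def autIso (e : Equiv.Perm (Vx k)) (he : e ∈ graphAut (HS (2*k) k)) :
    HS (2*k) k ≃g HS (2*k) k :=
  ⟨e, by intro a b; exact he a b⟩

lemma aut_parity (hk : 3 ≤ k) (e : Equiv.Perm (Vx k)) (he : e ∈ graphAut (HS (2*k) k))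
    (u v : Vx k) :
    ((1 ∈ (e u).1) ↔ (1 ∈ u.1)) ↔ ((1 ∈ (e v).1) ↔ (1 ∈ v.1)) := by
  obtain ⟨p⟩ := reach_any hk u v
  have h1 := walk_parity p
  have h2 := walk_parity (p.map (autIso e he).toHom)
  rw [SimpleGraph.Walk.length_map] at h2
  have : (1 ∈ ((autIso e he) u).1 ↔ 1 ∈ ((autIso e he) v).1) ↔ Even p.length := h2
  have hcoe : ∀ x : Vx k, ((autIso e he) x) = e x := fun _ => rfl
  rw [hcoe, hcoe] at this
  tauto

lemma lvl_dichotomy (hk : 3 ≤ k) (e : Equiv.Perm (Vx k)) (he : e ∈ graphAut (HS (2*k) k)) :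
    (∀ v : Vx k, (1 ∈ (e v).1 ↔ 1 ∈ v.1)) ∨ (∀ v : Vx k, ¬(1 ∈ (e v).1 ↔ 1 ∈ v.1)) := by
  obtain ⟨s, hs, hc⟩ := exists_ksub hk
  set v0 : Vx k := Bv s hs hc
  by_cases h : 1 ∈ (e v0).1 ↔ 1 ∈ v0.1
  · left; intro v; exact (aut_parity hk e he v0 v).mp h
  · right; intro v; exact fun hv => h ((aut_parity hk e he v0 v).mpr hv)

end NX

namespace NX
section Constr
variable {k : ℕ} (hk : 3 ≤ k) (e : Equiv.Perm (Vx k))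

/-- image of a `k`-subset of `Y` under the automorphism -/
noncomputable def eB (s : Finset ℕ) : Finset ℕ :=
  if h : s ⊆ Y k ∧ s.card = k then (e (Bv s h.1 h.2)).1 else ∅

/-- image of a `k-1`-subset of `Y` under the automorphism -/
noncomputable def eA (s : Finset ℕ) : Finset ℕ :=
  if h : s ⊆ Y k ∧ s.card = k - 1 then (e (Av hk s h.1 h.2)).1.erase 1 else ∅

lemma eB_def {s : Finset ℕ} (hs : s ⊆ Y k) (hc : s.card = k) :
    eB e s = (e (Bv s hs hc)).1 := dif_pos ⟨hs, hc⟩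

lemma eA_def {s : Finset ℕ} (hs : s ⊆ Y k) (hc : s.card = k - 1) :
    eA hk e s = (e (Av hk s hs hc)).1.erase 1 := dif_pos ⟨hs, hc⟩

lemma eB_not1 (hl : ∀ v : Vx k, 1 ∈ (e v).1 ↔ 1 ∈ v.1) {s : Finset ℕ} (hs : s ⊆ Y k) (hc : s.card = k) :
    1 ∉ (e (Bv s hs hc)).1 := fun h => Bv_not1 hs hc ((hl _).mp h)

lemma eB_sub (hl : ∀ v : Vx k, 1 ∈ (e v).1 ↔ 1 ∈ v.1) {s : Finset ℕ} (hs : s ⊆ Y k) (hc : s.card = k) : eB e s ⊆ Y k := by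
  rw [eB_def e hs hc]; exact B_sub (eB_not1 e hl hs hc)

lemma eB_card (hl : ∀ v : Vx k, 1 ∈ (e v).1 ↔ 1 ∈ v.1) {s : Finset ℕ} (hs : s ⊆ Y k) (hc : s.card = k) : (eB e s).card = k := by
  rw [eB_def e hs hc]; exact (e _).2.2

lemma eA_mem1 (hl : ∀ v : Vx k, 1 ∈ (e v).1 ↔ 1 ∈ v.1) {s : Finset ℕ} (hs : s ⊆ Y k) (hc : s.card = k - 1) :
    1 ∈ (e (Av hk s hs hc)).1 := (hl _).mpr (Av_mem1 hk hs hc)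

lemma eA_sub {s : Finset ℕ} (hs : s ⊆ Y k) (hc : s.card = k - 1) : eA hk e s ⊆ Y k := by
  rw [eA_def hk e hs hc]; exact A_erase_sub

lemma eA_card (hl : ∀ v : Vx k, 1 ∈ (e v).1 ↔ 1 ∈ v.1) {s : Finset ℕ} (hs : s ⊆ Y k) (hc : s.card = k - 1) :
    (eA hk e s).card = k - 1 := by
  rw [eA_def hk e hs hc]; exact A_erase_card (eA_mem1 hk e hl hs hc)

lemma eA_insert (hl : ∀ v : Vx k, 1 ∈ (e v).1 ↔ 1 ∈ v.1) {s : Finset ℕ} (hs : s ⊆ Y k) (hc : s.card = k - 1) :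
    insert 1 (eA hk e s) = (e (Av hk s hs hc)).1 := by
  rw [eA_def hk e hs hc]
  exact Finset.insert_erase (eA_mem1 hk e hl hs hc)

lemma eB_inj {s s' : Finset ℕ} (hs : s ⊆ Y k) (hc : s.card = k)
    (hs' : s' ⊆ Y k) (hc' : s'.card = k) (h : eB e s = eB e s') : s = s' := by
  rw [eB_def e hs hc, eB_def e hs' hc'] at h
  have := e.injective (Subtype.ext h)
  exact congrArg Subtype.val this

lemma eA_inj (hl : ∀ v : Vx k, 1 ∈ (e v).1 ↔ 1 ∈ v.1) {s s' : Finset ℕ} (hs : s ⊆ Y k) (hc : s.card = k - 1)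
    (hs' : s' ⊆ Y k) (hc' : s'.card = k - 1) (h : eA hk e s = eA hk e s') : s = s' := by
  have h2 : (e (Av hk s hs hc)).1 = (e (Av hk s' hs' hc')).1 := by
    rw [← eA_insert hk e hl hs hc, ← eA_insert hk e hl hs' hc', h]
  have h3 := e.injective (Subtype.ext h2)
  have h4 : insert 1 s = insert 1 s' := congrArg Subtype.val h3
  have : (insert 1 s).erase 1 = (insert 1 s').erase 1 := by rw [h4]
  rwa [Finset.erase_insert (fun h => one_not_mem_Y (hs h)),
    Finset.erase_insert (fun h => one_not_mem_Y (hs' h))] at this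

lemma eA_sub_eB (he : e ∈ graphAut (HS (2*k) k)) (hl : ∀ v : Vx k, 1 ∈ (e v).1 ↔ 1 ∈ v.1) {s t : Finset ℕ} (hs : s ⊆ Y k) (hc : s.card = k - 1)
    (ht : t ⊆ Y k) (hct : t.card = k) (hst : s ⊆ t) : eA hk e s ⊆ eB e t := by
  have hadj : (HS (2*k) k).Adj (Av hk s hs hc) (Bv t ht hct) := by
    rw [adj_iff hk (Av_mem1 hk hs hc) (Bv_not1 ht hct), Av_erase]
    exact hst
  have hadj2 := (he _ _).mpr hadj
  rw [adj_iff hk (eA_mem1 hk e hl hs hc) (eB_not1 e hl ht hct)] at hadj2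
  rw [eA_def hk e hs hc, eB_def e ht hct]
  exact hadj2

-- proofs about erase
lemma erase_sub_Y {t : Finset ℕ} (ht : t ⊆ Y k) (y : ℕ) : t.erase y ⊆ Y k :=
  fun x hx => ht (Finset.erase_subset _ _ hx)

lemma erase_card_k {t : Finset ℕ} (hct : t.card = k) {y : ℕ} (hy : y ∈ t) :
    (t.erase y).card = k - 1 := by rw [Finset.card_erase_of_mem hy, hct]

/-- the new point of `eB t` not in `eA (t.erase y)` -/
noncomputable def rpt (t : Finset ℕ) (y : ℕ) : ℕ :=
  sInf {x | x ∈ eB e t \ eA hk e (t.erase y)}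

lemma rset_card (he : e ∈ graphAut (HS (2*k) k)) (hl : ∀ v : Vx k, 1 ∈ (e v).1 ↔ 1 ∈ v.1) {t : Finset ℕ} (ht : t ⊆ Y k) (hct : t.card = k) {y : ℕ} (hy : y ∈ t) :
    (eB e t \ eA hk e (t.erase y)).card = 1 := by
  rw [Finset.card_sdiff_of_subset (eA_sub_eB hk e he hl (erase_sub_Y ht y) (erase_card_k hct hy) ht hct
    (Finset.erase_subset _ _)), eB_card e hl ht hct,
    eA_card hk e hl (erase_sub_Y ht y) (erase_card_k hct hy)]
  omega

lemma rpt_mem (he : e ∈ graphAut (HS (2*k) k)) (hl : ∀ v : Vx k, 1 ∈ (e v).1 ↔ 1 ∈ v.1) {t : Finset ℕ} (ht : t ⊆ Y k) (hct : t.card = k) {y : ℕ} (hy : y ∈ t) :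
    rpt hk e t y ∈ eB e t \ eA hk e (t.erase y) := by
  have hne : (eB e t \ eA hk e (t.erase y)).Nonempty :=
    Finset.card_pos.mp (by rw [rset_card hk e he hl ht hct hy]; omega)
  obtain ⟨x, hx⟩ := hne
  exact Nat.sInf_mem (⟨x, hx⟩ : {x | x ∈ eB e t \ eA hk e (t.erase y)}.Nonempty)

lemma rpt_unique (he : e ∈ graphAut (HS (2*k) k)) (hl : ∀ v : Vx k, 1 ∈ (e v).1 ↔ 1 ∈ v.1) {t : Finset ℕ} (ht : t ⊆ Y k) (hct : t.card = k) {y : ℕ} (hy : y ∈ t)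
    {x : ℕ} (hx : x ∈ eB e t \ eA hk e (t.erase y)) : x = rpt hk e t y :=
  Finset.card_le_one.mp (le_of_eq (rset_card hk e he hl ht hct hy)) x hx _
    (rpt_mem hk e he hl ht hct hy)

lemma rpt_mem_eB (he : e ∈ graphAut (HS (2*k) k)) (hl : ∀ v : Vx k, 1 ∈ (e v).1 ↔ 1 ∈ v.1) {t : Finset ℕ} (ht : t ⊆ Y k) (hct : t.card = k) {y : ℕ} (hy : y ∈ t) :
    rpt hk e t y ∈ eB e t := (Finset.mem_sdiff.mp (rpt_mem hk e he hl ht hct hy)).1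

lemma rpt_not_eA (he : e ∈ graphAut (HS (2*k) k)) (hl : ∀ v : Vx k, 1 ∈ (e v).1 ↔ 1 ∈ v.1) {t : Finset ℕ} (ht : t ⊆ Y k) (hct : t.card = k) {y : ℕ} (hy : y ∈ t) :
    rpt hk e t y ∉ eA hk e (t.erase y) := (Finset.mem_sdiff.mp (rpt_mem hk e he hl ht hct hy)).2

lemma eA_erase_eq (he : e ∈ graphAut (HS (2*k) k)) (hl : ∀ v : Vx k, 1 ∈ (e v).1 ↔ 1 ∈ v.1) {t : Finset ℕ} (ht : t ⊆ Y k) (hct : t.card = k) {y : ℕ} (hy : y ∈ t) :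
    eA hk e (t.erase y) = (eB e t).erase (rpt hk e t y) := by
  apply Finset.eq_of_subset_of_card_le
  · intro x hx
    exact Finset.mem_erase.mpr ⟨fun hh => (rpt_not_eA hk e he hl ht hct hy) (hh ▸ hx),
      eA_sub_eB hk e he hl (erase_sub_Y ht y) (erase_card_k hct hy) ht hct
        (Finset.erase_subset _ _) hx⟩
  · rw [Finset.card_erase_of_mem (rpt_mem_eB hk e he hl ht hct hy),
      eB_card e hl ht hct, eA_card hk e hl (erase_sub_Y ht y) (erase_card_k hct hy)]

lemma rpt_inj (he : e ∈ graphAut (HS (2*k) k)) (hl : ∀ v : Vx k, 1 ∈ (e v).1 ↔ 1 ∈ v.1) {t : Finset ℕ} (ht : t ⊆ Y k) (hct : t.card = k) {y y' : ℕ}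
    (hy : y ∈ t) (hy' : y' ∈ t) (h : rpt hk e t y = rpt hk e t y') : y = y' := by
  have h1 : eA hk e (t.erase y) = eA hk e (t.erase y') := by
    rw [eA_erase_eq hk e he hl ht hct hy, eA_erase_eq hk e he hl ht hct hy', h]
  have h2 := eA_inj hk e hl (erase_sub_Y ht y) (erase_card_k hct hy)
    (erase_sub_Y ht y') (erase_card_k hct hy') h1
  exact (Finset.erase_inj t hy).mp h2

end Constr
end NX

namespace NX
section Constr2
variable {k : ℕ} (hk : 3 ≤ k) (e : Equiv.Perm (Vx k))

lemma rpt_adj (he : e ∈ graphAut (HS (2*k) k)) (hl : ∀ v : Vx k, 1 ∈ (e v).1 ↔ 1 ∈ v.1)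
    {t t' : Finset ℕ} (ht : t ⊆ Y k) (hct : t.card = k)
    (ht' : t' ⊆ Y k) (hct' : t'.card = k) (hne : t ≠ t')
    (hcap : (t ∩ t').card = k - 1) {y : ℕ} (hy : y ∈ t) (hy' : y ∈ t') :
    rpt hk e t y = rpt hk e t' y := by
  set C := t ∩ t' with hC
  have hCs : C ⊆ Y k := fun x hx => ht (Finset.mem_inter.mp hx).1
  have hCc : C.card = k - 1 := hcap
  have h_eBne : eB e t ≠ eB e t' := fun h => hne (eB_inj e ht hct ht' hct' h)
  -- eA C = eB t ∩ eB t'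
  have hACcap : eA hk e C = eB e t ∩ eB e t' := by
    apply Finset.eq_of_subset_of_card_le
    · exact Finset.subset_inter
        (eA_sub_eB hk e he hl hCs hCc ht hct Finset.inter_subset_left)
        (eA_sub_eB hk e he hl hCs hCc ht' hct' Finset.inter_subset_right)
    · by_contra hcon
      push_neg at hcon
      rw [eA_card hk e hl hCs hCc] at hcon
      have hklee : k ≤ (eB e t ∩ eB e t').card := by omega
      have h1 : eB e t ∩ eB e t' = eB e t :=
        Finset.eq_of_subset_of_card_le Finset.inter_subset_left
          (by rw [eB_card e hl ht hct]; exact hklee)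
      have h2 : eB e t ⊆ eB e t' := by rw [← h1]; exact Finset.inter_subset_right
      exact h_eBne (Finset.eq_of_subset_of_card_le h2
        (by rw [eB_card e hl ht hct, eB_card e hl ht' hct']))
  -- the element a with t \ t' = {a}
  have hsd : (t \ t').card = 1 := by
    have h2 := Finset.card_sdiff_add_card_inter t t'
    have h3 : (t ∩ t').card = k - 1 := hcap
    omega
  obtain ⟨a, hta⟩ := Finset.card_eq_one.mp hsd
  have haw : a ∈ t := by
    have : a ∈ t \ t' := hta ▸ Finset.mem_singleton_self a
    exact (Finset.mem_sdiff.mp this).1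
  have haw' : a ∉ t' := by
    have : a ∈ t \ t' := hta ▸ Finset.mem_singleton_self a
    exact (Finset.mem_sdiff.mp this).2
  have herase_a : t.erase a = C := by
    ext x
    simp only [Finset.mem_erase, hC, Finset.mem_inter]
    constructor
    · rintro ⟨hxa, hxt⟩
      refine ⟨hxt, ?_⟩
      by_contra hxt'
      have : x ∈ t \ t' := Finset.mem_sdiff.mpr ⟨hxt, hxt'⟩
      rw [hta, Finset.mem_singleton] at this
      exact hxa this
    · rintro ⟨hxt, hxt'⟩
      exact ⟨fun h => haw' (h ▸ hxt'), hxt⟩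
  -- symmetric
  have hsd' : (t' \ t).card = 1 := by rw [Finset.card_sdiff_comm (by omega)]; exact hsd
  obtain ⟨a', hta'⟩ := Finset.card_eq_one.mp hsd'
  have haw2 : a' ∈ t' := by
    have : a' ∈ t' \ t := hta' ▸ Finset.mem_singleton_self a'
    exact (Finset.mem_sdiff.mp this).1
  have haw2' : a' ∉ t := by
    have : a' ∈ t' \ t := hta' ▸ Finset.mem_singleton_self a'
    exact (Finset.mem_sdiff.mp this).2
  have herase_a' : t'.erase a' = C := by
    ext x
    simp only [Finset.mem_erase, hC, Finset.mem_inter]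
    constructor
    · rintro ⟨hxa, hxt⟩
      refine ⟨?_, hxt⟩
      by_contra hxt'
      have : x ∈ t' \ t := Finset.mem_sdiff.mpr ⟨hxt, hxt'⟩
      rw [hta', Finset.mem_singleton] at this
      exact hxa this
    · rintro ⟨hxt, hxt'⟩
      exact ⟨fun h => haw2' (h ▸ hxt), hxt'⟩
  have hya : y ≠ a := fun h => haw' (h ▸ hy')
  have hya' : y ≠ a' := fun h => haw2' (h ▸ hy)
  set α := rpt hk e t a with hα
  set α' := rpt hk e t' a' with hα'
  have hαe : eA hk e C = (eB e t).erase α := by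
    rw [← herase_a]; exact eA_erase_eq hk e he hl ht hct haw
  have hαe' : eA hk e C = (eB e t').erase α' := by
    rw [← herase_a']; exact eA_erase_eq hk e he hl ht' hct' haw2
  have hαmem : α ∈ eB e t := rpt_mem_eB hk e he hl ht hct haw
  have hα'mem : α' ∈ eB e t' := rpt_mem_eB hk e he hl ht' hct' haw2
  have hαnotC : α ∉ eA hk e C := by rw [hαe]; exact Finset.notMem_erase _ _
  have hα'notC : α' ∉ eA hk e C := by rw [hαe']; exact Finset.notMem_erase _ _
  have hαnot' : α ∉ eB e t' := fun h =>
    hαnotC (hACcap ▸ Finset.mem_inter.mpr ⟨hαmem, h⟩)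
  have hα'notT : α' ∉ eB e t := fun h =>
    hα'notC (hACcap ▸ Finset.mem_inter.mpr ⟨h, hα'mem⟩)
  have hαα' : α ≠ α' := fun h => hαnot' (h ▸ hα'mem)
  set cy := rpt hk e t y with hcy
  set cy' := rpt hk e t' y with hcy'
  have hye : eA hk e (t.erase y) = (eB e t).erase cy := eA_erase_eq hk e he hl ht hct hy
  have hye' : eA hk e (t'.erase y) = (eB e t').erase cy' := eA_erase_eq hk e he hl ht' hct' hy'
  -- α belongs to eA (t.erase y)
  have hαin : α ∈ eA hk e (t.erase y) := by
    by_contra hno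
    have hs1 : eA hk e (t.erase y) ⊆ eA hk e C := by
      rw [hαe]
      intro x hx
      refine Finset.mem_erase.mpr ⟨fun h => hno (h ▸ hx), ?_⟩
      exact eA_sub_eB hk e he hl (erase_sub_Y ht y) (erase_card_k hct hy) ht hct
        (Finset.erase_subset _ _) hx
    have heq : eA hk e (t.erase y) = eA hk e C :=
      Finset.eq_of_subset_of_card_le hs1
        (by rw [eA_card hk e hl hCs hCc,
          eA_card hk e hl (erase_sub_Y ht y) (erase_card_k hct hy)])
    have := eA_inj hk e hl (erase_sub_Y ht y) (erase_card_k hct hy) hCs hCc heq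
    rw [← herase_a] at this
    exact hya ((Finset.erase_inj t hy).mp this)
  have hα'in : α' ∈ eA hk e (t'.erase y) := by
    by_contra hno
    have hs1 : eA hk e (t'.erase y) ⊆ eA hk e C := by
      rw [hαe']
      intro x hx
      refine Finset.mem_erase.mpr ⟨fun h => hno (h ▸ hx), ?_⟩
      exact eA_sub_eB hk e he hl (erase_sub_Y ht' y) (erase_card_k hct' hy') ht' hct'
        (Finset.erase_subset _ _) hx
    have heq : eA hk e (t'.erase y) = eA hk e C :=
      Finset.eq_of_subset_of_card_le hs1
        (by rw [eA_card hk e hl hCs hCc,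
          eA_card hk e hl (erase_sub_Y ht' y) (erase_card_k hct' hy')])
    have := eA_inj hk e hl (erase_sub_Y ht' y) (erase_card_k hct' hy') hCs hCc heq
    rw [← herase_a'] at this
    exact hya' ((Finset.erase_inj t' hy').mp this)
  have hcyC : cy ∈ eA hk e C := by
    have h1 : cy ∈ eB e t := rpt_mem_eB hk e he hl ht hct hy
    have h2 : cy ≠ α := by
      intro h
      apply rpt_not_eA hk e he hl ht hct hy
      rw [← hcy, h]
      exact hαin
    rw [hαe]
    exact Finset.mem_erase.mpr ⟨h2, h1⟩
  have hcy'C : cy' ∈ eA hk e C := by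
    have h1 : cy' ∈ eB e t' := rpt_mem_eB hk e he hl ht' hct' hy'
    have h2 : cy' ≠ α' := by
      intro h
      apply rpt_not_eA hk e he hl ht' hct' hy'
      rw [← hcy', h]
      exact hα'in
    rw [hαe']
    exact Finset.mem_erase.mpr ⟨h2, h1⟩
  -- the big k-set T
  by_contra hcc
  set T := (t ∪ t').erase y with hT
  have hyu : y ∈ t ∪ t' := Finset.mem_union_left _ hy
  have hTsub : T ⊆ Y k := by
    intro x hx
    rcases Finset.mem_union.mp (Finset.erase_subset _ _ hx) with h | h
    · exact ht h
    · exact ht' h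
  have hTcard : T.card = k := by
    have hu := Finset.card_union_add_card_inter t t'
    have hcap2 : (t ∩ t').card = k - 1 := hcap
    have hTc : T.card = (t ∪ t').card - 1 := by rw [hT, Finset.card_erase_of_mem hyu]
    omega
  have h1T : eA hk e (t.erase y) ⊆ eB e T :=
    eA_sub_eB hk e he hl (erase_sub_Y ht y) (erase_card_k hct hy) hTsub hTcard
      (Finset.erase_subset_erase _ Finset.subset_union_left)
  have h2T : eA hk e (t'.erase y) ⊆ eB e T :=
    eA_sub_eB hk e he hl (erase_sub_Y ht' y) (erase_card_k hct' hy') hTsub hTcard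
      (Finset.erase_subset_erase _ Finset.subset_union_right)
  have hbig : insert α (insert α' (eA hk e C)) ⊆ eB e T := by
    intro x hx
    rcases Finset.mem_insert.mp hx with h | h
    · exact h ▸ h1T hαin
    rcases Finset.mem_insert.mp h with h2 | h2
    · exact h2 ▸ h2T hα'in
    · by_cases hxc : x = cy
      · -- x = cy ≠ cy', use t' side
        apply h2T
        rw [hye']
        refine Finset.mem_erase.mpr ⟨fun hh => hcc (hxc ▸ hh ▸ rfl), ?_⟩
        exact (Finset.mem_inter.mp (hACcap ▸ h2)).2
      · apply h1T
        rw [hye]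
        exact Finset.mem_erase.mpr ⟨hxc, (Finset.mem_inter.mp (hACcap ▸ h2)).1⟩
  have hcard_big : (insert α (insert α' (eA hk e C))).card = k + 1 := by
    rw [Finset.card_insert_of_notMem (by
      intro h
      rcases Finset.mem_insert.mp h with h | h
      · exact hαα' h
      · exact hαnotC h),
      Finset.card_insert_of_notMem hα'notC, eA_card hk e hl hCs hCc]
    omega
  have := Finset.card_le_card hbig
  rw [hcard_big, eB_card e hl hTsub hTcard] at this
  omega

end Constr2
end NX

namespace NX
section Constr3
variable {k : ℕ} (hk : 3 ≤ k) (e : Equiv.Perm (Vx k))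

lemma rpt_eq (he : e ∈ graphAut (HS (2*k) k)) (hl : ∀ v : Vx k, 1 ∈ (e v).1 ↔ 1 ∈ v.1) :
    ∀ (n : ℕ) (t t' : Finset ℕ), t ⊆ Y k → t.card = k → t' ⊆ Y k → t'.card = k →
    ∀ {y : ℕ}, y ∈ t → y ∈ t' → (t' \ t).card = n → rpt hk e t y = rpt hk e t' y := by
  intro n
  induction n using Nat.strong_induction_on with
  | _ n ih =>
    intro t t' ht hct ht' hct' y hy hy' hn
    rcases Nat.eq_zero_or_pos n with h0 | hpos
    · subst h0
      have hsub : t' ⊆ t := by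
        rw [← Finset.sdiff_eq_empty_iff_subset]
        exact Finset.card_eq_zero.mp hn
      have heq : t' = t := Finset.eq_of_subset_of_card_le hsub (by omega)
      subst heq
      rfl
    · obtain ⟨b, hb⟩ := Finset.card_pos.mp (hn ▸ hpos)
      rcases Finset.mem_sdiff.mp hb with ⟨hbt', hbt⟩
      have hcomm : (t \ t').card = n := by
        rw [Finset.card_sdiff_comm (by omega)]; exact hn
      obtain ⟨a, ha⟩ := Finset.card_pos.mp (hcomm ▸ hpos)
      rcases Finset.mem_sdiff.mp ha with ⟨hat, hat'⟩
      have hay : a ≠ y := fun h => hat' (h ▸ hy')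
      set t'' := insert b (t.erase a) with ht''def
      have ht''sub : t'' ⊆ Y k := by
        intro x hx
        rcases Finset.mem_insert.mp hx with h | h
        · exact h ▸ ht' hbt'
        · exact ht (Finset.erase_subset _ _ h)
      have hbne : b ∉ t.erase a := fun h => hbt (Finset.erase_subset _ _ h)
      have ht''card : t''.card = k := by
        rw [ht''def, Finset.card_insert_of_notMem hbne, Finset.card_erase_of_mem hat]
        omega
      have hyt'' : y ∈ t'' :=
        Finset.mem_insert_of_mem (Finset.mem_erase.mpr ⟨fun h => hay h.symm, hy⟩)
      have htne : t ≠ t'' := fun h => hbt (h ▸ Finset.mem_insert_self b _)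
      have hcapt : (t ∩ t'').card = k - 1 := by
        have : t ∩ t'' = t.erase a := by
          ext x
          simp only [Finset.mem_inter, ht''def, Finset.mem_insert, Finset.mem_erase]
          constructor
          · rintro ⟨hxt, h | h⟩
            · exact absurd (h ▸ hxt) hbt
            · exact ⟨h.1, hxt⟩
          · rintro ⟨hxa, hxt⟩
            exact ⟨hxt, Or.inr ⟨hxa, hxt⟩⟩
        rw [this, Finset.card_erase_of_mem hat, hct]
      have step1 : rpt hk e t y = rpt hk e t'' y :=
        rpt_adj hk e he hl ht hct ht''sub ht''card htne hcapt hy hyt''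
      have hlt : (t' \ t'').card < n := by
        have hsub2 : t' \ t'' ⊆ (t' \ t).erase b := by
          intro x hx
          rcases Finset.mem_sdiff.mp hx with ⟨hx1, hx2⟩
          rw [ht''def] at hx2
          have hx2' : ¬(x = b ∨ (x ≠ a ∧ x ∈ t)) := by
            simpa [Finset.mem_insert, Finset.mem_erase] using hx2
          push_neg at hx2'
          have hxa : x ≠ a := fun h => hat' (h ▸ hx1)
          exact Finset.mem_erase.mpr ⟨hx2'.1,
            Finset.mem_sdiff.mpr ⟨hx1, fun hxt => (hx2'.2 hxa hxt).elim⟩⟩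
        calc (t' \ t'').card ≤ ((t' \ t).erase b).card := Finset.card_le_card hsub2
          _ = n - 1 := by rw [Finset.card_erase_of_mem hb, hn]
          _ < n := by omega
      have step2 : rpt hk e t'' y = rpt hk e t' y :=
        ih _ hlt t'' t' ht''sub ht''card ht' hct' hyt'' hy' rfl
      rw [step1, step2]

lemma exists_cont (hk' : 3 ≤ k) {y : ℕ} (h : y ∈ Y k) :
    ∃ t, t ⊆ Y k ∧ t.card = k ∧ y ∈ t := by
  obtain ⟨u, hu1, hu2, hu3⟩ := Finset.exists_subsuperset_card_eq (n := k)
    (Finset.singleton_subset_iff.mpr h) (by simp; omega) (by rw [Ycard]; omega)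
  exact ⟨u, hu2, hu3, hu1 (Finset.mem_singleton_self y)⟩

/-- the induced point map -/
noncomputable def rfun (y : ℕ) : ℕ :=
  if h : y ∈ Y k ∧ 3 ≤ k then rpt hk e (exists_cont h.2 h.1).choose y else y

lemma rfun_eq (he : e ∈ graphAut (HS (2*k) k)) (hl : ∀ v : Vx k, 1 ∈ (e v).1 ↔ 1 ∈ v.1)
    {t : Finset ℕ} (ht : t ⊆ Y k) (hct : t.card = k) {y : ℕ} (hy : y ∈ t) :
    rfun hk e y = rpt hk e t y := by
  have hyY : y ∈ Y k := ht hy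
  rw [rfun, dif_pos ⟨hyY, hk⟩]
  obtain ⟨h1, h2, h3⟩ := (exists_cont (k := k) hk hyY).choose_spec
  exact rpt_eq hk e he hl _ _ t h1 h2 ht hct h3 hy rfl

lemma eB_image (he : e ∈ graphAut (HS (2*k) k)) (hl : ∀ v : Vx k, 1 ∈ (e v).1 ↔ 1 ∈ v.1)
    {t : Finset ℕ} (ht : t ⊆ Y k) (hct : t.card = k) :
    eB e t = t.image (rfun hk e) := by
  have hsub : t.image (rfun hk e) ⊆ eB e t := by
    intro x hx
    obtain ⟨y, hy, hxy⟩ := Finset.mem_image.mp hx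
    rw [← hxy, rfun_eq hk e he hl ht hct hy]
    exact rpt_mem_eB hk e he hl ht hct hy
  have hinj : Set.InjOn (rfun hk e) t := by
    intro y hy y' hy' hyy
    rw [rfun_eq hk e he hl ht hct hy, rfun_eq hk e he hl ht hct hy'] at hyy
    exact rpt_inj hk e he hl ht hct hy hy' hyy
  have hcard : (t.image (rfun hk e)).card = k := by
    rw [Finset.card_image_of_injOn hinj, hct]
  exact (Finset.eq_of_subset_of_card_le hsub (by rw [hcard, eB_card e hl ht hct])).symm

lemma rfun_mem_Y (he : e ∈ graphAut (HS (2*k) k)) (hl : ∀ v : Vx k, 1 ∈ (e v).1 ↔ 1 ∈ v.1)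
    {y : ℕ} (hy : y ∈ Y k) : rfun hk e y ∈ Y k := by
  obtain ⟨t, ht, hct, hyt⟩ := exists_cont hk hy
  rw [rfun_eq hk e he hl ht hct hyt]
  exact eB_sub e hl ht hct (rpt_mem_eB hk e he hl ht hct hyt)

lemma rfun_injective (he : e ∈ graphAut (HS (2*k) k))
    (hl : ∀ v : Vx k, 1 ∈ (e v).1 ↔ 1 ∈ v.1) : Function.Injective (rfun hk e) := by
  intro y y' hyy
  by_cases hy : y ∈ Y k <;> by_cases hy' : y' ∈ Y k
  · -- both in Y: find common t
    have hpair : ({y, y'} : Finset ℕ) ⊆ Y k := by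
      intro x hx
      rcases Finset.mem_insert.mp hx with h | h
      · exact h ▸ hy
      · exact (Finset.mem_singleton.mp h) ▸ hy'
    obtain ⟨u, hu1, hu2, hu3⟩ := Finset.exists_subsuperset_card_eq (n := k) hpair
      (by
        calc ({y, y'} : Finset ℕ).card ≤ 2 := Finset.card_insert_le _ _ |>.trans (by simp)
        _ ≤ k := by omega)
      (by rw [Ycard]; omega)
    have hyu : y ∈ u := hu1 (Finset.mem_insert_self _ _)
    have hy'u : y' ∈ u := hu1 (Finset.mem_insert_of_mem (Finset.mem_singleton_self _))
    rw [rfun_eq hk e he hl hu2 hu3 hyu, rfun_eq hk e he hl hu2 hu3 hy'u] at hyy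
    exact rpt_inj hk e he hl hu2 hu3 hyu hy'u hyy
  · exfalso
    apply hy'
    have h1 : rfun hk e y' = y' := by rw [rfun, dif_neg (by tauto)]
    rw [← h1, ← hyy]
    exact rfun_mem_Y hk e he hl hy
  · exfalso
    apply hy
    have h1 : rfun hk e y = y := by rw [rfun, dif_neg (by tauto)]
    rw [← h1, hyy]
    exact rfun_mem_Y hk e he hl hy'
  · rw [rfun, dif_neg (by tauto), rfun, dif_neg (by tauto)] at hyy
    exact hyy

lemma rfun_surjective (he : e ∈ graphAut (HS (2*k) k))
    (hl : ∀ v : Vx k, 1 ∈ (e v).1 ↔ 1 ∈ v.1) : Function.Surjective (rfun hk e) := by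
  intro x
  by_cases hx : x ∈ Y k
  · have himg : (Y k).image (rfun hk e) = Y k := by
      apply Finset.eq_of_subset_of_card_le
      · intro z hz
        obtain ⟨y, hy, hzy⟩ := Finset.mem_image.mp hz
        exact hzy ▸ rfun_mem_Y hk e he hl hy
      · rw [Finset.card_image_of_injective _ (rfun_injective hk e he hl)]
    obtain ⟨y, hy, hxy⟩ := Finset.mem_image.mp (himg ▸ hx)
    exact ⟨y, hxy⟩
  · exact ⟨x, by rw [rfun, dif_neg (by tauto)]⟩

lemma exists_rho (hk2 : 3 ≤ k) (he : e ∈ graphAut (HS (2*k) k))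
    (hl : ∀ v : Vx k, 1 ∈ (e v).1 ↔ 1 ∈ v.1) :
    ∃ ρ : Equiv.Perm ℕ, (∀ x, x ∉ Y k → ρ x = x) ∧
      ∀ w : Vx k, 1 ∉ w.1 → (e w).1 = w.1.image ρ := by
  refine ⟨Equiv.ofBijective (rfun hk2 e) ⟨rfun_injective hk2 e he hl,
    rfun_surjective hk2 e he hl⟩, ?_, ?_⟩
  · intro x hx
    show rfun hk2 e x = x
    rw [rfun, dif_neg (by tauto)]
  · intro w hw
    have hBv : Bv w.1 (B_sub hw) w.2.2 = w := Subtype.ext rfl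
    have h1 : (e w).1 = eB e w.1 := by rw [eB_def e (B_sub hw) w.2.2, hBv]
    rw [h1, eB_image hk2 e he hl (B_sub hw) w.2.2]
    rfl

end Constr3
end NX

namespace NX
variable {k : ℕ}

def autP (e : Equiv.Perm (Vx k)) : Prop :=
  3 ≤ k ∧ e ∈ graphAut (HS (2*k) k) ∧ (∀ v : Vx k, 1 ∈ (e v).1 ↔ 1 ∈ v.1)

open Classical in
noncomputable def rho (e : Equiv.Perm (Vx k)) : Equiv.Perm ℕ :=
  if h : autP e then (exists_rho e h.1 h.2.1 h.2.2).choose else 1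

lemma rho_out {e : Equiv.Perm (Vx k)} (h : autP e) : ∀ x ∉ Y k, rho e x = x := by
  rw [rho, dif_pos h]
  exact fun x hx => (exists_rho e h.1 h.2.1 h.2.2).choose_spec.1 x hx

lemma rho_B {e : Equiv.Perm (Vx k)} (h : autP e) :
    ∀ w : Vx k, 1 ∉ w.1 → (e w).1 = w.1.image (rho e) := by
  rw [rho, dif_pos h]
  exact (exists_rho e h.1 h.2.1 h.2.2).choose_spec.2

lemma rho_B_to_A {e : Equiv.Perm (Vx k)} (h : autP e) (ρ : Equiv.Perm ℕ)
    (hB : ∀ w : Vx k, 1 ∉ w.1 → (e w).1 = w.1.image ρ) :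
    ∀ v : Vx k, 1 ∈ v.1 → (e v).1 = insert 1 ((v.1.erase 1).image ρ) := by
  obtain ⟨hk, he, hl⟩ := h
  intro v hv
  have hS : v.1.erase 1 ⊆ Y k := A_erase_sub
  have hScard : (v.1.erase 1).card = k - 1 := A_erase_card hv
  have h2 : 1 < (Y k \ v.1.erase 1).card := by
    rw [Finset.card_sdiff_of_subset hS, Ycard, hScard]; omega
  obtain ⟨z1, hz1, z2, hz2, hzz⟩ := Finset.one_lt_card.mp h2
  rcases Finset.mem_sdiff.mp hz1 with ⟨hz1Y, hz1S⟩
  rcases Finset.mem_sdiff.mp hz2 with ⟨hz2Y, hz2S⟩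
  have mkw : ∀ z, z ∈ Y k → z ∉ v.1.erase 1 →
      (insert z (v.1.erase 1)) ⊆ Y k ∧ (insert z (v.1.erase 1)).card = k := by
    intro z hzY hzS
    constructor
    · intro x hx
      rcases Finset.mem_insert.mp hx with hx | hx
      · exact hx ▸ hzY
      · exact hS hx
    · rw [Finset.card_insert_of_notMem hzS, hScard]; omega
  obtain ⟨hw1s, hw1c⟩ := mkw z1 hz1Y hz1S
  obtain ⟨hw2s, hw2c⟩ := mkw z2 hz2Y hz2S
  set w1 : Vx k := Bv _ hw1s hw1c
  set w2 : Vx k := Bv _ hw2s hw2c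
  have hadj : ∀ (w : Vx k) (hw : 1 ∉ w.1), v.1.erase 1 ⊆ w.1 →
      (e v).1.erase 1 ⊆ w.1.image ρ := by
    intro w hw hsub
    have h1 : (HS (2*k) k).Adj v w := (adj_iff hk hv hw).mpr hsub
    have h2 := (he _ _).mpr h1
    have h3 : 1 ∈ (e v).1 := (hl v).mpr hv
    have h4 : 1 ∉ (e w).1 := fun hh => hw ((hl w).mp hh)
    have h5 := (adj_iff hk h3 h4).mp h2
    rwa [hB w hw] at h5
  have hsub1 := hadj w1 (Bv_not1 hw1s hw1c) (Finset.subset_insert _ _)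
  have hsub2 := hadj w2 (Bv_not1 hw2s hw2c) (Finset.subset_insert _ _)
  have himg : ∀ z, (insert z (v.1.erase 1)).image ρ = insert (ρ z) ((v.1.erase 1).image ρ) :=
    fun z => Finset.image_insert _ _ _
  have hkey : (e v).1.erase 1 ⊆ (v.1.erase 1).image ρ := by
    intro x hx
    have h1 := hsub1 hx
    have h2 := hsub2 hx
    rw [show w1.1 = insert z1 (v.1.erase 1) from rfl, himg] at h1
    rw [show w2.1 = insert z2 (v.1.erase 1) from rfl, himg] at h2
    rcases Finset.mem_insert.mp h1 with h1' | h1'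
    · rcases Finset.mem_insert.mp h2 with h2' | h2'
      · exact absurd (ρ.injective (h1' ▸ h2' ▸ rfl : ρ z1 = ρ z2)) hzz
      · exact h2'
    · exact h1'
  have h3 : 1 ∈ (e v).1 := (hl v).mpr hv
  have heq : (e v).1.erase 1 = (v.1.erase 1).image ρ := by
    apply Finset.eq_of_subset_of_card_le hkey
    rw [Finset.card_image_of_injective _ ρ.injective, hScard, A_erase_card h3]
  rw [← Finset.insert_erase h3, heq]

lemma rho_A {e : Equiv.Perm (Vx k)} (h : autP e) :
    ∀ v : Vx k, 1 ∈ v.1 → (e v).1 = insert 1 ((v.1.erase 1).image (rho e)) :=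
  rho_B_to_A h (rho e) (rho_B h)

lemma rho_unique {e : Equiv.Perm (Vx k)} (h : autP e) (ρ ρ' : Equiv.Perm ℕ)
    (h1 : ∀ x ∉ Y k, ρ x = x) (hB : ∀ w : Vx k, 1 ∉ w.1 → (e w).1 = w.1.image ρ)
    (h1' : ∀ x ∉ Y k, ρ' x = x) (hB' : ∀ w : Vx k, 1 ∉ w.1 → (e w).1 = w.1.image ρ') :
    ρ = ρ' := by
  obtain ⟨hk, he, hl⟩ := h
  apply Equiv.ext
  intro y
  by_cases hy : y ∈ Y k
  · -- two k-sets intersecting exactly in y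
    have hYe : k - 1 ≤ ((Y k).erase y).card := by
      rw [Finset.card_erase_of_mem hy, Ycard]; omega
    obtain ⟨s1, hs1sub, hs1c⟩ := Finset.exists_subset_card_eq hYe
    set s2 := (Y k).erase y \ s1 with hs2
    have hs2c : s2.card = k - 1 := by
      rw [hs2, Finset.card_sdiff_of_subset hs1sub, Finset.card_erase_of_mem hy, Ycard, hs1c]
      omega
    have hdisj : ∀ x, x ∈ s1 → x ∉ s2 := by
      intro x hx1 hx2
      exact (Finset.mem_sdiff.mp hx2).2 hx1
    have hys1 : y ∉ s1 := fun hh => Finset.notMem_erase y _ (hs1sub hh)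
    have hys2 : y ∉ s2 := fun hh => Finset.notMem_erase y _ (Finset.mem_sdiff.mp hh).1
    have mk : ∀ s : Finset ℕ, s ⊆ (Y k).erase y → s.card = k - 1 → y ∉ s →
        insert y s ⊆ Y k ∧ (insert y s).card = k := by
      intro s hssub hsc hys
      constructor
      · intro x hx
        rcases Finset.mem_insert.mp hx with hx | hx
        · exact hx ▸ hy
        · exact Finset.erase_subset _ _ (hssub hx)
      · rw [Finset.card_insert_of_notMem hys, hsc]; omega
    obtain ⟨ht1s, ht1c⟩ := mk s1 hs1sub hs1c hys1
    obtain ⟨ht2s, ht2c⟩ := mk s2 (Finset.sdiff_subset) hs2c hys2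
    have hinter : insert y s1 ∩ insert y s2 = {y} := by
      ext x
      simp only [Finset.mem_inter, Finset.mem_insert, Finset.mem_singleton]
      constructor
      · rintro ⟨h1'' | h1'', h2'' | h2''⟩
        · exact h1''
        · exact h1''
        · exact h2''
        · exact absurd h2'' (hdisj x h1'')
      · intro hx; exact ⟨Or.inl hx, Or.inl hx⟩
    set w1 : Vx k := Bv _ ht1s ht1c
    set w2 : Vx k := Bv _ ht2s ht2c
    have key : ∀ σ : Equiv.Perm ℕ, (∀ w : Vx k, 1 ∉ w.1 → (e w).1 = w.1.image σ) →
        (e w1).1 ∩ (e w2).1 = {σ y} := by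
      intro σ hBσ
      rw [hBσ w1 (Bv_not1 ht1s ht1c), hBσ w2 (Bv_not1 ht2s ht2c)]
      rw [show w1.1 = insert y s1 from rfl, show w2.1 = insert y s2 from rfl]
      rw [← Finset.image_inter _ _ σ.injective, hinter, Finset.image_singleton]
    have k1 := key ρ hB
    have k2 := key ρ' hB'
    rw [k1] at k2
    exact Finset.singleton_injective k2
  · rw [h1 y hy, h1' y hy]

lemma autP_mul {e f : Equiv.Perm (Vx k)} (he : autP e) (hf : autP f) : autP (e * f) := by
  refine ⟨he.1, (graphAut (HS (2*k) k)).mul_mem he.2.1 hf.2.1, ?_⟩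
  intro v
  rw [Equiv.Perm.mul_apply]
  rw [he.2.2 (f v), hf.2.2 v]

lemma autP_one (hk : 3 ≤ k) : autP (1 : Equiv.Perm (Vx k)) :=
  ⟨hk, (graphAut (HS (2*k) k)).one_mem, fun _ => Iff.rfl⟩

lemma autP_inv {e : Equiv.Perm (Vx k)} (he : autP e) : autP e⁻¹ := by
  refine ⟨he.1, (graphAut (HS (2*k) k)).inv_mem he.2.1, ?_⟩
  intro v
  have := he.2.2 (e⁻¹ v)
  rw [show e (e⁻¹ v) = v from e.apply_symm_apply v] at this
  exact this.symm

lemma rho_one (hk : 3 ≤ k) : rho (1 : Equiv.Perm (Vx k)) = 1 := by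
  apply rho_unique (autP_one hk) _ _ (rho_out (autP_one hk)) (rho_B (autP_one hk))
  · intro x _; rfl
  · intro w _
    simp

lemma rho_mul {e f : Equiv.Perm (Vx k)} (he : autP e) (hf : autP f) :
    rho (e * f) = rho e * rho f := by
  apply rho_unique (autP_mul he hf) _ _ (rho_out (autP_mul he hf)) (rho_B (autP_mul he hf))
  · intro x hx
    rw [Equiv.Perm.mul_apply, rho_out hf x hx, rho_out he x hx]
  · intro w hw
    have h1 : 1 ∉ (f w).1 := fun hh => hw ((hf.2.2 w).mp hh)
    rw [Equiv.Perm.mul_apply, rho_B he (f w) h1, rho_B hf w hw, Finset.image_image]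
    rfl

lemma rho_inv {e : Equiv.Perm (Vx k)} (he : autP e) : rho e⁻¹ = (rho e)⁻¹ := by
  have h1 : rho e * rho e⁻¹ = 1 := by
    rw [← rho_mul he (autP_inv he), mul_inv_cancel, rho_one he.1]
  exact (inv_eq_of_mul_eq_one_right h1).symm

lemma rho_mem_Y {e : Equiv.Perm (Vx k)} (he : autP e) {y : ℕ} (hy : y ∈ Y k) :
    rho e y ∈ Y k := by
  obtain ⟨t, ht, hct, hyt⟩ := exists_cont he.1 hy
  set w : Vx k := Bv t ht hct
  have h1 : 1 ∉ (e w).1 := fun hh => Bv_not1 ht hct ((he.2.2 w).mp hh)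
  have h2 : rho e y ∈ (e w).1 := by
    rw [rho_B he w (Bv_not1 ht hct)]
    exact Finset.mem_image_of_mem _ hyt
  exact B_sub h1 h2

end NX

namespace NX
variable {k : ℕ}

/-- invariant even-size subsets of the moved set of an involution -/
lemma invol_sub (τ : Equiv.Perm ℕ) (h2 : ∀ x, τ (τ x) = x) :
    ∀ (a : ℕ) (M : Finset ℕ), (∀ x ∈ M, τ x ∈ M ∧ τ x ≠ x) → 2*a ≤ M.card →
    ∃ s, s ⊆ M ∧ s.card = 2*a ∧ s.image τ = s := by
  intro a
  induction a with
  | zero => exact fun M _ _ => ⟨∅, Finset.empty_subset _, by simp, by simp⟩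
  | succ a ih =>
    intro M hM hc
    have hMne : M.Nonempty := Finset.card_pos.mp (by omega)
    obtain ⟨x, hx⟩ := hMne
    obtain ⟨hτx, hτxne⟩ := hM x hx
    set M' := M \ {x, τ x} with hM'
    have hM'inv : ∀ y ∈ M', τ y ∈ M' ∧ τ y ≠ y := by
      intro y hy
      rcases Finset.mem_sdiff.mp hy with ⟨hyM, hyp⟩
      simp only [Finset.mem_insert, Finset.mem_singleton, not_or] at hyp
      obtain ⟨hτy, hτyne⟩ := hM y hyM
      refine ⟨Finset.mem_sdiff.mpr ⟨hτy, ?_⟩, hτyne⟩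
      simp only [Finset.mem_insert, Finset.mem_singleton, not_or]
      constructor
      · intro h
        exact hyp.2 (by rw [← h2 y, h])
      · intro h
        exact hyp.1 (τ.injective h)
    have hcard' : M'.card = M.card - 2 := by
      rw [hM', Finset.card_sdiff_of_subset (by
        intro z hz
        rcases Finset.mem_insert.mp hz with h | h
        · exact h ▸ hx
        · exact (Finset.mem_singleton.mp h) ▸ hτx)]
      rw [Finset.card_insert_of_notMem (by simp [Ne.symm hτxne]), Finset.card_singleton]
    obtain ⟨s', hs'sub, hs'c, hs'inv⟩ := ih M' hM'inv (by omega)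
    refine ⟨s' ∪ {x, τ x}, ?_, ?_, ?_⟩
    · intro z hz
      rcases Finset.mem_union.mp hz with h | h
      · exact Finset.sdiff_subset (hs'sub h)
      · rcases Finset.mem_insert.mp h with h | h
        · exact h ▸ hx
        · exact (Finset.mem_singleton.mp h) ▸ hτx
    · rw [Finset.card_union_of_disjoint (by
        rw [Finset.disjoint_right]
        intro z hz
        intro hzs
        have := Finset.mem_sdiff.mp (hs'sub hzs)
        exact this.2 hz), hs'c,
        Finset.card_insert_of_notMem (by simp [Ne.symm hτxne]), Finset.card_singleton]
      ring
    · rw [Finset.image_union, hs'inv]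
      congr 1
      have : ({x, τ x} : Finset ℕ).image τ = {τ x, τ (τ x)} := by
        simp [Finset.image_insert, Finset.image_singleton]
      rw [this, h2 x]
      exact Finset.pair_comm _ _
/-- every involution moving only points of `Y` fixes some `k`-subset of `Y` -/
lemma invol_fix (hk : 3 ≤ k) (τ : Equiv.Perm ℕ) (hout : ∀ x ∉ Y k, τ x = x)
    (hY : ∀ y ∈ Y k, τ y ∈ Y k) (h2 : τ * τ = 1) (hne : τ ≠ 1) :
    ∃ s, s ⊆ Y k ∧ s.card = k ∧ s.image τ = s := by
  classical
  have h2' : ∀ x, τ (τ x) = x := fun x => by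
    have := congrArg (fun σ : Equiv.Perm ℕ => σ x) h2
    simpa using this
  set M := (Y k).filter (fun x => τ x ≠ x) with hM
  have hMY : M ⊆ Y k := Finset.filter_subset _ _
  have hMinv : ∀ x ∈ M, τ x ∈ M ∧ τ x ≠ x := by
    intro x hx
    rcases Finset.mem_filter.mp hx with ⟨hxY, hxm⟩
    refine ⟨Finset.mem_filter.mpr ⟨hY x hxY, ?_⟩, hxm⟩
    rw [h2' x]
    exact fun h => hxm h.symm
  set t := M.card with ht
  -- t is even
  have hteven : 2 * (t / 2) = t := by
    rcases Nat.even_or_odd t with he | ho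
    · obtain ⟨m, hm⟩ := he; omega
    · exfalso
      obtain ⟨m, hm⟩ := ho
      obtain ⟨s, hssub, hsc, hsinv⟩ := invol_sub τ h2' (t/2) M hMinv (by have := ht; omega)
      have hcd : (M \ s).card = 1 := by
        rw [Finset.card_sdiff_of_subset hssub, hsc]
        omega
      obtain ⟨z, hz⟩ := Finset.card_eq_one.mp hcd
      have hzmem : z ∈ M \ s := hz ▸ Finset.mem_singleton_self z
      rcases Finset.mem_sdiff.mp hzmem with ⟨hzM, hzs⟩
      have hτz : τ z ∈ M \ s := by
        refine Finset.mem_sdiff.mpr ⟨(hMinv z hzM).1, fun hc => ?_⟩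
        have : τ (τ z) ∈ s := by rw [← hsinv]; exact Finset.mem_image_of_mem _ hc
        rw [h2' z] at this
        exact hzs this
      rw [hz, Finset.mem_singleton] at hτz
      exact (hMinv z hzM).2 hτz
  have hMne : M.Nonempty := by
    by_contra hemp
    rw [Finset.not_nonempty_iff_eq_empty] at hemp
    apply hne
    apply Equiv.ext
    intro x
    simp only [Equiv.Perm.one_apply]
    by_cases hxY : x ∈ Y k
    · by_contra hmx
      have hxM : x ∈ M := Finset.mem_filter.mpr ⟨hxY, hmx⟩
      rw [hemp] at hxM
      exact absurd hxM (Finset.notMem_empty x)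
    · exact hout x hxY
  obtain ⟨x0, hx0⟩ := hMne
  have hx0inv := hMinv x0 hx0
  have htpos : 2 ≤ t := by
    have hsub2 : ({x0, τ x0} : Finset ℕ) ⊆ M := by
      intro z hz
      rcases Finset.mem_insert.mp hz with h | h
      · exact h ▸ hx0
      · exact (Finset.mem_singleton.mp h) ▸ hx0inv.1
    have hc2 : ({x0, τ x0} : Finset ℕ).card = 2 := by
      rw [Finset.card_insert_of_notMem (by simp [Ne.symm hx0inv.2]), Finset.card_singleton]
    calc 2 = ({x0, τ x0} : Finset ℕ).card := hc2.symm
      _ ≤ M.card := Finset.card_le_card hsub2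
  set F := Y k \ M with hF
  have hFcard : F.card = (2*k - 1) - t := by rw [hF, Finset.card_sdiff_of_subset hMY, Ycard]
  have hFfix : ∀ x ∈ F, τ x = x := by
    intro x hxF
    rcases Finset.mem_sdiff.mp hxF with ⟨hxY, hxM⟩
    by_contra hmx
    exact hxM (Finset.mem_filter.mpr ⟨hxY, hmx⟩)
  have htle : t ≤ 2*k - 1 := by
    calc t = M.card := ht
      _ ≤ (Y k).card := Finset.card_le_card hMY
      _ = 2*k - 1 := Ycard
  obtain ⟨a, h2at, h2ak, hbineq⟩ : ∃ a, 2*a ≤ t ∧ 2*a ≤ k ∧ k - 2*a ≤ (2*k-1) - t := by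
    rcases Nat.le_total (k/2) (t/2) with hle | hle
    · exact ⟨k/2, by omega, by omega, by omega⟩
    · exact ⟨t/2, by omega, by omega, by omega⟩
  set b := k - 2*a with hb
  have hbF : b ≤ F.card := by rw [hFcard]; omega
  obtain ⟨sp, hspsub, hspc, hspinv⟩ := invol_sub τ h2' a M hMinv h2at
  obtain ⟨sf, hsfsub, hsfc⟩ := Finset.exists_subset_card_eq (s := F) (n := b) hbF
  have hdisj : Disjoint sp sf := by
    rw [Finset.disjoint_left]
    intro z hz1 hz2
    exact (Finset.mem_sdiff.mp (hsfsub hz2)).2 (hspsub hz1)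
  refine ⟨sp ∪ sf, ?_, ?_, ?_⟩
  · intro z hz
    rcases Finset.mem_union.mp hz with h | h
    · exact hMY (hspsub h)
    · exact (Finset.mem_sdiff.mp (hsfsub h)).1
  · rw [Finset.card_union_of_disjoint hdisj, hspc, hsfc]
    omega
  · rw [Finset.image_union, hspinv]
    congr 1
    have : sf.image τ = sf.image id := Finset.image_congr (fun x hx => hFfix x (hsfsub hx))
    rw [this, Finset.image_id]

end NX

namespace NX
section Reg
variable {k : ℕ} (R : Subgroup (Equiv.Perm (Vx k)))

lemma semireg (hreg : ∀ u v : Vx k, ∃! g : ↥R, (g : Equiv.Perm (Vx k)) u = v) {g : Equiv.Perm (Vx k)} (hg : g ∈ R) {w : Vx k} (hw : g w = w) : g = 1 := by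
  have h := (hreg w w).unique (y₁ := ⟨g, hg⟩) (y₂ := ⟨1, R.one_mem⟩) hw rfl
  exact congrArg Subtype.val h

lemma trans_same (hk : 3 ≤ k) (hRA : R ≤ graphAut (HS (2*k) k)) (hreg : ∀ u v : Vx k, ∃! g : ↥R, (g : Equiv.Perm (Vx k)) u = v) {u v : Vx k} (huv : (1 ∈ u.1) ↔ (1 ∈ v.1)) :
    ∃ g, g ∈ R ∧ autP g ∧ g u = v := by
  obtain ⟨⟨g, hg⟩, hgu, -⟩ := hreg u v
  refine ⟨g, hg, ?_, hgu⟩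
  rcases lvl_dichotomy hk g (hRA hg) with h | h
  · exact ⟨hk, hRA hg, h⟩
  · exfalso
    apply h u
    simp only [hgu]
    exact huv.symm

lemma trans_B (hk : 3 ≤ k) (hRA : R ≤ graphAut (HS (2*k) k)) (hreg : ∀ u v : Vx k, ∃! g : ↥R, (g : Equiv.Perm (Vx k)) u = v) {s s' : Finset ℕ} (hs : s ⊆ Y k) (hc : s.card = k)
    (hs' : s' ⊆ Y k) (hc' : s'.card = k) :
    ∃ g, g ∈ R ∧ autP g ∧ s.image (rho g) = s' := by
  obtain ⟨g, hg, hgp, hgu⟩ := trans_same R hk hRA hreg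
    (u := Bv s hs hc) (v := Bv s' hs' hc')
    (by simp only [iff_iff_implies_and_implies]
        exact ⟨fun h => absurd h (Bv_not1 hs hc), fun h => absurd h (Bv_not1 hs' hc')⟩)
  refine ⟨g, hg, hgp, ?_⟩
  have := rho_B hgp (Bv s hs hc) (Bv_not1 hs hc)
  rw [hgu] at this
  exact this.symm

lemma trans_A (hk : 3 ≤ k) (hRA : R ≤ graphAut (HS (2*k) k)) (hreg : ∀ u v : Vx k, ∃! g : ↥R, (g : Equiv.Perm (Vx k)) u = v) {s s' : Finset ℕ} (hs : s ⊆ Y k) (hc : s.card = k - 1)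
    (hs' : s' ⊆ Y k) (hc' : s'.card = k - 1) :
    ∃ g, g ∈ R ∧ autP g ∧ s.image (rho g) = s' := by
  obtain ⟨g, hg, hgp, hgu⟩ := trans_same R hk hRA hreg
    (u := Av hk s hs hc) (v := Av hk s' hs' hc')
    (by simp only [iff_iff_implies_and_implies]
        exact ⟨fun _ => Av_mem1 hk hs' hc', fun _ => Av_mem1 hk hs hc⟩)
  refine ⟨g, hg, hgp, ?_⟩
  have h1 := rho_A hgp (Av hk s hs hc) (Av_mem1 hk hs hc)
  rw [hgu] at h1
  rw [Av_erase hk hs hc] at h1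
  -- h1 : (Av hk s' hs' hc').1 = insert 1 (s.image (rho g))
  have h2 : insert 1 s' = insert 1 (s.image (rho g)) := h1
  have h3 : (insert 1 s').erase 1 = (insert 1 (s.image (rho g))).erase 1 := by rw [h2]
  rw [Finset.erase_insert (fun h => one_not_mem_Y (hs' h)),
    Finset.erase_insert (by
      intro h
      obtain ⟨y, hy, hyy⟩ := Finset.mem_image.mp h
      exact one_not_mem_Y (hyy ▸ rho_mem_Y hgp (hs hy)))] at h3
  exact h3.symm

lemma stab_B (hreg : ∀ u v : Vx k, ∃! g : ↥R, (g : Equiv.Perm (Vx k)) u = v) {g : Equiv.Perm (Vx k)} (hg : g ∈ R) (hgp : autP g) {s : Finset ℕ}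
    (hs : s ⊆ Y k) (hc : s.card = k) (hfix : s.image (rho g) = s) : g = 1 := by
  apply semireg R hreg hg (w := Bv s hs hc)
  apply Subtype.ext
  rw [rho_B hgp (Bv s hs hc) (Bv_not1 hs hc)]
  exact hfix

lemma stab_A (hk : 3 ≤ k) (hreg : ∀ u v : Vx k, ∃! g : ↥R, (g : Equiv.Perm (Vx k)) u = v) {g : Equiv.Perm (Vx k)} (hg : g ∈ R) (hgp : autP g) {s : Finset ℕ}
    (hs : s ⊆ Y k) (hc : s.card = k - 1) (hfix : s.image (rho g) = s) : g = 1 := by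
  apply semireg R hreg hg (w := Av hk s hs hc)
  apply Subtype.ext
  rw [rho_A hgp (Av hk s hs hc) (Av_mem1 hk hs hc), Av_erase hk hs hc, hfix]
  rfl

lemma autP_pow {g : Equiv.Perm (Vx k)} (hgp : autP g) : ∀ n, autP (g ^ n) := by
  intro n
  induction n with
  | zero => exact pow_zero g ▸ autP_one hgp.1
  | succ n ih => rw [pow_succ]; exact autP_mul ih hgp

lemma rho_pow {g : Equiv.Perm (Vx k)} (hgp : autP g) : ∀ n, rho (g ^ n) = (rho g) ^ n := by
  intro n
  induction n with
  | zero => rw [pow_zero, pow_zero, rho_one hgp.1]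
  | succ n ih => rw [pow_succ, pow_succ, rho_mul (autP_pow hgp n) hgp, ih]

lemma rho_ne_one (hreg : ∀ u v : Vx k, ∃! g : ↥R, (g : Equiv.Perm (Vx k)) u = v) {g : Equiv.Perm (Vx k)} (hg : g ∈ R) (hgp : autP g) (hgne : g ≠ 1) :
    rho g ≠ 1 := by
  intro h
  apply hgne
  obtain ⟨s, hs, hc⟩ := exists_ksub hgp.1
  apply stab_B R hreg hg hgp hs hc
  rw [h]
  simp

lemma order_odd (hreg : ∀ u v : Vx k, ∃! g : ↥R, (g : Equiv.Perm (Vx k)) u = v) {g : Equiv.Perm (Vx k)} (hg : g ∈ R) (hgp : autP g) : ¬ 2 ∣ orderOf g := by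
  intro hdvd
  obtain ⟨m, hm⟩ := hdvd
  have hopos : 0 < orderOf g := orderOf_pos g
  set h := g ^ m with hh
  have hne : h ≠ 1 := by
    rw [hh]
    apply pow_ne_one_of_lt_orderOf (by omega) (by omega)
  have hsq : h * h = 1 := by
    rw [hh, ← pow_add]
    have hmm : m + m = orderOf g := by omega
    rw [hmm, pow_orderOf_eq_one]
  have hhR : h ∈ R := Subgroup.pow_mem R hg m
  have hhp : autP h := autP_pow hgp m
  have hτsq : rho h * rho h = 1 := by
    rw [← rho_mul hhp hhp, hsq, rho_one hgp.1]
  have hτne : rho h ≠ 1 := rho_ne_one R hreg hhR hhp hne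
  obtain ⟨s, hs, hc, hfix⟩ := invol_fix hgp.1 (rho h) (rho_out hhp)
    (fun y hy => rho_mem_Y hhp hy) hτsq hτne
  exact hne (stab_B R hreg hhR hhp hs hc hfix)

lemma no_swap (hreg : ∀ u v : Vx k, ∃! g : ↥R, (g : Equiv.Perm (Vx k)) u = v) {g : Equiv.Perm (Vx k)} (hg : g ∈ R) (hgp : autP g) {a b : ℕ}
    (hab : a ≠ b) (h1 : rho g a = b) (h2 : rho g b = a) : False := by
  have hodd : ¬ 2 ∣ orderOf g := order_odd R hreg hg hgp
  obtain ⟨m, hm⟩ : ∃ m, orderOf g = 2*m + 1 := by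
    rcases Nat.even_or_odd (orderOf g) with he | ho
    · exact absurd he.two_dvd hodd
    · exact ho
  have key : ∀ j, ((rho g) ^ (2*j+1)) a = b := by
    intro j
    induction j with
    | zero => simpa using h1
    | succ j ih =>
      have : 2*(j+1)+1 = (2*j+1) + 2 := by ring
      rw [this, pow_add, Equiv.Perm.mul_apply]
      have hσ2 : ((rho g) ^ 2) a = a := by
        rw [pow_two, Equiv.Perm.mul_apply, h1, h2]
      rw [hσ2, ih]
  have h3 : rho (g ^ orderOf g) = (rho g) ^ orderOf g := rho_pow hgp _
  rw [pow_orderOf_eq_one, rho_one hgp.1] at h3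
  have h4 := key m
  rw [← hm, ← h3] at h4
  have h5 : a = b := by simpa using h4
  exact hab h5

end Reg
end NX

namespace NX
section Tour
variable {k : ℕ} (R : Subgroup (Equiv.Perm (Vx k)))

def OO (a b : ℕ) : Set ℕ :=
  {m | ∃ g, g ∈ R ∧ autP g ∧ m = (2*k+1) * (rho g a) + rho g b}

noncomputable def om (a b : ℕ) : ℕ := sInf (OO R a b)

def ET (a b : ℕ) : Prop := om R a b < om R b a

lemma OO_mem_self (hk : 3 ≤ k) (a b : ℕ) : (2*k+1) * a + b ∈ OO R a b :=
  ⟨1, R.one_mem, autP_one hk, by rw [rho_one hk]; rfl⟩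

lemma om_mem (hk : 3 ≤ k) (a b : ℕ) : om R a b ∈ OO R a b :=
  Nat.sInf_mem ⟨_, OO_mem_self R hk a b⟩

lemma OO_invar {h : Equiv.Perm (Vx k)} (hh : h ∈ R) (hp : autP h) (a b : ℕ) :
    OO R (rho h a) (rho h b) = OO R a b := by
  ext m
  constructor
  · rintro ⟨g, hg, hgp, rfl⟩
    refine ⟨g * h, R.mul_mem hg hh, autP_mul hgp hp, ?_⟩
    rw [rho_mul hgp hp]
    rfl
  · rintro ⟨g, hg, hgp, rfl⟩
    refine ⟨g * h⁻¹, R.mul_mem hg (R.inv_mem hh), autP_mul hgp (autP_inv hp), ?_⟩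
    rw [rho_mul hgp (autP_inv hp), rho_inv hp]
    simp

lemma ET_invar {h : Equiv.Perm (Vx k)} (hh : h ∈ R) (hp : autP h) (a b : ℕ) :
    ET R (rho h a) (rho h b) ↔ ET R a b := by
  unfold ET om
  rw [OO_invar R hh hp a b, OO_invar R hh hp b a]

lemma ET_irrefl (a : ℕ) : ¬ ET R a a := lt_irrefl _

lemma ET_asymm {a b : ℕ} (h : ET R a b) : ¬ ET R b a := fun h' => absurd h (not_lt_of_gt h')

lemma ET_nediag {a b : ℕ} (h : ET R a b) : a ≠ b := by
  intro hab
  subst hab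
  exact ET_irrefl R a h

lemma mem_Y_le {y : ℕ} (hy : y ∈ Y k) : y < 2*k+1 := by
  rw [Y, Finset.mem_Icc] at hy
  omega

lemma enc_inj {x y x' y' : ℕ} (hy : y < 2*k+1) (hy' : y' < 2*k+1)
    (h : (2*k+1) * x + y = (2*k+1) * x' + y') : x = x' ∧ y = y' := by
  have h1 : ((2*k+1) * x + y) % (2*k+1) = y := by
    rw [Nat.mul_add_mod, Nat.mod_eq_of_lt hy]
  have h2 : ((2*k+1) * x' + y') % (2*k+1) = y' := by
    rw [Nat.mul_add_mod, Nat.mod_eq_of_lt hy']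
  have hyy : y = y' := by rw [← h1, ← h2, h]
  subst hyy
  refine ⟨?_, rfl⟩
  have h3 : (2*k+1) * x = (2*k+1) * x' := by omega
  exact Nat.eq_of_mul_eq_mul_left (by omega) h3

lemma ET_total (hk : 3 ≤ k)
    (hreg : ∀ u v : Vx k, ∃! g : ↥R, (g : Equiv.Perm (Vx k)) u = v)
    {a b : ℕ} (ha : a ∈ Y k) (hb : b ∈ Y k) (hab : a ≠ b) : ET R a b ∨ ET R b a := by
  have hne : om R a b ≠ om R b a := by
    intro heq
    obtain ⟨g, hg, hgp, hgm⟩ := om_mem R hk a b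
    obtain ⟨g', hg', hgp', hgm'⟩ := om_mem R hk b a
    rw [heq, hgm'] at hgm
    obtain ⟨h1, h2⟩ := enc_inj (mem_Y_le (rho_mem_Y hgp' ha)) (mem_Y_le (rho_mem_Y hgp hb))
      hgm
    -- h1 : rho g' b = rho g a, h2 : rho g' a = rho g b
    have hmem : g'⁻¹ * g ∈ R := R.mul_mem (R.inv_mem hg') hg
    have hP : autP (g'⁻¹ * g) := autP_mul (autP_inv hgp') hgp
    apply no_swap R hreg hmem hP hab
    · rw [rho_mul (autP_inv hgp') hgp, Equiv.Perm.mul_apply, ← h1, rho_inv hgp']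
      simp
    · rw [rho_mul (autP_inv hgp') hgp, Equiv.Perm.mul_apply, ← h2, rho_inv hgp']
      simp
  rcases lt_or_gt_of_ne hne with h | h
  · exact Or.inl h
  · exact Or.inr h

/-- cyclically oriented triple -/
def isCyc (s : Finset ℕ) : Prop :=
  ∃ a b c : ℕ, s = {a, b, c} ∧ ET R a b ∧ ET R b c ∧ ET R c a

open Classical in
noncomputable def cycInd (s : Finset ℕ) : ℕ := if isCyc R s then 1 else 0

open Classical in
noncomputable def c3 (S : Finset ℕ) : ℕ := ((S.powersetCard 3).filter (isCyc R)).card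

lemma isCyc_image_of {h : Equiv.Perm (Vx k)} (hh : h ∈ R) (hp : autP h) {s : Finset ℕ}
    (hcyc : isCyc R s) : isCyc R (s.image (rho h)) := by
  obtain ⟨a, b, c, rfl, h1, h2, h3⟩ := hcyc
  refine ⟨rho h a, rho h b, rho h c, ?_, (ET_invar R hh hp a b).mpr h1,
    (ET_invar R hh hp b c).mpr h2, (ET_invar R hh hp c a).mpr h3⟩
  simp [Finset.image_insert, Finset.image_singleton]

lemma image_inv_image {h : Equiv.Perm (Vx k)} (hp : autP h) (s : Finset ℕ) :
    (s.image (rho h)).image (rho h⁻¹) = s := by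
  rw [Finset.image_image, rho_inv hp]
  have : (⇑(rho h)⁻¹ ∘ ⇑(rho h)) = id := by
    funext x
    simp
  rw [this, Finset.image_id]

lemma isCyc_image {h : Equiv.Perm (Vx k)} (hh : h ∈ R) (hp : autP h) (s : Finset ℕ) :
    isCyc R (s.image (rho h)) ↔ isCyc R s := by
  constructor
  · intro hc
    have := isCyc_image_of R (R.inv_mem hh) (autP_inv hp) hc
    rwa [image_inv_image hp] at this
  · exact isCyc_image_of R hh hp

lemma c3_image {h : Equiv.Perm (Vx k)} (hh : h ∈ R) (hp : autP h) (S : Finset ℕ) :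
    c3 R (S.image (rho h)) = c3 R S := by
  classical
  unfold c3
  apply Eq.symm
  apply Finset.card_nbij (i := fun t => t.image (rho h))
  · intro t ht
    simp only [Finset.mem_coe, Finset.mem_filter, Finset.mem_powersetCard] at ht ⊢
    obtain ⟨⟨hsub, hcard⟩, hcyc⟩ := ht
    refine ⟨⟨Finset.image_subset_image hsub, ?_⟩, (isCyc_image R hh hp t).mpr hcyc⟩
    rw [Finset.card_image_of_injective _ (rho h).injective, hcard]
  · intro t1 _ t2 _ heq
    exact Finset.image_injective (rho h).injective heq
  · intro t' ht'
    simp only [Finset.coe_filter, Set.mem_setOf_eq, Finset.mem_powersetCard] at ht'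
    obtain ⟨⟨hsub, hcard⟩, hcyc⟩ := ht'
    refine ⟨t'.image (rho h⁻¹), ?_, ?_⟩
    · simp only [Finset.coe_filter, Set.mem_setOf_eq, Finset.mem_powersetCard]
      refine ⟨⟨?_, ?_⟩, ?_⟩
      · intro x hx
        obtain ⟨z, hz, rfl⟩ := Finset.mem_image.mp hx
        have := hsub hz
        obtain ⟨w, hw, rfl⟩ := Finset.mem_image.mp this
        rw [rho_inv hp]
        simpa using hw
      · rw [Finset.card_image_of_injective _ (rho h⁻¹).injective, hcard]
      · exact (isCyc_image R (R.inv_mem hh) (autP_inv hp) t').mpr hcyc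
    · show (t'.image (rho h⁻¹)).image (rho h) = t'
      rw [Finset.image_image, rho_inv hp]
      have : (⇑(rho h) ∘ ⇑(rho h)⁻¹) = id := by
        funext x
        simp
      rw [this, Finset.image_id]

lemma c3_const_B (hk : 3 ≤ k) (hRA : R ≤ graphAut (HS (2*k) k))
    (hreg : ∀ u v : Vx k, ∃! g : ↥R, (g : Equiv.Perm (Vx k)) u = v)
    {s s' : Finset ℕ} (hs : s ⊆ Y k) (hc : s.card = k) (hs' : s' ⊆ Y k) (hc' : s'.card = k) :
    c3 R s = c3 R s' := by
  obtain ⟨g, hg, hgp, himg⟩ := trans_B R hk hRA hreg hs hc hs' hc'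
  rw [← himg, c3_image R hg hgp]

lemma c3_const_A (hk : 3 ≤ k) (hRA : R ≤ graphAut (HS (2*k) k))
    (hreg : ∀ u v : Vx k, ∃! g : ↥R, (g : Equiv.Perm (Vx k)) u = v)
    {s s' : Finset ℕ} (hs : s ⊆ Y k) (hc : s.card = k - 1)
    (hs' : s' ⊆ Y k) (hc' : s'.card = k - 1) :
    c3 R s = c3 R s' := by
  obtain ⟨g, hg, hgp, himg⟩ := trans_A R hk hRA hreg hs hc hs' hc'
  rw [← himg, c3_image R hg hgp]

end Tour
end NX

namespace NX
section Ladder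
variable {k : ℕ} (R : Subgroup (Equiv.Perm (Vx k)))

open Classical in
noncomputable def pSum (u : ℕ) (S : Finset ℕ) : ℕ :=
  ∑ p ∈ S.powersetCard 2, cycInd R (insert u p)

lemma c3_insert (u : ℕ) (S : Finset ℕ) (hu : u ∉ S) :
    c3 R (insert u S) = c3 R S + pSum R u S := by
  classical
  unfold c3 pSum
  rw [Finset.powersetCard_succ_insert hu, Finset.filter_union]
  rw [Finset.card_union_of_disjoint (by
    apply Finset.disjoint_filter_filter
    rw [Finset.disjoint_left]
    intro t ht1 ht2
    rw [Finset.mem_powersetCard] at ht1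
    obtain ⟨p, hp, rfl⟩ := Finset.mem_image.mp ht2
    exact hu (ht1.1 (Finset.mem_insert_self u p)))]
  congr 1
  rw [Finset.filter_image, Finset.card_image_of_injOn (by
    intro p hp q hq hpq
    simp only [Finset.coe_filter, Set.mem_setOf_eq, Finset.mem_powersetCard] at hp hq
    have hup : u ∉ p := fun h => hu (hp.1.1 h)
    have huq : u ∉ q := fun h => hu (hq.1.1 h)
    rw [← Finset.erase_insert hup, ← Finset.erase_insert huq, hpq])]
  rw [Finset.card_filter]
  apply Finset.sum_congr rfl
  intro p _
  rfl

lemma pSum_insert (u a : ℕ) (P : Finset ℕ) (ha : a ∉ P) :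
    pSum R u (insert a P) = pSum R u P + ∑ x ∈ P, cycInd R {u, a, x} := by
  classical
  unfold pSum
  rw [Finset.powersetCard_succ_insert ha, Finset.sum_union (by
    rw [Finset.disjoint_left]
    intro t ht1 ht2
    rw [Finset.mem_powersetCard] at ht1
    obtain ⟨p, hp, rfl⟩ := Finset.mem_image.mp ht2
    rw [Finset.mem_powersetCard] at hp
    exact ha (ht1.1 (Finset.mem_insert_self a p)))]
  congr 1
  rw [Finset.powersetCard_one, Finset.map_eq_image, Finset.image_image]
  rw [Finset.sum_image (by
    intro x hx y hy hxy
    have hxy' : insert a ({x} : Finset ℕ) = insert a ({y} : Finset ℕ) := hxy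
    have hax : a ∉ ({x} : Finset ℕ) := by
      intro hmem
      rw [Finset.mem_singleton] at hmem
      subst hmem
      exact ha hx
    have hay : a ∉ ({y} : Finset ℕ) := by
      intro hmem
      rw [Finset.mem_singleton] at hmem
      subst hmem
      exact ha hy
    have hsing : ({x} : Finset ℕ) = ({y} : Finset ℕ) := by
      rw [← Finset.erase_insert hax, ← Finset.erase_insert hay, hxy']
    exact Finset.singleton_injective hsing)]
  rfl

lemma pSum_const (hk : 3 ≤ k) (hRA : R ≤ graphAut (HS (2*k) k))
    (hreg : ∀ u v : Vx k, ∃! g : ↥R, (g : Equiv.Perm (Vx k)) u = v)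
    {u u' : ℕ} (hu : u ∈ Y k) (hu' : u' ∈ Y k)
    {S S' : Finset ℕ} (hS : S ⊆ Y k) (hSc : S.card = k - 1) (huS : u ∉ S)
    (hS' : S' ⊆ Y k) (hSc' : S'.card = k - 1) (hu'S' : u' ∉ S') :
    pSum R u S = pSum R u' S' := by
  have h1 := c3_insert R u S huS
  have h2 := c3_insert R u' S' hu'S'
  have hins : insert u S ⊆ Y k := by
    intro x hx
    rcases Finset.mem_insert.mp hx with h | h
    · exact h ▸ hu
    · exact hS h
  have hinsc : (insert u S).card = k := by
    rw [Finset.card_insert_of_notMem huS, hSc]; omega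
  have hins' : insert u' S' ⊆ Y k := by
    intro x hx
    rcases Finset.mem_insert.mp hx with h | h
    · exact h ▸ hu'
    · exact hS' h
  have hinsc' : (insert u' S').card = k := by
    rw [Finset.card_insert_of_notMem hu'S', hSc']; omega
  have hB := c3_const_B R hk hRA hreg hins hinsc hins' hinsc'
  have hA := c3_const_A R hk hRA hreg hS hSc hS' hSc'
  omega

lemma sum_swap1 (hk : 3 ≤ k) (hRA : R ≤ graphAut (HS (2*k) k))
    (hreg : ∀ u v : Vx k, ∃! g : ↥R, (g : Equiv.Perm (Vx k)) u = v)
    {u a b : ℕ} (hu : u ∈ Y k) (ha : a ∈ Y k) (hb : b ∈ Y k)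
    (hua : a ≠ u) (hub : b ≠ u) {P : Finset ℕ} (hP : P ⊆ Y k) (hPu : u ∉ P)
    (hPc : P.card = k - 2) (haP : a ∉ P) (hbP : b ∉ P) :
    ∑ x ∈ P, cycInd R {u, a, x} = ∑ x ∈ P, cycInd R {u, b, x} := by
  have e1 := pSum_insert R u a P haP
  have e2 := pSum_insert R u b P hbP
  have e3 : pSum R u (insert a P) = pSum R u (insert b P) := by
    apply pSum_const R hk hRA hreg hu hu
    · intro x hx
      rcases Finset.mem_insert.mp hx with h | h
      · exact h ▸ ha
      · exact hP h
    · rw [Finset.card_insert_of_notMem haP, hPc]; omega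
    · intro h
      rcases Finset.mem_insert.mp h with h | h
      · exact hua h.symm
      · exact hPu h
    · intro x hx
      rcases Finset.mem_insert.mp hx with h | h
      · exact h ▸ hb
      · exact hP h
    · rw [Finset.card_insert_of_notMem hbP, hPc]; omega
    · intro h
      rcases Finset.mem_insert.mp h with h | h
      · exact hub h.symm
      · exact hPu h
  omega

lemma swap2 (hk : 3 ≤ k) (hRA : R ≤ graphAut (HS (2*k) k))
    (hreg : ∀ u v : Vx k, ∃! g : ↥R, (g : Equiv.Perm (Vx k)) u = v)
    {u a b z z' : ℕ} (hu : u ∈ Y k) (ha : a ∈ Y k) (hb : b ∈ Y k)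
    (hz : z ∈ Y k) (hz' : z' ∈ Y k)
    (hua : a ≠ u) (hub : b ≠ u) (hzu : z ≠ u) (hz'u : z' ≠ u)
    (hab : a ≠ b) (hza : z ≠ a) (hzb : z ≠ b) (hz'a : z' ≠ a) (hz'b : z' ≠ b) :
    cycInd R {u, a, z} + cycInd R {u, b, z'} = cycInd R {u, a, z'} + cycInd R {u, b, z} := by
  by_cases hzz : z = z'
  · subst hzz; omega
  -- choose P0 of size k - 3 avoiding u a b z z'
  have hc1 : ((Y k).erase u).card = 2*k - 2 := by
    rw [Finset.card_erase_of_mem hu, Ycard]; omega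
  have ha1 : a ∈ (Y k).erase u := Finset.mem_erase.mpr ⟨hua, ha⟩
  have hc2 : (((Y k).erase u).erase a).card = 2*k - 3 := by
    rw [Finset.card_erase_of_mem ha1, hc1]; omega
  have hb1 : b ∈ ((Y k).erase u).erase a :=
    Finset.mem_erase.mpr ⟨fun h => hab h.symm, Finset.mem_erase.mpr ⟨hub, hb⟩⟩
  have hc3 : ((((Y k).erase u).erase a).erase b).card = 2*k - 4 := by
    rw [Finset.card_erase_of_mem hb1, hc2]; omega
  have hz1 : z ∈ (((Y k).erase u).erase a).erase b :=
    Finset.mem_erase.mpr ⟨hzb, Finset.mem_erase.mpr ⟨hza, Finset.mem_erase.mpr ⟨hzu, hz⟩⟩⟩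
  have hc4 : (((((Y k).erase u).erase a).erase b).erase z).card = 2*k - 5 := by
    rw [Finset.card_erase_of_mem hz1, hc3]; omega
  have hz'1 : z' ∈ ((((Y k).erase u).erase a).erase b).erase z :=
    Finset.mem_erase.mpr ⟨fun h => hzz h.symm, Finset.mem_erase.mpr ⟨hz'b,
      Finset.mem_erase.mpr ⟨hz'a, Finset.mem_erase.mpr ⟨hz'u, hz'⟩⟩⟩⟩
  have hc5 : (((((((Y k).erase u).erase a).erase b).erase z).erase z')).card = 2*k - 6 := by
    rw [Finset.card_erase_of_mem hz'1, hc4]; omega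
  have hWcard : k - 3 ≤ ((((((Y k).erase u).erase a).erase b).erase z).erase z').card := by
    rw [hc5]; omega
  obtain ⟨P0, hP0sub, hP0c⟩ := Finset.exists_subset_card_eq hWcard
  have hP0Y : P0 ⊆ Y k := fun x hx =>
    Finset.erase_subset _ _ (Finset.erase_subset _ _ (Finset.erase_subset _ _
      (Finset.erase_subset _ _ (Finset.erase_subset _ _ (hP0sub hx)))))
  have hnot : ∀ x ∈ P0, x ≠ z' ∧ x ≠ z ∧ x ≠ b ∧ x ≠ a ∧ x ≠ u := by
    intro x hx
    have h5 := hP0sub hx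
    rw [Finset.mem_erase] at h5
    obtain ⟨h5a, h5b⟩ := h5
    rw [Finset.mem_erase] at h5b
    obtain ⟨h5c, h5d⟩ := h5b
    rw [Finset.mem_erase] at h5d
    obtain ⟨h5e, h5f⟩ := h5d
    rw [Finset.mem_erase] at h5f
    obtain ⟨h5g, h5h⟩ := h5f
    rw [Finset.mem_erase] at h5h
    exact ⟨h5a, h5c, h5e, h5g, h5h.1⟩
  have hzP0 : z ∉ P0 := fun h => (hnot z h).2.1 rfl
  have hz'P0 : z' ∉ P0 := fun h => (hnot z' h).1 rfl
  have huP0 : u ∉ P0 := fun h => (hnot u h).2.2.2.2 rfl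
  have haP0 : a ∉ P0 := fun h => (hnot a h).2.2.2.1 rfl
  have hbP0 : b ∉ P0 := fun h => (hnot b h).2.2.1 rfl
  -- two applications of sum_swap1
  have mkP : ∀ w, w ∈ Y k → w ≠ u → w ≠ a → w ≠ b → w ∉ P0 →
      ∑ x ∈ insert w P0, cycInd R {u, a, x} = ∑ x ∈ insert w P0, cycInd R {u, b, x} := by
    intro w hwY hwu hwa hwb hwP0
    apply sum_swap1 R hk hRA hreg hu ha hb hua hub
    · intro x hx
      rcases Finset.mem_insert.mp hx with h | h
      · exact h ▸ hwY
      · exact hP0Y h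
    · intro h
      rcases Finset.mem_insert.mp h with h | h
      · exact hwu h.symm
      · exact huP0 h
    · rw [Finset.card_insert_of_notMem hwP0, hP0c]; omega
    · intro h
      rcases Finset.mem_insert.mp h with h | h
      · exact hwa h.symm
      · exact haP0 h
    · intro h
      rcases Finset.mem_insert.mp h with h | h
      · exact hwb h.symm
      · exact hbP0 h
  have s1 := mkP z hz hzu hza hzb hzP0
  have s2 := mkP z' hz' hz'u hz'a hz'b hz'P0
  rw [Finset.sum_insert hzP0, Finset.sum_insert hzP0] at s1
  rw [Finset.sum_insert hz'P0, Finset.sum_insert hz'P0] at s2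
  omega

end Ladder
end NX

namespace NX
section Ladder2
variable {k : ℕ} (R : Subgroup (Equiv.Perm (Vx k)))

lemma tri23 (u x y : ℕ) : ({u, x, y} : Finset ℕ) = {u, y, x} := by
  rw [Finset.pair_comm x y]

lemma cycInd_eq_one_iff {s : Finset ℕ} : cycInd R s = 1 ↔ isCyc R s := by
  classical
  unfold cycInd
  split
  · simp_all
  · simp_all

lemma swap3 (hk : 3 ≤ k) (hRA : R ≤ graphAut (HS (2*k) k))
    (hreg : ∀ u v : Vx k, ∃! g : ↥R, (g : Equiv.Perm (Vx k)) u = v)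
    {u a b x : ℕ} (hu : u ∈ Y k) (ha : a ∈ Y k) (hb : b ∈ Y k) (hx : x ∈ Y k)
    (hua : a ≠ u) (hub : b ≠ u) (hab : a ≠ b) (hxu : x ≠ u) (hxa : x ≠ a) (hxb : x ≠ b) :
    cycInd R {u, a, x} = cycInd R {u, b, x} := by
  have ha1 : a ∈ (Y k).erase u := Finset.mem_erase.mpr ⟨hua, ha⟩
  have hb1 : b ∈ ((Y k).erase u).erase a :=
    Finset.mem_erase.mpr ⟨fun h => hab h.symm, Finset.mem_erase.mpr ⟨hub, hb⟩⟩
  have hWc : ((((Y k).erase u).erase a).erase b).card = 2*k - 4 := by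
    rw [Finset.card_erase_of_mem hb1, Finset.card_erase_of_mem ha1,
      Finset.card_erase_of_mem hu, Ycard]
    omega
  have hx1 : x ∈ (((Y k).erase u).erase a).erase b :=
    Finset.mem_erase.mpr ⟨hxb, Finset.mem_erase.mpr ⟨hxa, Finset.mem_erase.mpr ⟨hxu, hx⟩⟩⟩
  obtain ⟨P, hPx, hPW, hPc⟩ := Finset.exists_subsuperset_card_eq (n := k - 2)
    (Finset.singleton_subset_iff.mpr hx1) (by simp; omega) (by rw [hWc]; omega)
  have hxP : x ∈ P := hPx (Finset.mem_singleton_self x)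
  have hPfacts : ∀ z ∈ P, z ∈ Y k ∧ z ≠ u ∧ z ≠ a ∧ z ≠ b := by
    intro z hz
    have h5 := hPW hz
    rw [Finset.mem_erase] at h5
    obtain ⟨h5a, h5b⟩ := h5
    rw [Finset.mem_erase] at h5b
    obtain ⟨h5c, h5d⟩ := h5b
    rw [Finset.mem_erase] at h5d
    exact ⟨h5d.2, h5d.1, h5c, h5a⟩
  have hPY : P ⊆ Y k := fun z hz => (hPfacts z hz).1
  have huP : u ∉ P := fun h => (hPfacts u h).2.1 rfl
  have haP : a ∉ P := fun h => (hPfacts a h).2.2.1 rfl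
  have hbP : b ∉ P := fun h => (hPfacts b h).2.2.2 rfl
  have h1 : ∑ z ∈ P, cycInd R {u, a, z} = ∑ z ∈ P, cycInd R {u, b, z} :=
    sum_swap1 R hk hRA hreg hu ha hb hua hub hPY huP hPc haP hbP
  have h2 : ∀ z ∈ P, cycInd R {u, a, z} + cycInd R {u, b, x} =
      cycInd R {u, a, x} + cycInd R {u, b, z} := by
    intro z hz
    obtain ⟨hzY, hzu, hza, hzb⟩ := hPfacts z hz
    exact swap2 R hk hRA hreg hu ha hb hzY hx hua hub hzu hxu hab hza hzb hxa hxb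
  have h3 : ∑ z ∈ P, (cycInd R {u, a, z} + cycInd R {u, b, x}) =
      ∑ z ∈ P, (cycInd R {u, a, x} + cycInd R {u, b, z}) := Finset.sum_congr rfl h2
  rw [Finset.sum_add_distrib, Finset.sum_add_distrib, Finset.sum_const, Finset.sum_const,
    smul_eq_mul, smul_eq_mul, h1] at h3
  -- h3 : Σg + c * q(b,x) = c * q(a,x) + Σg
  rw [Nat.add_comm (P.card * cycInd R {u, a, x}) (∑ z ∈ P, cycInd R {u, b, z})] at h3
  have h4 := Nat.add_left_cancel h3
  exact (Nat.eq_of_mul_eq_mul_left (by rw [hPc]; omega) h4).symm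

lemma swap3' (hk : 3 ≤ k) (hRA : R ≤ graphAut (HS (2*k) k))
    (hreg : ∀ u v : Vx k, ∃! g : ↥R, (g : Equiv.Perm (Vx k)) u = v)
    {u a x x' : ℕ} (hu : u ∈ Y k) (ha : a ∈ Y k) (hx : x ∈ Y k) (hx' : x' ∈ Y k)
    (hau : a ≠ u) (hxu : x ≠ u) (hx'u : x' ≠ u) (hxa : x ≠ a) (hx'a : x' ≠ a) :
    cycInd R {u, a, x} = cycInd R {u, a, x'} := by
  by_cases hxx : x = x'
  · rw [hxx]
  · rw [tri23 u a x, tri23 u a x']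
    exact swap3 R hk hRA hreg hu hx hx' ha hxu hx'u hxx hau
      (fun h => hxa h.symm) (fun h => hx'a h.symm)

lemma q_const (hk : 3 ≤ k) (hRA : R ≤ graphAut (HS (2*k) k))
    (hreg : ∀ u v : Vx k, ∃! g : ↥R, (g : Equiv.Perm (Vx k)) u = v)
    {u a b c d : ℕ} (hu : u ∈ Y k) (ha : a ∈ Y k) (hb : b ∈ Y k) (hc : c ∈ Y k) (hd : d ∈ Y k)
    (hab : a ≠ b) (hcd : c ≠ d) (hau : a ≠ u) (hbu : b ≠ u) (hcu : c ≠ u) (hdu : d ≠ u) :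
    cycInd R {u, a, b} = cycInd R {u, c, d} := by
  by_cases had : a = d
  · subst had
    rw [tri23 u c a]
    exact swap3' R hk hRA hreg hu ha hb hc hau hbu hcu
      (fun h => hab h.symm) hcd
  · have s1 : cycInd R {u, a, b} = cycInd R {u, a, d} :=
      swap3' R hk hRA hreg hu ha hb hd hau hbu hdu
        (fun h => hab h.symm) (fun h => had h.symm)
    rw [s1, tri23 u a d, tri23 u c d]
    exact swap3' R hk hRA hreg hu hd ha hc hdu hau hcu had hcd

lemma q_global (hk : 3 ≤ k) (hRA : R ≤ graphAut (HS (2*k) k))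
    (hreg : ∀ u v : Vx k, ∃! g : ↥R, (g : Equiv.Perm (Vx k)) u = v)
    {u a b u' a' b' : ℕ} (hu : u ∈ Y k) (ha : a ∈ Y k) (hb : b ∈ Y k)
    (hu' : u' ∈ Y k) (ha' : a' ∈ Y k) (hb' : b' ∈ Y k)
    (hab : a ≠ b) (ha'b' : a' ≠ b') (hau : a ≠ u) (hbu : b ≠ u)
    (ha'u' : a' ≠ u') (hb'u' : b' ≠ u') :
    cycInd R {u, a, b} = cycInd R {u', a', b'} := by
  by_cases huu : u = u'
  · subst huu
    exact q_const R hk hRA hreg hu ha hb ha' hb' hab ha'b' hau hbu ha'u' hb'u'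
  · have hWne : (((Y k).erase u).erase u').Nonempty := by
      rw [← Finset.card_pos, Finset.card_erase_of_mem
        (Finset.mem_erase.mpr ⟨fun h => huu h.symm, hu'⟩),
        Finset.card_erase_of_mem hu, Ycard]
      omega
    obtain ⟨w, hw⟩ := hWne
    rw [Finset.mem_erase] at hw
    obtain ⟨hwu', hw2⟩ := hw
    rw [Finset.mem_erase] at hw2
    obtain ⟨hwu, hwY⟩ := hw2
    have e1 : cycInd R {u, a, b} = cycInd R {u, u', w} :=
      q_const R hk hRA hreg hu ha hb hu' hwY hab (fun h => hwu' h.symm) hau hbu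
        (fun h => huu h.symm) hwu
    have e2 : ({u, u', w} : Finset ℕ) = {u', u, w} := Finset.insert_comm u u' {w}
    have e3 : cycInd R {u', u, w} = cycInd R {u', a', b'} :=
      q_const R hk hRA hreg hu' hu hwY ha' hb' (fun h => hwu h.symm) ha'b' huu hwu'
        ha'u' hb'u'
    rw [e1, e2, e3]

lemma cyc_dichot (hk : 3 ≤ k) (hRA : R ≤ graphAut (HS (2*k) k))
    (hreg : ∀ u v : Vx k, ∃! g : ↥R, (g : Equiv.Perm (Vx k)) u = v) :
    (∀ a b c : ℕ, a ∈ Y k → b ∈ Y k → c ∈ Y k → a ≠ b → a ≠ c → b ≠ c → isCyc R {a, b, c}) ∨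
    (∀ a b c : ℕ, a ∈ Y k → b ∈ Y k → c ∈ Y k → a ≠ b → a ≠ c → b ≠ c →
      ¬ isCyc R {a, b, c}) := by
  have hmem : ∀ x : ℕ, 2 ≤ x → x ≤ 6 → x ∈ Y k := by
    intro x h1 h2
    rw [Y, Finset.mem_Icc]
    omega
  have h2Y := hmem 2 (by omega) (by omega)
  have h3Y := hmem 3 (by omega) (by omega)
  have h4Y := hmem 4 (by omega) (by omega)
  have key : ∀ a b c : ℕ, a ∈ Y k → b ∈ Y k → c ∈ Y k → a ≠ b → a ≠ c → b ≠ c →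
      cycInd R {a, b, c} = cycInd R {2, 3, 4} := by
    intro a b c haY hbY hcY hab hac hbc
    exact q_global R hk hRA hreg haY hbY hcY h2Y h3Y h4Y hbc (by omega)
      (fun h => hab h.symm) (fun h => hac h.symm) (by omega) (by omega)
  by_cases hC : isCyc R ({2, 3, 4} : Finset ℕ)
  · left
    intro a b c haY hbY hcY hab hac hbc
    rw [← cycInd_eq_one_iff R, key a b c haY hbY hcY hab hac hbc,
      cycInd_eq_one_iff R]
    exact hC
  · right
    intro a b c haY hbY hcY hab hac hbc
    rw [← cycInd_eq_one_iff R, key a b c haY hbY hcY hab hac hbc,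
      cycInd_eq_one_iff R]
    exact hC

end Ladder2
end NX

namespace NX
section End
variable {k : ℕ} (R : Subgroup (Equiv.Perm (Vx k)))

lemma cyc_cases {a b c : ℕ} (hab : a ≠ b) (hac : a ≠ c) (hbc : b ≠ c)
    (h : isCyc R {a, b, c}) :
    (ET R a b ∧ ET R b c ∧ ET R c a) ∨ (ET R a c ∧ ET R c b ∧ ET R b a) := by
  obtain ⟨x, y, z, hset, hxy, hyz, hzx⟩ := h
  have ha3 : a = x ∨ a = y ∨ a = z := by
    have : a ∈ ({x, y, z} : Finset ℕ) := by rw [← hset]; simp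
    simpa using this
  have hb3 : b = x ∨ b = y ∨ b = z := by
    have : b ∈ ({x, y, z} : Finset ℕ) := by rw [← hset]; simp
    simpa using this
  have hc3 : c = x ∨ c = y ∨ c = z := by
    have : c ∈ ({x, y, z} : Finset ℕ) := by rw [← hset]; simp
    simpa using this
  rcases ha3 with h1 | h1 | h1 <;> rcases hb3 with h2 | h2 | h2 <;>
    rcases hc3 with h3 | h3 | h3 <;>
    first
      | exact absurd (h1.trans h2.symm) hab
      | exact absurd (h1.trans h3.symm) hac
      | exact absurd (h2.trans h3.symm) hbc
      | (rw [h1, h2, h3]; exact Or.inl ⟨hxy, hyz, hzx⟩)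
      | (rw [h1, h2, h3]; exact Or.inr ⟨hxy, hyz, hzx⟩)
      | (rw [h1, h2, h3]; exact Or.inl ⟨hyz, hzx, hxy⟩)
      | (rw [h1, h2, h3]; exact Or.inr ⟨hyz, hzx, hxy⟩)
      | (rw [h1, h2, h3]; exact Or.inl ⟨hzx, hxy, hyz⟩)
      | (rw [h1, h2, h3]; exact Or.inr ⟨hzx, hxy, hyz⟩)

lemma all_cyc_false (hk : 3 ≤ k) (hRA : R ≤ graphAut (HS (2*k) k))
    (hreg : ∀ u v : Vx k, ∃! g : ↥R, (g : Equiv.Perm (Vx k)) u = v)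
    (H : ∀ a b c : ℕ, a ∈ Y k → b ∈ Y k → c ∈ Y k → a ≠ b → a ≠ c → b ≠ c →
      isCyc R {a, b, c}) : False := by
  have hmem : ∀ x : ℕ, 2 ≤ x → x ≤ 6 → x ∈ Y k := by
    intro x h1 h2
    rw [Y, Finset.mem_Icc]
    omega
  have horient : ∀ p q r : ℕ, p ∈ Y k → q ∈ Y k → r ∈ Y k → p ≠ q → p ≠ r → q ≠ r →
      ET R p q → ET R q r ∧ ET R r p := by
    intro p q r hp hq hr hpq hpr hqr hE
    rcases cyc_cases R hpq hpr hqr (H p q r hp hq hr hpq hpr hqr) with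
      ⟨h1, h2, h3⟩ | ⟨h1, h2, h3⟩
    · exact ⟨h2, h3⟩
    · exact absurd hE (ET_asymm R h3)
  have core : ∀ p q r s : ℕ, p ∈ Y k → q ∈ Y k → r ∈ Y k → s ∈ Y k →
      p ≠ q → p ≠ r → p ≠ s → q ≠ r → q ≠ s → r ≠ s → ET R p q → False := by
    intro p q r s hp hq hr hs hpq hpr hps hqr hqs hrs hE
    obtain ⟨-, hrp⟩ := horient p q r hp hq hr hpq hpr hqr hE
    obtain ⟨-, hsp⟩ := horient p q s hp hq hs hpq hps hqs hE
    rcases cyc_cases R hpr hps hrs (H p r s hp hr hs hpr hps hrs) with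
      ⟨h1, h2, h3⟩ | ⟨h1, h2, h3⟩
    · exact absurd h1 (ET_asymm R hrp)
    · exact absurd h1 (ET_asymm R hsp)
  have h2Y := hmem 2 (by omega) (by omega)
  have h3Y := hmem 3 (by omega) (by omega)
  have h4Y := hmem 4 (by omega) (by omega)
  have h5Y := hmem 5 (by omega) (by omega)
  rcases ET_total R hk hreg h2Y h3Y (by omega) with h | h
  · exact core 2 3 4 5 h2Y h3Y h4Y h5Y (by omega) (by omega) (by omega) (by omega)
      (by omega) (by omega) h
  · exact core 3 2 4 5 h3Y h2Y h4Y h5Y (by omega) (by omega) (by omega) (by omega)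
      (by omega) (by omega) h

lemma no_cyc_false (hk : 3 ≤ k) (hRA : R ≤ graphAut (HS (2*k) k))
    (hreg : ∀ u v : Vx k, ∃! g : ↥R, (g : Equiv.Perm (Vx k)) u = v)
    (H : ∀ a b c : ℕ, a ∈ Y k → b ∈ Y k → c ∈ Y k → a ≠ b → a ≠ c → b ≠ c →
      ¬ isCyc R {a, b, c}) : False := by
  classical
  have htrans : ∀ a b c : ℕ, a ∈ Y k → b ∈ Y k → c ∈ Y k →
      ET R a b → ET R b c → ET R a c := by
    intro a b c ha hb hc h1 h2
    have hab := ET_nediag R h1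
    have hbc := ET_nediag R h2
    by_cases hac : a = c
    · subst hac
      exact absurd h1 (ET_asymm R h2)
    · by_contra hno
      have hca : ET R c a := (ET_total R hk hreg ha hc hac).resolve_left hno
      exact H a b c ha hb hc hab hac hbc ⟨a, b, c, rfl, h1, h2, hca⟩
  -- find a moved point
  obtain ⟨s, hsY, hsc⟩ := exists_ksub hk
  have hsdne : (Y k \ s).Nonempty := by
    rw [← Finset.card_pos, Finset.card_sdiff_of_subset hsY, Ycard, hsc]
    omega
  obtain ⟨y', hy'⟩ := hsdne
  rcases Finset.mem_sdiff.mp hy' with ⟨hy'Y, hy's⟩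
  have hsne : s.Nonempty := Finset.card_pos.mp (by omega)
  obtain ⟨x0, hx0⟩ := hsne
  have hs2Y : insert y' (s.erase x0) ⊆ Y k := by
    intro w hw
    rcases Finset.mem_insert.mp hw with h | h
    · exact h ▸ hy'Y
    · exact hsY (Finset.erase_subset _ _ h)
  have hs2c : (insert y' (s.erase x0)).card = k := by
    rw [Finset.card_insert_of_notMem (fun h => hy's (Finset.erase_subset _ _ h)),
      Finset.card_erase_of_mem hx0, hsc]
    omega
  obtain ⟨g, hg, hgp, himg⟩ := trans_B R hk hRA hreg hsY hsc hs2Y hs2c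
  have hmove : ∃ a ∈ Y k, rho g a ≠ a := by
    by_contra hall
    push_neg at hall
    have hfix : s.image (rho g) = s := by
      have h1 : s.image (rho g) = s.image id := by
        apply Finset.image_congr
        intro x hx
        exact hall x (hsY hx)
      rw [h1, Finset.image_id]
    rw [hfix] at himg
    exact hy's (himg ▸ Finset.mem_insert_self y' (s.erase x0))
  obtain ⟨a0, ha0Y, ha0m⟩ := hmove
  set Np : ℕ → ℕ := fun x => ((Y k).filter (fun z => ET R z x)).card with hNp
  have hNp_inv : ∀ x ∈ Y k, Np (rho g x) = Np x := by
    intro x _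
    have hfilt : (Y k).filter (fun z => ET R z (rho g x)) =
        ((Y k).filter (fun z => ET R z x)).image (rho g) := by
      ext z
      simp only [Finset.mem_filter, Finset.mem_image]
      constructor
      · rintro ⟨hzY, hzE⟩
        refine ⟨rho g⁻¹ z, ⟨?_, ?_⟩, ?_⟩
        · exact rho_mem_Y (autP_inv hgp) hzY
        · have hiff := ET_invar R hg hgp ((rho g⁻¹) z) x
          apply hiff.mp
          have hcan : (rho g) ((rho g⁻¹) z) = z := by
            rw [rho_inv hgp]; simp
          rw [hcan]
          exact hzE
        · rw [rho_inv hgp]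
          simp
      · rintro ⟨w, ⟨hwY, hwE⟩, rfl⟩
        exact ⟨rho_mem_Y hgp hwY, (ET_invar R hg hgp w x).mpr hwE⟩
    rw [hNp]
    simp only
    rw [hfilt, Finset.card_image_of_injective _ (rho g).injective]
  have hmono : ∀ x y : ℕ, x ∈ Y k → y ∈ Y k → ET R x y → Np x < Np y := by
    intro x y hx hy hxy
    apply Finset.card_lt_card
    rw [Finset.ssubset_iff_of_subset (by
      intro z hz
      rcases Finset.mem_filter.mp hz with ⟨hzY, hzE⟩
      exact Finset.mem_filter.mpr ⟨hzY, htrans z x y hzY hx hy hzE hxy⟩)]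
    exact ⟨x, Finset.mem_filter.mpr ⟨hx, hxy⟩, fun h => ET_irrefl R x (Finset.mem_filter.mp h).2⟩
  have ha0Y' : rho g a0 ∈ Y k := rho_mem_Y hgp ha0Y
  have he1 : Np (rho g a0) = Np a0 := hNp_inv a0 ha0Y
  rcases ET_total R hk hreg ha0Y ha0Y' (fun h => ha0m h.symm) with h | h
  · have := hmono a0 (rho g a0) ha0Y ha0Y' h
    omega
  · have := hmono (rho g a0) a0 ha0Y' ha0Y h
    omega

end End
end NX

/-- For `k ≥ 3`, `HS(2k,k)` is not a Cayley graph: its automorphism group contains no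
subgroup acting regularly on the vertex set (i.e. no subgroup `R` such that for every pair
of vertices `u, v` there is exactly one element of `R` sending `u` to `v`). -/
theorem stmt18 (k : ℕ) (hk : 3 ≤ k) :
    ¬ ∃ R : Subgroup (Equiv.Perm (hsVert (2*k) k)),
        R ≤ graphAut (HS (2*k) k) ∧
        ∀ u v : hsVert (2*k) k, ∃! g : ↥R, (g : Equiv.Perm (hsVert (2*k) k)) u = v := by
  rintro ⟨R, hRA, hreg⟩
  rcases NX.cyc_dichot R hk hRA hreg with h | h
  · exact NX.all_cyc_false R hk hRA hreg h
  · exact NX.no_cyc_false R hk hRA hreg h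
end
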